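/- arXiv:1705.07270 — 10 statements merged into one kernel-verified Lean document; each statement's English description precedes it below -/
import Mathlib

section
/- For the path P_n on n ≥ 1 vertices, vcfc(P_n) = ⌈log₂(n+1)⌉. -/
open SimpleGraph


/-- A walk is conflict-free w.r.t. a vertex-coloring if some color appears on
exactly one of its vertices. -/
def Walk.ConflictFree {V α : Type*} [DecidableEq α] {G : SimpleGraph V} (C : V → α)
    {u v : V} (p : G.Walk u v) : Prop :=
  ∃ c : α, (p.support.countP (fun x => decide (C x = c))) = 1

/-- A vertex-colored graph is conflict-free vertex-connected if any two vertices
are joined by a conflict-free path. -/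
def CFVConnected {V α : Type*} [DecidableEq α] (G : SimpleGraph V) (C : V → α) : Prop :=
  ∀ u v : V, ∃ p : G.Walk u v, p.IsPath ∧ Walk.ConflictFree C p

/-- The conflict-free vertex-connection number: the smallest number of colors in a
vertex-coloring making `G` conflict-free vertex-connected. -/
noncomputable def vcfc {V : Type*} (G : SimpleGraph V) : ℕ :=
  sInf {k : ℕ | ∃ C : V → Fin k, CFVConnected G C}

-- helper: countP ≤ 1 for nodup lists where predicate pins one value
lemma countP_le_one_of_unique {l : List ℕ} (hl : l.Nodup) (pred : ℕ → Bool) (p : ℕ)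
    (h : ∀ x ∈ l, pred x → x = p) : l.countP pred ≤ 1 := by
  rw [List.countP_eq_length_filter]
  have hnd : (l.filter pred).Nodup := hl.filter pred
  have hsub : ∀ x ∈ l.filter pred, x = p := by
    intro x hx
    rw [List.mem_filter] at hx
    exact h x hx.1 hx.2
  match hfl : l.filter pred with
  | [] => simp
  | [x] => simp
  | x :: y :: t =>
    exfalso
    rw [hfl] at hnd hsub
    have hx := hsub x (by simp)
    have hy := hsub y (by simp)
    subst hx; subst hy
    simp at hnd

lemma two_le_countP {l : List ℕ} (hl : l.Nodup) (pred : ℕ → Bool) {x y : ℕ}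
    (hx : x ∈ l) (hy : y ∈ l) (hxy : x ≠ y) (px : pred x) (py : pred y) :
    2 ≤ l.countP pred := by
  rw [List.countP_eq_length_filter]
  have hnd : (l.filter pred).Nodup := hl.filter pred
  have hxm : x ∈ l.filter pred := List.mem_filter.mpr ⟨hx, px⟩
  have hym : y ∈ l.filter pred := List.mem_filter.mpr ⟨hy, py⟩
  have hsub : ({x, y} : Finset ℕ) ⊆ (l.filter pred).toFinset := by
    intro z hz
    simp only [Finset.mem_insert, Finset.mem_singleton] at hz
    rcases hz with rfl | rfl <;> rw [List.mem_toFinset] <;> assumption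
  have hcard : ({x, y} : Finset ℕ).card = 2 := Finset.card_pair hxy
  have := Finset.card_le_card hsub
  rw [hcard, List.toFinset_card_of_nodup hnd] at this
  exact this

/-- Lower bound: a conflict-free coloring of all subintervals of an interval of
length `len` using colors from `s` forces `len ≤ 2^|s| - 1`. -/
lemma cf_interval_le (m : ℕ) : ∀ (s : Finset ℕ), s.card ≤ m → ∀ (f : ℕ → ℕ) (a len : ℕ),
    (∀ i ∈ List.range' a len, f i ∈ s) →
    (∀ a' len', a ≤ a' → a' + len' ≤ a + len → 1 ≤ len' →
      ∃ c, (List.range' a' len').countP (fun x => decide (f x = c)) = 1) →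
    len ≤ 2 ^ s.card - 1 := by
  induction m with
  | zero =>
    intro s hs f a len hcol hcf
    rcases Nat.eq_zero_or_pos len with h0 | h1
    · omega
    · exfalso
      have := hcol a (by rw [List.mem_range'_1]; omega)
      have hcard0 : s.card = 0 := by omega
      rw [Finset.card_eq_zero.mp hcard0] at this
      simp at this
  | succ m ih =>
    intro s hs f a len hcol hcf
    rcases Nat.eq_zero_or_pos len with h0 | h1
    · omega
    obtain ⟨c, hc⟩ := hcf a len le_rfl le_rfl h1
    have hpos : 0 < (List.range' a len).countP (fun x => decide (f x = c)) := by omega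
    obtain ⟨p, hpmem, hpc⟩ := List.countP_pos_iff.mp hpos
    have hfp : f p = c := of_decide_eq_true hpc
    have hpb : a ≤ p ∧ p < a + len := List.mem_range'_1.mp hpmem
    have hcs : c ∈ s := hfp ▸ hcol p hpmem
    have hnotc : ∀ i ∈ List.range' a len, i ≠ p → f i ≠ c := by
      intro i hi hip hfi
      have h2 := two_le_countP (List.nodup_range' (s := a) (n := len)) (fun x => decide (f x = c)) hi hpmem hip
        (decide_eq_true hfi) hpc
      omega
    -- left and right segments
    have hcards : s.card - 1 ≤ m := by
      have : 1 ≤ s.card := Finset.card_pos.mpr ⟨c, hcs⟩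
      omega
    have hcerase : (s.erase c).card = s.card - 1 := Finset.card_erase_of_mem hcs
    have key : ∀ b len', a ≤ b → b + len' ≤ a + len → (∀ i ∈ List.range' b len', i ≠ p) →
        len' ≤ 2 ^ (s.card - 1) - 1 := by
      intro b len' hab hba hnp
      have := ih (s.erase c) (by omega) f b len'
        (by
          intro i hi
          have hib : b ≤ i ∧ i < b + len' := List.mem_range'_1.mp hi
          have hifull : i ∈ List.range' a len := by rw [List.mem_range'_1]; omega
          exact Finset.mem_erase.mpr ⟨hnotc i hifull (hnp i hi), hcol i hifull⟩)
        (by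
          intro a' l' h1' h2' h3'
          exact hcf a' l' (by omega) (by omega) h3')
      rwa [hcerase] at this
    have hleft : p - a ≤ 2 ^ (s.card - 1) - 1 := by
      apply key a (p - a) le_rfl (by omega)
      intro i hi
      have := List.mem_range'_1.mp hi
      omega
    have hright : a + len - (p + 1) ≤ 2 ^ (s.card - 1) - 1 := by
      apply key (p + 1) (a + len - (p + 1)) (by omega) (by omega)
      intro i hi
      have := List.mem_range'_1.mp hi
      omega
    have hcard1 : 1 ≤ s.card := Finset.card_pos.mpr ⟨c, hcs⟩
    have hpow : 2 ^ s.card = 2 * 2 ^ (s.card - 1) := by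
      conv_lhs => rw [show s.card = (s.card - 1) + 1 by omega]
      ring
    have hone : 1 ≤ 2 ^ (s.card - 1) := Nat.one_le_two_pow
    omega

/-- Uniqueness of the maximal 2-adic valuation on an interval. -/
lemma val_interval_aux {a len p q c : ℕ} (hp : p ∈ List.range' a len) (hq : q ∈ List.range' a len)
    (hpq : p < q) (hfp : (p + 1).factorization 2 = c) (hfq : (q + 1).factorization 2 = c)
    (hmax : ∀ i ∈ List.range' a len, (i + 1).factorization 2 ≤ c) : False := by
  have hp0 : p + 1 ≠ 0 := by omega
  have hq0 : q + 1 ≠ 0 := by omega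
  set s := (p + 1) / 2 ^ c with hs_def
  set t := (q + 1) / 2 ^ c with ht_def
  have hs : 2 ^ c * s = p + 1 := by
    rw [hs_def, ← hfp]; exact Nat.ordProj_mul_ordCompl_eq_self (p + 1) 2
  have ht : 2 ^ c * t = q + 1 := by
    rw [ht_def, ← hfq]; exact Nat.ordProj_mul_ordCompl_eq_self (q + 1) 2
  have hsodd : ¬ 2 ∣ s := by
    rw [hs_def, ← hfp]; exact Nat.not_dvd_ordCompl Nat.prime_two hp0
  have hc0 : 0 < 2 ^ c := Nat.pow_pos (by norm_num)
  have hst : s < t := by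
    by_contra h
    push_neg at h
    have := Nat.mul_le_mul_left (2 ^ c) h
    omega
  have hs1 : 2 ∣ s + 1 := by omega
  have hr2 : 2 ^ (c + 1) ∣ 2 ^ c * (s + 1) := by
    obtain ⟨w, hw⟩ := hs1
    exact ⟨w, by rw [hw]; ring⟩
  have hrb : p + 1 < 2 ^ c * (s + 1) ∧ 2 ^ c * (s + 1) ≤ q + 1 := by
    constructor
    · rw [← hs]; exact Nat.mul_lt_mul_of_le_of_lt le_rfl (by omega) hc0
    · rw [← ht]; exact Nat.mul_le_mul_left _ (by omega)
  have hpmem := List.mem_range'_1.mp hp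
  have hqmem := List.mem_range'_1.mp hq
  have hrl : 2 ^ c * (s + 1) - 1 ∈ List.range' a len := by
    rw [List.mem_range'_1]; omega
  have hr0 : 2 ^ c * (s + 1) ≠ 0 := by omega
  have hle : c + 1 ≤ (2 ^ c * (s + 1)).factorization 2 :=
    (Nat.Prime.pow_dvd_iff_le_factorization Nat.prime_two hr0).mp hr2
  have := hmax (2 ^ c * (s + 1) - 1) hrl
  rw [show 2 ^ c * (s + 1) - 1 + 1 = 2 ^ c * (s + 1) by omega] at this
  omega

/-- Upper bound: the 2-adic valuation coloring is conflict-free on each interval. -/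
lemma exists_unique_val (a len : ℕ) (h1 : 1 ≤ len) :
    ∃ c, (List.range' a len).countP (fun x => decide ((x + 1).factorization 2 = c)) = 1 ∧
      ∃ p ∈ List.range' a len, (p + 1).factorization 2 = c := by
  set l := List.range' a len with hl
  have hne : a ∈ l := by rw [hl, List.mem_range'_1]; omega
  set T := l.toFinset.image (fun x => (x + 1).factorization 2) with hT
  have hTne : T.Nonempty := ⟨_, Finset.mem_image.mpr ⟨a, List.mem_toFinset.mpr hne, rfl⟩⟩
  set c := T.max' hTne with hc
  have hmax : ∀ i ∈ l, (i + 1).factorization 2 ≤ c :=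
    fun i hi => Finset.le_max' T _ (Finset.mem_image.mpr ⟨i, List.mem_toFinset.mpr hi, rfl⟩)
  obtain ⟨p, hpc, hfp⟩ := Finset.mem_image.mp (T.max'_mem hTne)
  refine ⟨c, ?_, p, List.mem_toFinset.mp hpc, hfp⟩
  have hple : 1 ≤ l.countP (fun x => decide ((x + 1).factorization 2 = c)) := by
    have : 0 < l.countP (fun x => decide ((x + 1).factorization 2 = c)) :=
      List.countP_pos_iff.mpr ⟨p, List.mem_toFinset.mp hpc, decide_eq_true hfp⟩
    omega
  have hle1 : l.countP (fun x => decide ((x + 1).factorization 2 = c)) ≤ 1 := by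
    apply countP_le_one_of_unique (hl ▸ List.nodup_range' (s := a) (n := len)) _ p
    intro x hx hxc
    have hfx : (x + 1).factorization 2 = c := of_decide_eq_true hxc
    by_contra hxp
    rcases Nat.lt_or_ge x p with h | h
    · exact val_interval_aux hx (List.mem_toFinset.mp hpc) h hfx hfp hmax
    · exact val_interval_aux (List.mem_toFinset.mp hpc) hx (by omega) hfp hfx hmax
  omega
open SimpleGraph

/-- The monotone increasing walk in the path graph. -/
def walkUp (n : ℕ) (u : Fin n) : (k : ℕ) → (h : u.val + k < n) → (pathGraph n).Walk u ⟨u.val + k, h⟩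
  | 0, _ => Walk.nil.copy rfl (Fin.ext rfl)
  | (k + 1), h =>
    Walk.cons
      (show (pathGraph n).Adj u ⟨u.val + 1, by omega⟩ by rw [pathGraph_adj]; left; rfl)
      ((walkUp n ⟨u.val + 1, by omega⟩ k (show u.val + 1 + k < n by omega)).copy rfl
        (Fin.ext (by simp; omega)))

lemma walkUp_support (n : ℕ) : ∀ (k : ℕ) (u : Fin n) (h : u.val + k < n),
    (walkUp n u k h).support.map Fin.val = List.range' u.val (k + 1) := by
  intro k
  induction k with
  | zero =>
    intro u h
    simp [walkUp, Walk.support_copy]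
  | succ k ih =>
    intro u h
    rw [walkUp, Walk.support_cons, List.map_cons, Walk.support_copy, ih, List.range'_succ,
      List.range'_succ]
    simp
    exact (List.range'_succ).symm

lemma walkUp_isPath (n : ℕ) (k : ℕ) (u : Fin n) (h : u.val + k < n) :
    (walkUp n u k h).IsPath := by
  rw [Walk.isPath_def]
  have h1 : ((walkUp n u k h).support.map Fin.val).Nodup := by
    rw [walkUp_support]
    exact List.nodup_range'
  exact h1.of_map _

lemma path_support {n : ℕ} {u v : Fin n} (p : (pathGraph n).Walk u v) :
    p.IsPath → u.val ≤ v.val →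
    p.support.map Fin.val = List.range' u.val (v.val - u.val + 1) := by
  induction p with
  | nil => intro _ _; simp
  | @cons u w v hadj q ih =>
    intro hp huv
    have hq : q.IsPath := hp.of_cons
    have hu : u ∉ q.support := ((SimpleGraph.Walk.cons_isPath_iff _ _).mp hp).2
    have hne : u.val < v.val := by
      rcases Nat.lt_or_ge u.val v.val with h | h
      · exact h
      · exact absurd ((Fin.ext (le_antisymm huv h) : u = v) ▸ q.end_mem_support) hu
    rw [pathGraph_adj] at hadj
    rcases hadj with h1 | h2
    · have hwv : w.val ≤ v.val := by omega
      have hsup := ih hq hwv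
      rw [Walk.support_cons, List.map_cons, hsup,
        show v.val - u.val + 1 = (v.val - w.val + 1) + 1 by omega, List.range'_succ]
      congr 1
      rw [h1]
      exact (List.range'_succ).symm
    · exfalso
      have hwv : w.val ≤ v.val := by omega
      have hsup := ih hq hwv
      have hmem : u.val ∈ q.support.map Fin.val := by
        rw [hsup, List.mem_range'_1]
        omega
      obtain ⟨x, hx, hxv⟩ := List.mem_map.mp hmem
      exact hu ((Fin.ext hxv : x = u) ▸ hx)

lemma colbound (n : ℕ) (hn : 1 ≤ n) (m : ℕ) (hm : m < n) :
    (m + 1).factorization 2 < Nat.clog 2 (n + 1) := by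
  have hd : 2 ^ ((m + 1).factorization 2) ∣ m + 1 := Nat.ordProj_dvd _ _
  have h1 : 2 ^ ((m + 1).factorization 2) ≤ m + 1 := Nat.le_of_dvd (by omega) hd
  have h2 : n + 1 ≤ 2 ^ (Nat.clog 2 (n + 1)) := Nat.le_pow_clog (by norm_num) _
  exact (Nat.pow_lt_pow_iff_right (by norm_num : 1 < 2)).mp (by omega)

noncomputable def valColor (n : ℕ) (hn : 1 ≤ n) : Fin n → Fin (Nat.clog 2 (n + 1)) :=
  fun x => ⟨(x.val + 1).factorization 2, colbound n hn x.val x.isLt⟩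

lemma cf_walk (n : ℕ) (hn : 1 ≤ n) (u v : Fin n) (huv : u.val ≤ v.val) :
    ∃ p : (pathGraph n).Walk u v, p.IsPath ∧ Walk.ConflictFree (valColor n hn) p := by
  have hlt : u.val + (v.val - u.val) < n := by have := v.isLt; omega
  have hvv : (⟨u.val + (v.val - u.val), hlt⟩ : Fin n) = v := Fin.ext (show u.val + (v.val - u.val) = v.val by omega)
  refine ⟨(walkUp n u (v.val - u.val) hlt).copy rfl hvv, ?_, ?_⟩
  · simpa [Walk.isPath_copy] using walkUp_isPath n _ u hlt
  · obtain ⟨c0, hc0, p0, hp0, hfp0⟩ := exists_unique_val u.val (v.val - u.val + 1) (by omega)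
    have hp0b := List.mem_range'_1.mp hp0
    have hv := v.isLt
    have hp0n : p0 < n := by omega
    have hc0lt : c0 < Nat.clog 2 (n + 1) := hfp0 ▸ colbound n hn p0 hp0n
    refine ⟨⟨c0, hc0lt⟩, ?_⟩
    have hsup : ((walkUp n u (v.val - u.val) hlt).copy rfl hvv).support.map Fin.val
        = List.range' u.val (v.val - u.val + 1) := by
      rw [Walk.support_copy]
      exact walkUp_support n _ u hlt
    rw [show (fun x : Fin n => decide (valColor n hn x = ⟨c0, hc0lt⟩))
        = ((fun m => decide ((m + 1).factorization 2 = c0)) ∘ Fin.val) from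
      funext fun x => by simp [valColor, Fin.ext_iff]]
    rw [← List.countP_map, hsup]
    exact hc0

lemma upper_mem (n : ℕ) (hn : 1 ≤ n) :
    Nat.clog 2 (n + 1) ∈ {k : ℕ | ∃ C : Fin n → Fin k, CFVConnected (pathGraph n) C} := by
  refine ⟨valColor n hn, ?_⟩
  intro u v
  rcases le_or_gt u.val v.val with h | h
  · exact cf_walk n hn u v h
  · obtain ⟨p, hp, c, hc⟩ := cf_walk n hn v u (le_of_lt h)
    exact ⟨p.reverse, hp.reverse, c, by rwa [Walk.support_reverse, List.countP_reverse]⟩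

lemma lower_bound (n : ℕ) (hn : 1 ≤ n) (k : ℕ) (C : Fin n → Fin k)
    (hC : CFVConnected (pathGraph n) C) : Nat.clog 2 (n + 1) ≤ k := by
  set f : ℕ → ℕ := fun m => if h : m < n then (C ⟨m, h⟩).val else 0 with hf
  have hmain : n ≤ 2 ^ (Finset.range k).card - 1 := by
    apply cf_interval_le k _ (Finset.card_range k).le f 0 n
    · intro i hi
      have hi' : i < n := by have := List.mem_range'_1.mp hi; omega
      simp only [hf, dif_pos hi', Finset.mem_range]
      exact (C ⟨i, hi'⟩).isLt
    · intro a' len' _ h2 h3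
      have hu : a' < n := by omega
      have hv : a' + len' - 1 < n := by omega
      obtain ⟨p, hp, c, hc⟩ := hC ⟨a', hu⟩ ⟨a' + len' - 1, hv⟩
      have hsup := path_support p hp (by simp; omega)
      rw [show ((⟨a' + len' - 1, hv⟩ : Fin n)).val - ((⟨a', hu⟩ : Fin n)).val + 1 = len' by
        simp; omega] at hsup
      refine ⟨c.val, ?_⟩
      rw [show ((⟨a', hu⟩ : Fin n)).val = a' from rfl] at hsup
      rw [← hsup, List.countP_map]
      rw [show ((fun x => decide (f x = c.val)) ∘ Fin.val)
          = (fun x : Fin n => decide (C x = c)) from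
        funext fun x => by simp [hf, x.isLt, Fin.val_inj]]
      exact hc
  rw [Finset.card_range] at hmain
  have hpow : 1 ≤ 2 ^ k := Nat.one_le_two_pow
  exact (Nat.clog_le_iff_le_pow (by norm_num)).mpr (by omega)

theorem vcfc_pathGraph (n : ℕ) (hn : 1 ≤ n) :
    vcfc (SimpleGraph.pathGraph n) = Nat.clog 2 (n + 1) := by
  have hmem := upper_mem n hn
  apply le_antisymm
  · exact Nat.sInf_le hmem
  · apply le_csInf ⟨_, hmem⟩
    rintro m ⟨C, hC⟩
    exact lower_bound n hn m C hC
end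

section
/- Any vertex-coloring of a path with k colors that makes the path conflict-free vertex-connected forces the path to have at most 2^k − 1 vertices. -/
open SimpleGraph

/-- Any walk in the path graph crosses every vertex between its endpoints. -/
lemma pathGraph_walk_crossing : ∀ {n : ℕ} {u v : Fin n}
    (p : (SimpleGraph.pathGraph n).Walk u v) (m : Fin n),
    u ≤ m → m ≤ v → m ∈ p.support := by
  intro n u v p m
  induction p with
  | nil =>
    intro h1 h2
    simp only [SimpleGraph.Walk.support_nil, List.mem_singleton]
    exact le_antisymm h2 h1
  | @cons a b c hadj q ih =>
    intro h1 h2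
    rcases eq_or_lt_of_le h1 with rfl | hlt
    · exact SimpleGraph.Walk.start_mem_support _
    · have hb : b ≤ m := by
        have := (SimpleGraph.pathGraph_adj.mp hadj)
        rw [Fin.le_def]
        rw [Fin.lt_def] at hlt
        omega
      have := ih hb h2
      simp [SimpleGraph.Walk.support_cons]
      right
      exact this

lemma pathGraph_path_support_toFinset {n : ℕ} {u v : Fin n}
    (p : (SimpleGraph.pathGraph n).Walk u v) (hp : p.IsPath) (huv : u ≤ v) :
    p.support.toFinset = Finset.Icc u v := by
  have hnodup := hp.support_nodup
  ext x
  simp only [List.mem_toFinset, Finset.mem_Icc]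
  constructor
  · intro hx
    by_contra hcon
    push_neg at hcon
    -- disjointness of the two halves of the split at x
    have hspec := p.take_spec hx
    have hnd : (((p.takeUntil x hx).append (p.dropUntil x hx)).support).Nodup := by
      rw [hspec]; exact hnodup
    rw [SimpleGraph.Walk.support_append] at hnd
    have hdisj := List.disjoint_of_nodup_append hnd
    rcases le_or_gt u x with h1 | h1
    · have h2 : v < x := hcon h1
      -- v is in both halves
      have hv1 : v ∈ (p.takeUntil x hx).support :=
        pathGraph_walk_crossing _ v huv h2.le
      have hv2 : v ∈ (p.dropUntil x hx).support :=
        SimpleGraph.Walk.end_mem_support _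
      have hv2' : v ∈ (p.dropUntil x hx).support.tail := by
        rw [SimpleGraph.Walk.support_eq_cons] at hv2
        rcases List.mem_cons.mp hv2 with h | h
        · exact absurd h h2.ne
        · exact h
      exact hdisj hv1 hv2'
    · -- x < u : u is in both halves
      have hu1 : u ∈ (p.takeUntil x hx).support :=
        SimpleGraph.Walk.start_mem_support _
      have hu2 : u ∈ (p.dropUntil x hx).support :=
        pathGraph_walk_crossing _ u h1.le huv
      have hu2' : u ∈ (p.dropUntil x hx).support.tail := by
        rw [SimpleGraph.Walk.support_eq_cons] at hu2
        rcases List.mem_cons.mp hu2 with h | h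
        · exact absurd h h1.ne'
        -- (x < u so u ≠ x)
        · exact h
      exact hdisj hu1 hu2'
  · intro hx
    exact pathGraph_walk_crossing p x hx.1 hx.2

lemma pathGraph_path_countP {n : ℕ} {u v : Fin n}
    (p : (SimpleGraph.pathGraph n).Walk u v) (hp : p.IsPath) (huv : u ≤ v)
    (q : Fin n → Bool) :
    p.support.countP q = ((Finset.Icc u v).filter (fun x => q x)).card := by
  rw [List.countP_eq_length_filter,
    ← List.toFinset_card_of_nodup (hp.support_nodup.filter q),
    List.toFinset_filter, pathGraph_path_support_toFinset p hp huv]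

/-- The key combinatorial lemma, on intervals of naturals. -/
lemma key_interval {k : ℕ} (D : ℕ → Fin k) :
    ∀ (s : ℕ) (S : Finset (Fin k)), S.card = s → ∀ (a b : ℕ),
    (∀ i j, a ≤ i → i ≤ j → j ≤ b →
      ∃ c ∈ S, ((Finset.Icc i j).filter (fun x => D x = c)).card = 1) →
    b + 1 - a ≤ 2 ^ s - 1 := by
  intro s
  induction s with
  | zero =>
    intro S hS a b hcond
    by_cases hab : a ≤ b
    · obtain ⟨c, hc, _⟩ := hcond a b le_rfl hab le_rfl
      rw [Finset.card_eq_zero.mp hS] at hc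
      exact absurd hc (Finset.notMem_empty c)
    · omega
  | succ m ih =>
    intro S hS a b hcond
    by_cases hab : a ≤ b
    · obtain ⟨c, hcS, hc1⟩ := hcond a b le_rfl hab le_rfl
      obtain ⟨p, hp⟩ := Finset.card_eq_one.mp hc1
      have hpmem : p ∈ Finset.Icc a b :=
        Finset.mem_of_mem_filter p (hp ▸ Finset.mem_singleton_self p)
      rw [Finset.mem_Icc] at hpmem
      have hScard : (S.erase c).card = m := by
        rw [Finset.card_erase_of_mem hcS, hS]; omega
      -- a color ≠ c works for any subinterval avoiding p
      have hsub : ∀ i j, a ≤ i → i ≤ j → j ≤ b → (i > p ∨ j < p) →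
          ∃ c' ∈ S.erase c, ((Finset.Icc i j).filter (fun x => D x = c')).card = 1 := by
        intro i j hi hij hj havoid
        obtain ⟨c', hc'S, hc'1⟩ := hcond i j hi hij hj
        refine ⟨c', Finset.mem_erase.mpr ⟨?_, hc'S⟩, hc'1⟩
        rintro rfl
        obtain ⟨q, hq⟩ := Finset.card_eq_one.mp hc'1
        have hq1 : q ∈ (Finset.Icc i j).filter (fun x => D x = c') :=
          hq ▸ Finset.mem_singleton_self q
        have hq2 : q ∈ (Finset.Icc a b).filter (fun x => D x = c') := by
          rw [Finset.mem_filter, Finset.mem_Icc] at hq1 ⊢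
          exact ⟨⟨le_trans hi hq1.1.1, le_trans hq1.1.2 hj⟩, hq1.2⟩
        rw [hp, Finset.mem_singleton] at hq2
        rw [Finset.mem_filter, Finset.mem_Icc] at hq1
        omega
      have hleft : p - a ≤ 2 ^ m - 1 := by
        by_cases hpa : p = a
        · simp [hpa]
        · have hpa' : a < p := lt_of_le_of_ne hpmem.1 (Ne.symm hpa)
          have := ih (S.erase c) hScard a (p - 1) (fun i j hi hij hj =>
            hsub i j hi hij (by omega) (by omega))
          omega
      have hright : b - p ≤ 2 ^ m - 1 := by
        have := ih (S.erase c) hScard (p + 1) b (fun i j hi hij hj =>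
          hsub i j (by omega) hij hj (by omega))
        omega
      have h2m : 1 ≤ 2 ^ m := Nat.one_le_two_pow
      have h2s : 2 ^ (m + 1) = 2 * 2 ^ m := by ring
      omega
    · have h2s : 1 ≤ 2 ^ (m + 1) := Nat.one_le_two_pow
      omega

theorem pathGraph_card_le_of_cfvc (n k : ℕ) (C : Fin n → Fin k)
    (h : CFVConnected (SimpleGraph.pathGraph n) C) :
    n ≤ 2 ^ k - 1 := by
  rcases Nat.eq_zero_or_pos n with rfl | hn
  · have : 1 ≤ 2 ^ k := Nat.one_le_two_pow
    omega
  -- a default color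
  obtain ⟨p0, _, c0, _⟩ := h ⟨0, hn⟩ ⟨0, hn⟩
  set D : ℕ → Fin k := fun x => if hx : x < n then C ⟨x, hx⟩ else c0 with hD
  have hcond : ∀ i j, 0 ≤ i → i ≤ j → j ≤ n - 1 →
      ∃ c ∈ (Finset.univ : Finset (Fin k)),
        ((Finset.Icc i j).filter (fun x => D x = c)).card = 1 := by
    intro i j _ hij hj
    have hjn : j < n := by omega
    have hin : i < n := lt_of_le_of_lt hij hjn
    set u : Fin n := ⟨i, hin⟩
    set v : Fin n := ⟨j, hjn⟩
    obtain ⟨p, hp, c, hc⟩ := h u v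
    refine ⟨c, Finset.mem_univ c, ?_⟩
    have huv : u ≤ v := by rw [Fin.le_def]; exact hij
    have := pathGraph_path_countP p hp huv (fun x => decide (C x = c))
    rw [hc] at this
    -- transfer the count from Fin n to ℕ
    have hmap : ((Finset.Icc i j).filter (fun x => D x = c)) =
        ((Finset.Icc u v).filter (fun x => (decide (C x = c) : Bool) = true)).map
          Fin.valEmbedding := by
      have hIcc : (Finset.Icc i j) = (Finset.Icc u v).map Fin.valEmbedding :=
        (Fin.map_valEmbedding_Icc u v).symm
      rw [hIcc, Finset.filter_map]
      congr 1
      apply Finset.filter_congr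
      intro x _
      simp only [Function.comp, Fin.valEmbedding_apply, decide_eq_true_eq, hD]
      rw [dif_pos x.isLt]
    rw [hmap, Finset.card_map, ← this]
  have := key_interval D k Finset.univ (by simp) 0 (n - 1) hcond
  omega
end

section
/- If G is a 2-connected graph, then vcfc(G) = 2. -/
open SimpleGraph

/-- `G` is 2-connected: at least 3 vertices and removing any single vertex leaves it connected. -/
def TwoConnected {V : Type*} [Fintype V] (G : SimpleGraph V) : Prop :=
  3 ≤ Fintype.card V ∧ ∀ v : V, ((⊤ : G.Subgraph).deleteVerts {v}).coe.Connected

namespace VcfcAux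

set_option linter.unusedSectionVars false

variable {V : Type*} [DecidableEq V] {G : SimpleGraph V}

/-- Gluing two paths that meet only at the junction yields a path. -/
lemma glue_isPath {u v w : V} {P : G.Walk u v} {Q : G.Walk v w}
    (hP : P.IsPath) (hQ : Q.IsPath)
    (h : ∀ z ∈ P.support, z ∈ Q.support → z = v) : (P.append Q).IsPath := by
  rw [Walk.isPath_def, Walk.support_append, List.nodup_append]
  refine ⟨hP.support_nodup, ?_, ?_⟩
  · have := hQ.support_nodup
    rw [Q.support_eq_cons] at this
    exact this.of_cons
  · intro a ha b ha' hab
    subst hab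
    have haQ : a ∈ Q.support := List.mem_of_mem_tail ha'
    have hav : a = v := h a ha haQ
    have := hQ.support_nodup
    rw [Q.support_eq_cons, List.nodup_cons] at this
    exact this.1 (hav ▸ ha')

/-- If `z` occurs in `p.dropUntil u` and `z ≠ u`, then it does not occur in
`p.takeUntil u` (for a path `p`). -/
lemma not_mem_takeUntil {a b u : V} {p : G.Walk a b} (hp : p.IsPath) (hu : u ∈ p.support)
    {z : V} (hz : z ∈ (p.dropUntil u hu).support) (hzu : z ≠ u) :
    z ∉ (p.takeUntil u hu).support := by
  have hspec := p.take_spec hu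
  have hnd := hp.support_nodup
  rw [← hspec, Walk.support_append, List.nodup_append] at hnd
  intro hzt
  have hzt' : z ∈ (p.dropUntil u hu).support.tail := by
    have hc := (p.dropUntil u hu).support_eq_cons
    rw [hc, List.mem_cons] at hz
    exact hz.resolve_left hzu
  exact hnd.2.2 z hzt z hzt' rfl

/-- The first vertex of a walk lying in a set `S` (given the endpoint is in `S`). -/
lemma exists_first_hit {a b : V} (p : G.Walk a b) (S : Set V) (hb : b ∈ S) :
    ∃ y, y ∈ S ∧ ∃ r : G.Walk a y, (∀ z ∈ r.support, z ∈ p.support) ∧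
      (∀ z ∈ r.support, z ∈ S → z = y) ∧ (p.IsPath → r.IsPath) := by
  classical
  induction p with
  | nil =>
    exact ⟨_, hb, Walk.nil, by simp, by simp, fun _ => Walk.IsPath.nil⟩
  | @cons a c b h q ih =>
    by_cases haS : a ∈ S
    · refine ⟨a, haS, Walk.nil, by simp, by simp, fun _ => Walk.IsPath.nil⟩
    · obtain ⟨y, hyS, r, hsub, hfirst, hpath⟩ := ih hb
      refine ⟨y, hyS, Walk.cons h r, ?_, ?_, ?_⟩
      · intro z hz
        rw [Walk.support_cons, List.mem_cons] at hz ⊢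
        exact hz.imp id fun hz' => hsub z hz'
      · intro z hz hzS
        rw [Walk.support_cons, List.mem_cons] at hz
        rcases hz with rfl | hz
        · exact absurd hzS haS
        · exact hfirst z hz hzS
      · intro hp
        rw [Walk.cons_isPath_iff] at hp ⊢
        exact ⟨hpath hp.1, fun hc => hp.2 (hsub a hc)⟩

/-- From 2-connectedness: a path between two vertices avoiding a third. -/
lemma exists_path_avoiding
    (h2 : ∀ v : V, ((⊤ : G.Subgraph).deleteVerts {v}).coe.Connected)
    {x a b : V} (ha : a ≠ x) (hb : b ≠ x) :
    ∃ p : G.Walk a b, p.IsPath ∧ x ∉ p.support := by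
  have ha' : a ∈ ((⊤ : G.Subgraph).deleteVerts {x}).verts := by simp [ha]
  have hb' : b ∈ ((⊤ : G.Subgraph).deleteVerts {x}).verts := by simp [hb]
  obtain ⟨w⟩ := (h2 x) ⟨a, ha'⟩ ⟨b, hb'⟩
  set w' := w.map ((⊤ : G.Subgraph).deleteVerts {x}).hom with hw'
  have hx : x ∉ w'.support := by
    intro hx
    rw [hw', Walk.support_map, List.mem_map] at hx
    obtain ⟨z, _, hz⟩ := hx
    have := z.2
    simp only [Subgraph.deleteVerts_verts, Subgraph.verts_top, Set.mem_diff,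
      Set.mem_singleton_iff] at this
    exact this.2 (by simpa using hz)
  exact ⟨w'.bypass, w'.bypass_isPath, fun hc => hx (w'.support_bypass_subset hc)⟩

/-- Case of the cycle lemma step where `u` already lies on the cycle `P' ∪ Q'`. -/
lemma step_mem {x v u : V} {P' Q' : G.Walk x v} (hP : P'.IsPath) (hQ : Q'.IsPath)
    (hint : ∀ z ∈ P'.support, z ∈ Q'.support → z = x ∨ z = v)
    (hu : u ∈ P'.support) (hux : u ≠ x) (huv : u ≠ v) :
    ∃ P Q : G.Walk u v, P.IsPath ∧ Q.IsPath ∧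
      ∀ z ∈ P.support, z ∈ Q.support → z = u ∨ z = v := by
  refine ⟨P'.dropUntil u hu, ((P'.takeUntil u hu).reverse).append Q',
    hP.dropUntil hu, ?_, ?_⟩
  · apply glue_isPath (hP.takeUntil hu).reverse hQ
    intro z hz hzQ
    rw [Walk.support_reverse, List.mem_reverse] at hz
    rcases hint z (P'.support_takeUntil_subset hu hz) hzQ with rfl | rfl
    · rfl
    · exact absurd hz (not_mem_takeUntil hP hu (Walk.end_mem_support _) (Ne.symm huv))
  · intro z hzP hzQ
    rw [Walk.mem_support_append_iff] at hzQ
    rcases hzQ with hz | hz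
    · rw [Walk.support_reverse, List.mem_reverse] at hz
      by_cases hzu : z = u
      · exact Or.inl hzu
      · exact absurd hz (not_mem_takeUntil hP hu hzP hzu)
    · rcases hint z (P'.support_dropUntil_subset hu hzP) hz with rfl | rfl
      · exact absurd (Walk.start_mem_support _)
          (not_mem_takeUntil hP hu hzP (Ne.symm hux))
      · exact Or.inr rfl

/-- Case of the cycle lemma step where `u` is off the cycle and attaches to it via
an edge to `x` and a path `r` first hitting the cycle in `Q'` at `y`. -/
lemma step_attach {x v u y : V} (hadj : G.Adj u x) {P' Q' : G.Walk x v}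
    (hP : P'.IsPath) (hQ : Q'.IsPath)
    (hint : ∀ z ∈ P'.support, z ∈ Q'.support → z = x ∨ z = v)
    (huP : u ∉ P'.support)
    {r : G.Walk u y} (hr : r.IsPath) (hxr : x ∉ r.support)
    (hyQ : y ∈ Q'.support) (hyv : y ≠ v)
    (hfirst : ∀ z ∈ r.support, (z ∈ P'.support ∨ z ∈ Q'.support) → z = y) :
    ∃ P Q : G.Walk u v, P.IsPath ∧ Q.IsPath ∧
      ∀ z ∈ P.support, z ∈ Q.support → z = u ∨ z = v := by
  have hyx : y ≠ x := fun hh => hxr (hh ▸ r.end_mem_support)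
  refine ⟨r.append (Q'.dropUntil y hyQ), Walk.cons hadj P', ?_, ?_, ?_⟩
  · apply glue_isPath hr (hQ.dropUntil hyQ)
    intro z hz hz2
    exact hfirst z hz (Or.inr (Q'.support_dropUntil_subset hyQ hz2))
  · rw [Walk.cons_isPath_iff]
    exact ⟨hP, huP⟩
  · intro z hz1 hz2
    rw [Walk.support_cons, List.mem_cons] at hz2
    rcases hz2 with rfl | hz2
    · exact Or.inl rfl
    · rw [Walk.mem_support_append_iff] at hz1
      rcases hz1 with hz1 | hz1
      · have hzy := hfirst z hz1 (Or.inl hz2)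
        subst hzy
        rcases hint z hz2 hyQ with rfl | rfl
        · exact absurd rfl hyx
        · exact absurd rfl hyv
      · rcases hint z hz2 (Q'.support_dropUntil_subset hyQ hz1) with rfl | rfl
        · exact absurd (Walk.start_mem_support _)
            (not_mem_takeUntil hQ hyQ hz1 (Ne.symm hyx))
        · exact Or.inr rfl

/-- Every two distinct vertices of a 2-connected graph lie on a common cycle,
phrased as the existence of two internally disjoint paths. -/
lemma two_paths (h2 : ∀ v : V, ((⊤ : G.Subgraph).deleteVerts {v}).coe.Connected)
    (hG : G.Connected) :
    ∀ (n : ℕ) (u v : V), u ≠ v → G.dist u v ≤ n →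
    ∃ P Q : G.Walk u v, P.IsPath ∧ Q.IsPath ∧
      ∀ z ∈ P.support, z ∈ Q.support → z = u ∨ z = v := by
  intro n
  induction n with
  | zero =>
    intro u v huv hd
    exact absurd (Nat.le_zero.mp hd) (hG.pos_dist_of_ne huv).ne'
  | succ n ih =>
    intro u v huv hd
    by_cases hle : G.dist u v ≤ n
    · exact ih u v huv hle
    obtain ⟨p, hp⟩ := hG.exists_walk_length_eq_dist u v
    cases p with
    | nil => exact absurd rfl huv
    | @cons _ x _ hadj q =>
      by_cases hxv : x = v
      · subst hxv
        refine ⟨Walk.cons hadj Walk.nil, Walk.cons hadj Walk.nil, ?_, ?_, ?_⟩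
        · simp [Walk.cons_isPath_iff, hadj.ne]
        · simp [Walk.cons_isPath_iff, hadj.ne]
        · intro z hz _
          rw [Walk.support_cons, Walk.support_nil, List.mem_cons, List.mem_singleton] at hz
          exact hz
      · have hql : q.length = n := by
          rw [Walk.length_cons] at hp
          omega
        have hdx : G.dist x v ≤ n := hql ▸ SimpleGraph.dist_le q
        obtain ⟨P', Q', hP, hQ, hint⟩ := ih x v hxv hdx
        have hint' : ∀ z ∈ Q'.support, z ∈ P'.support → z = x ∨ z = v :=
          fun z h1 h2 => hint z h2 h1
        by_cases huP : u ∈ P'.support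
        · exact step_mem hP hQ hint huP hadj.ne huv
        by_cases huQ : u ∈ Q'.support
        · exact step_mem hQ hP hint' huQ hadj.ne huv
        obtain ⟨R, hR, hxR⟩ := exists_path_avoiding h2 (x := x) hadj.ne (Ne.symm hxv)
        obtain ⟨y, hyS, r, hsub, hfirst, hrpath⟩ :=
          exists_first_hit R {z | z ∈ P'.support ∨ z ∈ Q'.support}
            (Or.inl P'.end_mem_support)
        have hr := hrpath hR
        have hxr : x ∉ r.support := fun hc => hxR (hsub _ hc)
        by_cases hyv : y = v
        · subst hyv
          refine ⟨r, Walk.cons hadj Q', hr, ?_, ?_⟩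
          · rw [Walk.cons_isPath_iff]
            exact ⟨hQ, huQ⟩
          · intro z hz1 hz2
            rw [Walk.support_cons, List.mem_cons] at hz2
            rcases hz2 with rfl | hz2
            · exact Or.inl rfl
            · exact Or.inr (hfirst z hz1 (Or.inr hz2))
        · rcases hyS with hyP | hyQ
          · exact step_attach hadj hQ hP hint' huQ hr hxr hyP hyv
              (fun z hz hh => hfirst z hz (Or.symm hh))
          · exact step_attach hadj hP hQ hint huP hr hxr hyQ hyv hfirst

/-- `G` itself is connected. -/
lemma connected_of [Fintype V] (hcard : 3 ≤ Fintype.card V)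
    (h2 : ∀ v : V, ((⊤ : G.Subgraph).deleteVerts {v}).coe.Connected) : G.Connected := by
  have hne : Nonempty V := Fintype.card_pos_iff.mp (by omega)
  rw [connected_iff]
  refine ⟨fun a b => ?_, hne⟩
  have hex : ∃ x : V, x ≠ a ∧ x ≠ b := by
    by_contra hc
    push_neg at hc
    have hsub : (Finset.univ : Finset V) ⊆ {a, b} := by
      intro x _
      rcases eq_or_ne x a with rfl | hxa
      · simp
      · simp [hc x hxa]
    have hle := Finset.card_le_card hsub
    rw [Finset.card_univ] at hle
    have : ({a, b} : Finset V).card ≤ 2 :=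
      (Finset.card_insert_le _ _).trans (by simp)
    omega
  obtain ⟨x, hxa, hxb⟩ := hex
  obtain ⟨p, _, _⟩ := exists_path_avoiding h2 (x := x) (Ne.symm hxa) (Ne.symm hxb)
  exact ⟨p⟩

/-- Fan-lemma helper: `w` lies on one of the two internally disjoint `u`–`v0` paths. -/
lemma through_mem {u v0 w : V} {P Q : G.Walk u v0} (hP : P.IsPath) (hQ : Q.IsPath)
    (hint : ∀ z ∈ P.support, z ∈ Q.support → z = u ∨ z = v0)
    (hw : w ∈ P.support) (hwu : w ≠ u) (hwv : w ≠ v0) :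
    ∃ p : G.Walk u w, p.IsPath ∧ v0 ∈ p.support := by
  refine ⟨Q.append (P.dropUntil w hw).reverse, ?_, ?_⟩
  · apply glue_isPath hQ (hP.dropUntil hw).reverse
    intro z hzQ hzrev
    rw [Walk.support_reverse, List.mem_reverse] at hzrev
    rcases hint z (P.support_dropUntil_subset hw hzrev) hzQ with rfl | rfl
    · exact absurd (Walk.start_mem_support _)
        (not_mem_takeUntil hP hw hzrev (Ne.symm hwu))
    · rfl
  · rw [Walk.mem_support_append_iff]
    exact Or.inl Q.end_mem_support

/-- Fan-lemma helper: `w` is off the cycle, attached by a path first hitting `P` at `y`. -/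
lemma through_attach {u v0 w y : V} {P Q : G.Walk u v0} (hP : P.IsPath) (hQ : Q.IsPath)
    (hint : ∀ z ∈ P.support, z ∈ Q.support → z = u ∨ z = v0)
    {r : G.Walk w y} (hr : r.IsPath) (hur : u ∉ r.support)
    (hyP : y ∈ P.support) (hyv : y ≠ v0)
    (hfirst : ∀ z ∈ r.support, (z ∈ P.support ∨ z ∈ Q.support) → z = y) :
    ∃ p : G.Walk u w, p.IsPath ∧ v0 ∈ p.support := by
  have hyu : y ≠ u := fun hh => hur (hh ▸ r.end_mem_support)
  refine ⟨Q.append (((P.dropUntil y hyP).reverse).append r.reverse), ?_, ?_⟩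
  · have hT : (((P.dropUntil y hyP).reverse).append r.reverse).IsPath := by
      apply glue_isPath (hP.dropUntil hyP).reverse hr.reverse
      intro z hz1 hz2
      rw [Walk.support_reverse, List.mem_reverse] at hz1 hz2
      exact hfirst z hz2 (Or.inl (P.support_dropUntil_subset hyP hz1))
    apply glue_isPath hQ hT
    intro z hzQ hzT
    rw [Walk.mem_support_append_iff] at hzT
    rcases hzT with hz | hz
    · rw [Walk.support_reverse, List.mem_reverse] at hz
      rcases hint z (P.support_dropUntil_subset hyP hz) hzQ with rfl | rfl
      · exact absurd (Walk.start_mem_support _)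
          (not_mem_takeUntil hP hyP hz (Ne.symm hyu))
      · rfl
    · rw [Walk.support_reverse, List.mem_reverse] at hz
      have hzy := hfirst z hz (Or.inr hzQ)
      subst hzy
      rcases hint z hyP hzQ with rfl | rfl
      · exact absurd rfl hyu
      · exact absurd rfl hyv
  · rw [Walk.mem_support_append_iff]
    exact Or.inl Q.end_mem_support

/-- The fan lemma: any third vertex lies on some path between two given vertices. -/
lemma exists_path_through (h2 : ∀ v : V, ((⊤ : G.Subgraph).deleteVerts {v}).coe.Connected)
    (hG : G.Connected) {u w v0 : V}
    (huw : u ≠ w) (hv0u : v0 ≠ u) (hv0w : v0 ≠ w) :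
    ∃ p : G.Walk u w, p.IsPath ∧ v0 ∈ p.support := by
  obtain ⟨P, Q, hP, hQ, hint⟩ := two_paths h2 hG (G.dist u v0) u v0 (Ne.symm hv0u) le_rfl
  have hint' : ∀ z ∈ Q.support, z ∈ P.support → z = u ∨ z = v0 :=
    fun z h1 h2' => hint z h2' h1
  by_cases hwP : w ∈ P.support
  · exact through_mem hP hQ hint hwP (Ne.symm huw) (Ne.symm hv0w)
  by_cases hwQ : w ∈ Q.support
  · exact through_mem hQ hP hint' hwQ (Ne.symm huw) (Ne.symm hv0w)
  obtain ⟨R, hR, huR⟩ := exists_path_avoiding h2 (x := u) (Ne.symm huw) hv0u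
  obtain ⟨y, hyS, r, hsub, hfirst, hrpath⟩ :=
    exists_first_hit R {z | z ∈ P.support ∨ z ∈ Q.support} (Or.inl P.end_mem_support)
  have hr := hrpath hR
  have hur : u ∉ r.support := fun hc => huR (hsub _ hc)
  by_cases hyv : y = v0
  · subst hyv
    refine ⟨P.append r.reverse, ?_, ?_⟩
    · apply glue_isPath hP hr.reverse
      intro z hz1 hz2
      rw [Walk.support_reverse, List.mem_reverse] at hz2
      exact hfirst z hz2 (Or.inl hz1)
    · rw [Walk.mem_support_append_iff]
      exact Or.inl P.end_mem_support
  · rcases hyS with hyP | hyQ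
    · exact through_attach hP hQ hint hr hur hyP hyv hfirst
    · exact through_attach hQ hP hint' hr hur hyQ hyv
        (fun z hz hh => hfirst z hz (Or.symm hh))

/-- With the two-coloring distinguishing `v0`, a path through `v0` is conflict-free. -/
lemma conflictFree_of_mem {v0 a b : V} {p : G.Walk a b}
    (hp : p.IsPath) (hv0 : v0 ∈ p.support) :
    Walk.ConflictFree (fun x => if x = v0 then (0 : Fin 2) else 1) p := by
  refine ⟨0, ?_⟩
  have hcongr : p.support.countP
      (fun x => decide ((if x = v0 then (0 : Fin 2) else 1) = 0)) = p.support.count v0 := by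
    rw [List.count]
    apply List.countP_congr
    intro z _
    by_cases hzv : z = v0 <;> simp [hzv]
  rw [hcongr]
  exact List.count_eq_one_of_mem hp.support_nodup hv0

end VcfcAux

theorem vcfc_eq_two_of_twoConnected {V : Type*} [Fintype V] (G : SimpleGraph V)
    (h : TwoConnected G) : vcfc G = 2 := by
  classical
  obtain ⟨hcard, h2⟩ := h
  have hG : G.Connected := VcfcAux.connected_of hcard h2
  have hne : Nonempty V := Fintype.card_pos_iff.mp (by omega)
  obtain ⟨v0⟩ := hne
  have hmem2 : 2 ∈ {k : ℕ | ∃ C : V → Fin k, CFVConnected G C} := by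
    refine ⟨fun x => if x = v0 then 0 else 1, fun a b => ?_⟩
    rcases eq_or_ne a b with rfl | hab
    · refine ⟨Walk.nil, Walk.IsPath.nil, (if a = v0 then (0 : Fin 2) else 1), ?_⟩
      rw [Walk.support_nil, List.countP_cons, List.countP_nil]
      simp
    · rcases eq_or_ne v0 a with rfl | hva
      · obtain ⟨q⟩ := hG.preconnected v0 b
        exact ⟨q.bypass, q.bypass_isPath,
          VcfcAux.conflictFree_of_mem q.bypass_isPath q.bypass.start_mem_support⟩
      · rcases eq_or_ne v0 b with rfl | hvb
        · obtain ⟨q⟩ := hG.preconnected a v0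
          exact ⟨q.bypass, q.bypass_isPath,
            VcfcAux.conflictFree_of_mem q.bypass_isPath q.bypass.end_mem_support⟩
        · obtain ⟨p, hp, hv0p⟩ := VcfcAux.exists_path_through h2 hG hab hva hvb
          exact ⟨p, hp, VcfcAux.conflictFree_of_mem hp hv0p⟩
  have h0 : 0 ∉ {k : ℕ | ∃ C : V → Fin k, CFVConnected G C} := by
    rintro ⟨C, -⟩
    exact (C v0).elim0
  have h1 : 1 ∉ {k : ℕ | ∃ C : V → Fin k, CFVConnected G C} := by
    rintro ⟨C, hC⟩
    obtain ⟨a, b, hab⟩ := Fintype.exists_pair_of_one_lt_card (by omega : 1 < Fintype.card V)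
    obtain ⟨p, -, c, hc⟩ := hC a b
    have hall : ∀ x ∈ p.support, (fun x => decide (C x = c)) x = true := by
      intro x _
      simp [Subsingleton.elim (C x) c]
    rw [List.countP_eq_length.mpr hall] at hc
    have hlen := p.length_support
    exact hab (Walk.eq_of_length_eq_zero (p := p) (by omega))
  have hle : sInf {k : ℕ | ∃ C : V → Fin k, CFVConnected G C} ≤ 2 := Nat.sInf_le hmem2
  have hmem := Nat.sInf_mem (⟨2, hmem2⟩ :
    {k : ℕ | ∃ C : V → Fin k, CFVConnected G C}.Nonempty)
  rw [vcfc]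
  set m := sInf {k : ℕ | ∃ C : V → Fin k, CFVConnected G C} with hm
  interval_cases m
  · exact absurd hmem h0
  · exact absurd hmem h1
  · rfl
end

section
/- Let G be a connected graph of order at least 3. Then vcfc(G) = 2 if and only if G is 2-connected or G has exactly one cut vertex. -/
open SimpleGraph

/-- `v` is a cut vertex of `G`: deleting `v` disconnects `G`. -/
def IsCutVertex {V : Type*} (G : SimpleGraph V) (v : V) : Prop :=
  ¬ ((⊤ : G.Subgraph).deleteVerts {v}).coe.Connected

section Aux
variable {V : Type*} {G : SimpleGraph V}

/-- `a` and `b` are joined by a walk avoiding `w`. -/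
def AR (G : SimpleGraph V) (w a b : V) : Prop := ∃ p : G.Walk a b, w ∉ p.support

lemma AR.ne_left {w a b : V} (h : AR G w a b) : a ≠ w := by
  obtain ⟨p, hp⟩ := h
  rintro rfl; exact hp p.start_mem_support

lemma AR.ne_right {w a b : V} (h : AR G w a b) : b ≠ w := by
  obtain ⟨p, hp⟩ := h
  rintro rfl; exact hp p.end_mem_support

lemma AR.refl {w a : V} (h : a ≠ w) : AR G w a a :=
  ⟨Walk.nil, by simpa using fun h' => h h'.symm⟩

lemma AR.symm {w a b : V} (h : AR G w a b) : AR G w b a := by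
  obtain ⟨p, hp⟩ := h
  exact ⟨p.reverse, by simpa using hp⟩

lemma AR.trans {w a b c : V} (h : AR G w a b) (h' : AR G w b c) : AR G w a c := by
  obtain ⟨p, hp⟩ := h; obtain ⟨q, hq⟩ := h'
  exact ⟨p.append q, by
    rw [Walk.mem_support_append_iff]; rintro (h | h) <;> [exact hp h; exact hq h]⟩

/-- every vertex on a walk avoiding `w` is `AR`-reachable from the start. -/
lemma AR.of_mem_support {w a b z : V} (p : G.Walk a b) (hw : w ∉ p.support)
    (hz : z ∈ p.support) : AR G w a z := by
  haveI := Classical.decEq V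
  exact ⟨p.takeUntil z hz, fun h => hw (p.support_takeUntil_subset hz h)⟩

/-- first-hit lemma. -/
lemma firstHit (P : V → Prop) {a b : V} (p : G.Walk a b) :
    p.IsPath → P b →
    ∃ t, P t ∧ ∃ q : G.Walk a t, q.IsPath ∧ q.support ⊆ p.support ∧
      ∀ z ∈ q.support, P z → z = t := by
  induction p with
  | nil =>
    intro _ hb
    exact ⟨_, hb, Walk.nil, Walk.IsPath.nil, by simp, by simp⟩
  | @cons u x b h p ih =>
    intro hp hb
    by_cases hu : P u
    · refine ⟨u, hu, Walk.nil, Walk.IsPath.nil, by simp, by simp⟩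
    · obtain ⟨t, ht, q, hq, hsub, honly⟩ := ih hp.of_cons hb
      refine ⟨t, ht, Walk.cons h q, hq.cons ?_, ?_, ?_⟩
      · exact fun hmem => (((Walk.cons_isPath_iff h p).mp hp).2 : u ∉ p.support) (hsub hmem)
      · rw [Walk.support_cons, Walk.support_cons]
        exact List.cons_subset_cons _ hsub
      · intro z hz hPz
        rw [Walk.support_cons, List.mem_cons] at hz
        rcases hz with rfl | hz
        · exact absurd hPz hu
        · exact honly z hz hPz

/-- endpoints confinement: on a path ending at `w`, every vertex is `w` or
reachable from the start avoiding `w`. -/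
lemma mem_path_to (p : G.Walk a w) : p.IsPath → ∀ z ∈ p.support, z = w ∨ AR G w a z := by
  induction p with
  | nil => intro _ z hz; left; simpa using hz
  | @cons u x w h p ih =>
    intro hp z hz
    have huw : u ≠ w := by
      rintro rfl
      exact (((Walk.cons_isPath_iff h p).mp hp).2 : u ∉ p.support) p.end_mem_support
    rw [Walk.support_cons, List.mem_cons] at hz
    rcases hz with rfl | hz
    · exact Or.inr (AR.refl huw)
    · rcases ih hp.of_cons z hz with h' | h'
      · exact Or.inl h'
      · obtain ⟨q, hq⟩ := h'
        refine Or.inr ⟨Walk.cons h q, ?_⟩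
        rw [Walk.support_cons, List.mem_cons]
        rintro (rfl | hmem)
        · exact huw rfl
        · exact hq hmem

/-- gluing two paths meeting only at the junction. -/
lemma append_isPath {a b c : V} {p : G.Walk a b} {q : G.Walk b c} :
    q.IsPath → p.IsPath → (∀ z ∈ p.support, z ∈ q.support → z = b) → (p.append q).IsPath := by
  induction p with
  | nil => intro hq _ _; simpa using hq
  | @cons u x b h p ih =>
    intro hq hp hmeet
    rw [Walk.cons_append]
    have hub : u ≠ b := by
      intro hub
      exact (((Walk.cons_isPath_iff h p).mp hp).2 : u ∉ p.support) (hub ▸ p.end_mem_support)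
    refine (ih hq hp.of_cons ?_).cons ?_
    · intro z hz hz'; exact hmeet z (by rw [Walk.support_cons]; exact List.mem_cons_of_mem _ hz) hz'
    · rw [Walk.mem_support_append_iff]
      rintro (hmem | hmem)
      · exact (((Walk.cons_isPath_iff h p).mp hp).2 : u ∉ p.support) hmem
      · exact hub (hmeet u (by simp) hmem)

end Aux

section Count
variable {V : Type*}

lemma two_le_countP_s7 {l : List V} {p : V → Bool} {a b : V} (ha : a ∈ l) (hb : b ∈ l)
    (hab : a ≠ b) (hpa : p a = true) (hpb : p b = true) : 2 ≤ l.countP p := by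
  classical
  rw [List.countP_eq_length_filter]
  have ha' : a ∈ l.filter p := List.mem_filter.2 ⟨ha, hpa⟩
  have hb' : b ∈ l.filter p := List.mem_filter.2 ⟨hb, hpb⟩
  have hsub : ({a, b} : Finset V) ⊆ (l.filter p).toFinset := by
    intro z hz
    rcases Finset.mem_insert.1 hz with rfl | hz
    · exact List.mem_toFinset.2 ha'
    · exact List.mem_toFinset.2 (by rwa [Finset.mem_singleton.1 hz])
  calc 2 = ({a, b} : Finset V).card := (Finset.card_pair hab).symm
    _ ≤ (l.filter p).toFinset.card := Finset.card_le_card hsub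
    _ ≤ (l.filter p).length := (l.filter p).toFinset_card_le

lemma fin2_cases (a b c : Fin 2) (h : a ≠ b) : c = a ∨ c = b := by omega

lemma fin2_eq (a b c : Fin 2) (h1 : a ≠ c) (h2 : b ≠ c) : a = b := by omega

end Count

section Translate
variable {V : Type*} {G : SimpleGraph V}

lemma toCoe {w a b : V} (p : G.Walk a b) :
    w ∉ p.support →
    ∀ (ha : a ∈ ((⊤ : G.Subgraph).deleteVerts {w}).verts)
      (hb : b ∈ ((⊤ : G.Subgraph).deleteVerts {w}).verts),
    ((⊤ : G.Subgraph).deleteVerts {w}).coe.Reachable ⟨a, ha⟩ ⟨b, hb⟩ := by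
  induction p with
  | nil => intro _ ha hb; rfl
  | @cons a x b h p ih =>
    intro hw ha hb
    rw [Walk.support_cons, List.mem_cons] at hw
    push_neg at hw
    have hx : x ∈ ((⊤ : G.Subgraph).deleteVerts {w}).verts := by
      simp only [Subgraph.deleteVerts_verts, Subgraph.verts_top, Set.mem_diff,
        Set.mem_univ, Set.mem_singleton_iff, true_and]
      intro hxw
      exact hw.2 (hxw ▸ p.start_mem_support)
    have hadj : ((⊤ : G.Subgraph).deleteVerts {w}).coe.Adj ⟨a, ha⟩ ⟨x, hx⟩ := by
      simp only [Subgraph.coe_adj, Subgraph.deleteVerts_adj, Subgraph.verts_top,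
        Set.mem_univ, Set.mem_singleton_iff, Subgraph.top_adj, true_and]
      refine ⟨?_, ?_, h⟩
      · exact fun haw => hw.1 haw.symm
      · intro hxw
        exact hw.2 (hxw ▸ p.start_mem_support)
    exact hadj.reachable.trans (ih hw.2 hx hb)

lemma fromCoe {w : V} {a b : ((⊤ : G.Subgraph).deleteVerts {w}).verts}
    (h : ((⊤ : G.Subgraph).deleteVerts {w}).coe.Reachable a b) :
    AR G w a.1 b.1 := by
  obtain ⟨p⟩ := h
  refine ⟨p.map ((⊤ : G.Subgraph).deleteVerts {w}).hom, ?_⟩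
  erw [Walk.support_map, List.mem_map]
  rintro ⟨s, _, hs⟩
  have := s.2
  simp only [Subgraph.deleteVerts_verts, Subgraph.verts_top, Set.mem_diff,
    Set.mem_univ, Set.mem_singleton_iff, true_and] at this
  exact this hs

lemma mem_del {w z : V} (h : z ≠ w) : z ∈ ((⊤ : G.Subgraph).deleteVerts {w}).verts := by
  simp only [Subgraph.deleteVerts_verts, Subgraph.verts_top, Set.mem_diff,
    Set.mem_univ, Set.mem_singleton_iff, true_and]
  exact h

/-- non-cut vertex: all pairs avoid-reachable. -/
lemma notCut_AR {w : V} (h : ¬ IsCutVertex G w) {a b : V} (ha : a ≠ w) (hb : b ≠ w) :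
    AR G w a b := by
  rw [IsCutVertex, not_not] at h
  exact fromCoe (h.preconnected ⟨a, mem_del ha⟩ ⟨b, mem_del hb⟩)

/-- cut vertex: two non-avoid-reachable vertices. -/
lemma cut_exists {w : V} (h : IsCutVertex G w) (hne : ∃ z, z ≠ w) :
    ∃ a b, a ≠ w ∧ b ≠ w ∧ ¬ AR G w a b := by
  rw [IsCutVertex] at h
  obtain ⟨z, hz⟩ := hne
  haveI : Nonempty (((⊤ : G.Subgraph).deleteVerts {w}).verts) := ⟨⟨z, mem_del hz⟩⟩
  have h' : ¬ ((⊤ : G.Subgraph).deleteVerts {w}).coe.Preconnected := fun hp => h ⟨hp⟩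
  rw [SimpleGraph.Preconnected] at h'
  push_neg at h'
  obtain ⟨s, t, hst⟩ := h'
  have hs := s.2; have ht := t.2
  simp only [Subgraph.deleteVerts_verts, Subgraph.verts_top, Set.mem_diff,
    Set.mem_univ, Set.mem_singleton_iff, true_and] at hs ht
  refine ⟨s.1, t.1, hs, ht, fun ⟨p, hp⟩ => hst ?_⟩
  exact toCoe p hp s.2 t.2

end Translate

section Main
variable {V : Type*} {G : SimpleGraph V}

lemma two_le_countP' (p : V → Bool) {l : List V} {a b : V} (ha : a ∈ l) (hb : b ∈ l)
    (hab : a ≠ b) (hpa : p a = true) (hpb : p b = true) : 2 ≤ l.countP p :=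
  two_le_countP_s7 ha hb hab hpa hpb

lemma mono_contra {C : V → Fin 2} (hC : CFVConnected G C) {w s : V} (hs : s ≠ w)
    (hmono : ∀ z, AR G w s z → C z = C w) : False := by
  obtain ⟨p, hp, c, hcount⟩ := hC s w
  have hall : ∀ z ∈ p.support, C z = C w := by
    intro z hz
    rcases mem_path_to p hp z hz with rfl | h
    · rfl
    · exact hmono z h
  by_cases hcw : c = C w
  · have : p.support.countP (fun x => decide (C x = c)) = p.support.length :=
      List.countP_eq_length.2 (fun z hz => by simp [hall z hz, hcw])
    rw [this, SimpleGraph.Walk.length_support] at hcount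
    have : p.length = 0 := by omega
    exact hs (SimpleGraph.Walk.eq_of_length_eq_zero this)
  · have : p.support.countP (fun x => decide (C x = c)) = 0 :=
      List.countP_eq_zero.2 (fun z hz => by simp [hall z hz, Ne.symm hcw])
    omega

lemma side {C : V → Fin 2} (hC : CFVConnected G C) {x y a0 b0 : V} (hxy : x ≠ y)
    (ha0y : a0 ≠ y) (hb0y : b0 ≠ y)
    (hmem : ∀ b, AR G y b0 b → ∀ p : G.Walk a0 b, x ∈ p.support ∧ y ∈ p.support)
    (hBnx : ∀ b, AR G y b0 b → b ≠ x)
    (hcc : C x ≠ C y) (hca0 : C a0 = C y) : False := by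
  have stepB : ∀ b, AR G y b0 b → C b = C y := by
    intro b hBb
    obtain ⟨p, hp, c, hcount⟩ := hC a0 b
    obtain ⟨hxs, hys⟩ := hmem b hBb p
    rcases fin2_cases (C x) (C y) c hcc with rfl | rfl
    · by_contra hcb
      have hcbx : C b = C x := fin2_eq _ _ _ hcb hcc
      have := two_le_countP' (fun z => decide (C z = C x)) hxs p.end_mem_support (Ne.symm (hBnx b hBb))
        (by simp) (by simp [hcbx])
      omega
    · have := two_le_countP' (fun z => decide (C z = C y)) p.start_mem_support hys ha0y (by simp [hca0]) (by simp)
      omega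
  exact mono_contra hC hb0y (fun z hz => stepB z hz)

lemma main_aux (hc : G.Connected) {x y a0 b0 : V} (hxy : x ≠ y)
    (ha0x : a0 ≠ x) (hb0y : b0 ≠ y)
    (hay : ¬ AR G x a0 y) (hbx : ¬ AR G y b0 x)
    {C : V → Fin 2} (hC : CFVConnected G C) : False := by
  have ha0y : a0 ≠ y := by rintro rfl; exact hay (AR.refl ha0x)
  have hb0x : b0 ≠ x := by rintro rfl; exact hbx (AR.refl hb0y)
  have hA0 : AR G x a0 a0 := AR.refl ha0x
  have hB0 : AR G y b0 b0 := AR.refl hb0y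
  have disj : ∀ z, AR G x a0 z → AR G y b0 z → False := by
    intro z hAz hBz
    have h1 : ¬ AR G x z y := fun h => hay (hAz.trans h)
    have h2 : ¬ AR G y z x := fun h => hbx (hBz.trans h)
    haveI := Classical.decEq V
    obtain ⟨W⟩ := hc.preconnected z x
    obtain ⟨t, ht, q, hq, hsub, honly⟩ :=
      firstHit (fun t => t = x ∨ t = y) W.bypass W.bypass_isPath (Or.inl rfl)
    rcases ht with h | h
    · refine h2 ⟨q.copy rfl h, fun hy' => ?_⟩
      rw [SimpleGraph.Walk.support_copy] at hy'
      exact hxy.symm ((honly _ hy' (Or.inr rfl)).trans h)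
    · refine h1 ⟨q.copy rfl h, fun hx' => ?_⟩
      rw [SimpleGraph.Walk.support_copy] at hx'
      exact hxy ((honly _ hx' (Or.inl rfl)).trans h)
  have memxy : ∀ a b, AR G x a0 a → AR G y b0 b →
      ∀ p : G.Walk a b, x ∈ p.support ∧ y ∈ p.support := by
    intro a b hAa hBb p
    constructor
    · by_contra hxp
      exact disj b (hAa.trans ⟨p, hxp⟩) hBb
    · by_contra hyp
      exact disj a hAa (hBb.trans ⟨p.reverse, by simpa using hyp⟩)
  have hAny : ∀ z, AR G x a0 z → z ≠ y := fun z h hzy => hay (hzy ▸ h)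
  have hBnx : ∀ z, AR G y b0 z → z ≠ x := fun z h hzx => hbx (hzx ▸ h)
  by_cases hcc : C x = C y
  · have claim : (∀ z, AR G x a0 z → C z = C x) ∨ (∀ z, AR G y b0 z → C z = C x) := by
      by_contra hcl
      push_neg at hcl
      obtain ⟨⟨a, hAa, hca⟩, ⟨b, hBb, hcb⟩⟩ := hcl
      obtain ⟨p, hp, c, hcount⟩ := hC a b
      obtain ⟨hxs, hys⟩ := memxy a b hAa hBb p
      have hab : a ≠ b := fun h => disj a hAa (h ▸ hBb)
      rcases fin2_cases (C x) (C a) c (fun h => hca h.symm) with rfl | rfl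
      · have := two_le_countP' (fun z => decide (C z = C x)) hxs hys hxy (by simp) (by simp [← hcc])
        omega
      · have hcba : C b = C a := fin2_eq _ _ _ hcb hca
        have := two_le_countP' (fun z => decide (C z = C a)) p.start_mem_support p.end_mem_support hab
          (by simp) (by simp [hcba])
        omega
    rcases claim with hm | hm
    · exact mono_contra hC ha0x (fun z hz => hm z hz)
    · exact mono_contra hC hb0y (fun z hz => (hm z hz).trans hcc)
  · have claim : (∀ z, AR G x a0 z → C z = C y) ∨ (∀ z, AR G y b0 z → C z = C x) := by
      by_contra hcl
      push_neg at hcl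
      obtain ⟨⟨a, hAa, hca⟩, ⟨b, hBb, hcb⟩⟩ := hcl
      have hcax : C a = C x := fin2_eq _ _ _ hca hcc
      have hcby : C b = C y := fin2_eq _ _ _ hcb (fun h => hcc h.symm)
      obtain ⟨p, hp, c, hcount⟩ := hC a b
      obtain ⟨hxs, hys⟩ := memxy a b hAa hBb p
      rcases fin2_cases (C x) (C y) c hcc with rfl | rfl
      · have := two_le_countP' (fun z => decide (C z = C x)) hxs p.start_mem_support (Ne.symm hAa.ne_right)
          (by simp) (by simp [hcax])
        omega
      · have := two_le_countP' (fun z => decide (C z = C y)) hys p.end_mem_support (Ne.symm hBb.ne_right)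
          (by simp) (by simp [hcby])
        omega
    rcases claim with hm | hm
    · exact side hC hxy ha0y hb0y (fun b hBb p => memxy a0 b hA0 hBb p)
        hBnx hcc (hm a0 hA0)
    · refine side hC hxy.symm hb0x ha0x (fun a hAa p => ?_) hAny
        (fun h => hcc h.symm) (hm b0 hB0)
      obtain ⟨h1, h2⟩ := memxy a b0 hAa hB0 p.reverse
      exact ⟨by simpa using h2, by simpa using h1⟩
  done

end Main

section Construct
variable {V : Type*} {G : SimpleGraph V}

/-- key construction: if every vertex other than `w` is a non-cut vertex, then any two
vertices distinct from `w` are joined by a path through `w`. -/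
lemma ept_aux {w : V} (hw : ∀ z, z ≠ w → ∀ a b, a ≠ z → b ≠ z → AR G z a b) :
    ∀ n : ℕ, ∀ u v : V, u ≠ v → u ≠ w → v ≠ w → ∀ q : G.Walk u w, q.IsPath →
      v ∉ q.support → q.length ≤ n → ∃ p : G.Walk u v, p.IsPath ∧ w ∈ p.support := by
  haveI := Classical.decEq V
  intro n
  induction n with
  | zero =>
    intro u v huv hu hv q _ _ hlen
    exact absurd (SimpleGraph.Walk.eq_of_length_eq_zero (Nat.le_zero.1 hlen)) hu
  | succ n ih =>
    intro u v huv hu hv q hq hvq hlen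
    cases q with
    | nil => exact absurd rfl hu
    | @cons _ x1 _ h q' =>
      rw [SimpleGraph.Walk.support_cons, List.mem_cons] at hvq
      push_neg at hvq
      obtain ⟨hvu, hvq'⟩ := hvq
      by_cases hx1w : x1 = w
      · obtain ⟨S0, hS0⟩ := hw u hu w v (Ne.symm hu) hvu
        have h' : G.Adj u w := hx1w ▸ h
        refine ⟨Walk.cons h' S0.bypass, S0.bypass_isPath.cons
            (fun hm => hS0 (S0.support_bypass_subset hm)), ?_⟩
        rw [SimpleGraph.Walk.support_cons]
        exact List.mem_cons_of_mem _ S0.bypass.start_mem_support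
      · have hx1u : x1 ≠ u := by
          rintro rfl
          exact ((Walk.cons_isPath_iff h q').mp hq).2 q'.start_mem_support
        have hx1v : x1 ≠ v := fun hh => hvq' (hh ▸ q'.start_mem_support)
        obtain ⟨R, hR, hwR⟩ := ih x1 v hx1v hx1w hv q' hq.of_cons hvq'
          (by rw [SimpleGraph.Walk.length_cons] at hlen; omega)
        by_cases huR : u ∈ R.support
        · -- u lies on R
          have hT := hR.takeUntil huR
          have hD := hR.dropUntil huR
          by_cases hwD : w ∈ (R.dropUntil u huR).support
          · exact ⟨R.dropUntil u huR, hD, hwD⟩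
          · -- w on the takeUntil part
            have hwT : w ∈ (R.takeUntil u huR).support := by
              have hmem := hwR
              rw [← R.take_spec huR, SimpleGraph.Walk.mem_support_append_iff] at hmem
              exact hmem.resolve_right hwD
            have hnodup : ((R.takeUntil u huR).support ++
                (R.dropUntil u huR).support.tail).Nodup := by
              have hnd := hR.support_nodup
              rwa [← R.take_spec huR, SimpleGraph.Walk.support_append] at hnd
            have hdisj := List.disjoint_of_nodup_append hnodup
            have hvT : v ∉ (R.takeUntil u huR).support := by
              intro hvT
              have hvD' : v ∈ (R.dropUntil u huR).support := Walk.end_mem_support _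
              have heq : (R.dropUntil u huR).support =
                  u :: (R.dropUntil u huR).support.tail :=
                SimpleGraph.Walk.support_eq_cons _
              rcases List.mem_cons.1 (heq ▸ hvD') with hveq | ht
              · exact hvu hveq
              · exact hdisj hvT ht
            -- S : path from v to w avoiding u
            obtain ⟨S0, hS0u⟩ := hw u hu v w hvu (Ne.symm hu)
            obtain ⟨t, htP1, S', hS', hS'sub, honly⟩ :=
              firstHit (fun t => t ∈ (R.takeUntil u huR).reverse.support)
                S0.bypass S0.bypass_isPath
                (by simp only [SimpleGraph.Walk.support_reverse, List.mem_reverse]; exact hwT)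
            have huS' : u ∉ S'.support :=
              fun hm => hS0u (S0.support_bypass_subset (hS'sub hm))
            have htu : t ≠ u := fun hh => huS' (hh ▸ S'.end_mem_support)
            set P1 := (R.takeUntil u huR).reverse with hP1def
            have hP1 : P1.IsPath := hT.reverse
            have htP1' : t ∈ P1.support := htP1
            have hT2 := hP1.takeUntil htP1'
            have hE := hP1.dropUntil htP1'
            have hP1nodup : ((P1.takeUntil t htP1').support ++
                (P1.dropUntil t htP1').support.tail).Nodup := by
              have hnd := hP1.support_nodup
              rwa [← P1.take_spec htP1', SimpleGraph.Walk.support_append] at hnd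
            have hP1disj := List.disjoint_of_nodup_append hP1nodup
            have hwP1 : w ∈ P1.support := by
              rw [hP1def, SimpleGraph.Walk.support_reverse, List.mem_reverse]; exact hwT
            by_cases hwT2 : w ∈ (P1.takeUntil t htP1').support
            · -- final = (P1.takeUntil t) ++ S'.reverse
              refine ⟨(P1.takeUntil t htP1').append S'.reverse, ?_, ?_⟩
              · refine append_isPath hS'.reverse hT2 ?_
                intro z hz hz'
                rw [SimpleGraph.Walk.support_reverse, List.mem_reverse] at hz'
                exact honly z hz' (P1.support_takeUntil_subset htP1' hz)
              · rw [SimpleGraph.Walk.mem_support_append_iff]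
                exact Or.inl hwT2
            · -- w on E := P1.dropUntil t; build (S'.append E).concat (edge x1 u), reverse
              have hwE : w ∈ (P1.dropUntil t htP1').support := by
                have hmem := hwP1
                rw [← P1.take_spec htP1', SimpleGraph.Walk.mem_support_append_iff] at hmem
                exact hmem.resolve_left hwT2
              have huE : u ∉ (P1.dropUntil t htP1').support := by
                intro huE'
                have heq : (P1.dropUntil t htP1').support =
                    t :: (P1.dropUntil t htP1').support.tail :=
                  SimpleGraph.Walk.support_eq_cons _
                rcases List.mem_cons.1 (heq ▸ huE') with hueq | ht'
                · exact htu hueq.symm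
                · exact hP1disj (Walk.start_mem_support _) ht'
              have hSE : (S'.append (P1.dropUntil t htP1')).IsPath := by
                refine append_isPath hE hS' ?_
                intro z hz hz'
                exact honly z hz (P1.support_dropUntil_subset htP1' hz')
              have huSE : u ∉ (S'.append (P1.dropUntil t htP1')).support := by
                rw [SimpleGraph.Walk.mem_support_append_iff]
                rintro (hm | hm)
                · exact huS' hm
                · exact huE hm
              refine ⟨((S'.append (P1.dropUntil t htP1')).concat h.symm).reverse,
                ?_, ?_⟩
              · refine Walk.IsPath.reverse ?_
                rw [SimpleGraph.Walk.concat_eq_append]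
                refine append_isPath ?_ hSE ?_
                · exact ((Walk.cons_isPath_iff _ _).mpr
                    ⟨Walk.IsPath.nil, by simp [hx1u]⟩)
                · intro z hz hz'
                  rw [SimpleGraph.Walk.support_cons] at hz'
                  rcases List.mem_cons.1 hz' with rfl | hz''
                  · rfl
                  · rw [SimpleGraph.Walk.support_nil] at hz''
                    rcases List.mem_singleton.1 hz'' with rfl
                    exact absurd hz huSE
              · rw [SimpleGraph.Walk.support_reverse, List.mem_reverse,
                  SimpleGraph.Walk.support_concat,
                  List.mem_append]
                left
                rw [SimpleGraph.Walk.mem_support_append_iff]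
                exact Or.inr hwE
        · exact ⟨Walk.cons h R, hR.cons huR, by
            rw [SimpleGraph.Walk.support_cons]; exact List.mem_cons_of_mem _ hwR⟩

end Construct

section Assemble
variable {V : Type*} {G : SimpleGraph V}

lemma count_one_of_mem_path {u v w : V} (p : G.Walk u v) (hp : p.IsPath)
    (hw : w ∈ p.support) (C : V → Fin 2) (hCdef : ∀ z, C z = 0 ↔ z = w) :
    Walk.ConflictFree C p := by
  haveI := Classical.decEq V
  refine ⟨0, ?_⟩
  have h1 : p.support.countP (fun x => decide (C x = 0)) =
      p.support.countP (fun x => x == w) := by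
    refine List.countP_congr (fun z _ => ?_)
    simp only [decide_eq_true_eq, beq_iff_eq]
    exact hCdef z
  rw [h1]
  have : p.support.countP (fun x => x == w) = p.support.count w := rfl
  rw [this]
  exact List.count_eq_one_of_mem hp.support_nodup hw

/-- if all vertices except possibly `w` are non-cut, there is a CF 2-coloring. -/
lemma CF_of_almost (hc : G.Connected) {w : V} (hw : ∀ z, z ≠ w → ¬ IsCutVertex G z) :
    ∃ C : V → Fin 2, CFVConnected G C := by
  haveI := Classical.decEq V
  have hw' : ∀ z, z ≠ w → ∀ a b, a ≠ z → b ≠ z → AR G z a b :=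
    fun z hz a b ha hb => notCut_AR (hw z hz) ha hb
  set C : V → Fin 2 := fun z => if z = w then 0 else 1 with hCdef'
  have hCdef : ∀ z, C z = 0 ↔ z = w := by
    intro z
    by_cases hzw : z = w <;> simp [hCdef', hzw]
  refine ⟨C, fun u v => ?_⟩
  by_cases huv : u = v
  · subst huv
    refine ⟨Walk.nil, Walk.IsPath.nil, C u, ?_⟩
    simp
  · -- find a path through w
    have hpath : ∃ p : G.Walk u v, p.IsPath ∧ w ∈ p.support := by
      by_cases hu : u = w
      · obtain ⟨W⟩ := hc.preconnected u v
        exact ⟨W.bypass, W.bypass_isPath, hu ▸ W.bypass.start_mem_support⟩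
      · by_cases hv : v = w
        · obtain ⟨W⟩ := hc.preconnected u v
          exact ⟨W.bypass, W.bypass_isPath, hv ▸ W.bypass.end_mem_support⟩
        · obtain ⟨q0, hq0⟩ := hw' v hv u w (fun h => huv h) (fun h => hv h.symm)
          exact ept_aux hw' q0.bypass.length u v huv hu hv q0.bypass q0.bypass_isPath
            (fun hm => hq0 (q0.support_bypass_subset hm)) le_rfl
    obtain ⟨p, hp, hwp⟩ := hpath
    exact ⟨p, hp, count_one_of_mem_path p hp hwp C hCdef⟩

/-- Two distinct cut vertices are impossible in presence of a CF 2-coloring. -/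
lemma no_two_cuts [Fintype V] (hc : G.Connected) (h2 : 1 < Fintype.card V)
    {x y : V} (hxy : x ≠ y) (hcx : IsCutVertex G x) (hcy : IsCutVertex G y)
    {C : V → Fin 2} (hC : CFVConnected G C) : False := by
  obtain ⟨a, b, hax, hbx, hab⟩ := cut_exists hcx (Fintype.exists_ne_of_one_lt_card h2 x)
  obtain ⟨a', b', hay', hby', hab'⟩ := cut_exists hcy (Fintype.exists_ne_of_one_lt_card h2 y)
  -- find a0 with ¬ AR x a0 y
  have hyx : y ≠ x := hxy.symm
  have ha0 : ∃ a0, a0 ≠ x ∧ ¬ AR G x a0 y := by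
    by_cases h1 : AR G x a y
    · by_cases h2' : AR G x b y
      · exact absurd (h1.trans h2'.symm) hab
      · exact ⟨b, hbx, h2'⟩
    · exact ⟨a, hax, h1⟩
  have hb0 : ∃ b0, b0 ≠ y ∧ ¬ AR G y b0 x := by
    by_cases h1 : AR G y a' x
    · by_cases h2' : AR G y b' x
      · exact absurd (h1.trans h2'.symm) hab'
      · exact ⟨b', hby', h2'⟩
    · exact ⟨a', hay', h1⟩
  obtain ⟨a0, ha0x, hay0⟩ := ha0
  obtain ⟨b0, hb0y, hbx0⟩ := hb0
  exact main_aux hc hxy ha0x hb0y hay0 hbx0 hC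

end Assemble

section Final
variable {V : Type*} [Fintype V] {G : SimpleGraph V}

lemma vcfc_eq_two_iff_exists (h3 : 3 ≤ Fintype.card V) :
    vcfc G = 2 ↔ ∃ C : V → Fin 2, CFVConnected G C := by
  haveI : Nonempty V := Fintype.card_pos_iff.mp (by omega)
  constructor
  · intro h
    have hne : {k : ℕ | ∃ C : V → Fin k, CFVConnected G C}.Nonempty := by
      by_contra hemp
      rw [Set.not_nonempty_iff_eq_empty] at hemp
      unfold vcfc at h
      rw [hemp, Nat.sInf_empty] at h
      omega
    have hmem := Nat.sInf_mem hne
    rwa [show sInf {k : ℕ | ∃ C : V → Fin k, CFVConnected G C} = vcfc G from rfl, h] at hmem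
  · rintro ⟨C, hC⟩
    have h2mem : 2 ∈ {k : ℕ | ∃ C : V → Fin k, CFVConnected G C} := ⟨C, hC⟩
    refine le_antisymm (Nat.sInf_le h2mem) ?_
    refine le_csInf ⟨2, h2mem⟩ ?_
    intro k hk
    obtain ⟨D, hD⟩ := hk
    by_contra hlt
    push_neg at hlt
    interval_cases k
    · exact (D (Classical.arbitrary V)).elim0
    · obtain ⟨u, v, huv⟩ := Fintype.exists_pair_of_one_lt_card (by omega : 1 < Fintype.card V)
      obtain ⟨p, hp, c, hcount⟩ := hD u v
      have hall : p.support.countP (fun x => decide (D x = c)) = p.support.length :=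
        List.countP_eq_length.2 (fun z _ => by simp [Subsingleton.elim (D z) c])
      rw [hall, SimpleGraph.Walk.length_support] at hcount
      exact huv (SimpleGraph.Walk.eq_of_length_eq_zero (p := p) (by omega))
end Final

theorem vcfc_eq_two_iff {V : Type*} [Fintype V] (G : SimpleGraph V)
    (h3 : 3 ≤ Fintype.card V) (hc : G.Connected) :
    vcfc G = 2 ↔ TwoConnected G ∨ ∃! v, IsCutVertex G v := by
  haveI : Nonempty V := Fintype.card_pos_iff.mp (by omega)
  rw [vcfc_eq_two_iff_exists h3]
  constructor
  · rintro ⟨C, hC⟩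
    by_cases h2c : TwoConnected G
    · exact Or.inl h2c
    · have hx : ∃ x, IsCutVertex G x := by
        by_contra hno
        push_neg at hno
        refine h2c ⟨h3, fun v => ?_⟩
        have := hno v
        rw [IsCutVertex, not_not] at this
        exact this
      obtain ⟨x, hcx⟩ := hx
      right
      refine ⟨x, hcx, fun y hcy => ?_⟩
      by_contra hne
      exact no_two_cuts hc (by omega) hne hcy hcx hC
  · intro h
    rcases h with h2c | ⟨w, _, huniq⟩
    · exact CF_of_almost hc (w := Classical.arbitrary V)
        (fun z _ hcut => hcut (h2c.2 z))
    · exact CF_of_almost hc (fun z hz hcut => hz (huniq z hcut))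
end

section
/- Let G be the t-corona of a cycle C_n with t ≥ 1 and n ≥ 3. Then vcfc(G) = 3. -/
open SimpleGraph

/-- The t-corona of a graph `H`: attach `t` pendant leaves to each vertex of `H`. -/
def corona {α : Type*} (H : SimpleGraph α) (t : ℕ) : SimpleGraph (α ⊕ α × Fin t) :=
  SimpleGraph.fromRel (fun x y =>
    match x, y with
    | Sum.inl a, Sum.inl b => H.Adj a b
    | Sum.inl a, Sum.inr (b, _) => a = b
    | _, _ => False)

/-! ### Auxiliary lemmas -/

section Aux

lemma aux_countP_eq_one {α : Type*} [DecidableEq α] {l : List α} {p : α → Bool}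
    (hl : l.Nodup) {x0 : α} (hx : x0 ∈ l) (hp : p x0 = true)
    (h : ∀ x ∈ l, p x = true → x = x0) : l.countP p = 1 := by
  have : l.countP p = l.countP (· == x0) := by
    refine List.countP_congr fun x hxl => ?_
    simp only [beq_iff_eq]
    exact ⟨fun hpx => h x hxl hpx, fun e => e ▸ hp⟩
  rw [this]
  exact List.count_eq_one_of_mem hl hx

lemma aux_two_le_countP {α : Type*} [DecidableEq α] {l : List α} {p : α → Bool}
    (hl : l.Nodup) {a b : α} (hab : a ≠ b) (ha : a ∈ l) (hb : b ∈ l)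
    (hpa : p a = true) (hpb : p b = true) : 2 ≤ l.countP p := by
  rw [List.countP_eq_length_filter]
  have hf : (l.filter p).Nodup := hl.filter p
  have ha' : a ∈ l.filter p := List.mem_filter.mpr ⟨ha, hpa⟩
  have hb' : b ∈ l.filter p := List.mem_filter.mpr ⟨hb, hpb⟩
  have hsub : ({a, b} : Finset α) ⊆ (l.filter p).toFinset := by
    intro x hx
    rcases Finset.mem_insert.mp hx with rfl | hx
    · simpa using ha'
    · simp only [Finset.mem_singleton] at hx
      subst hx; simpa using hb'
  have h2 : ({a, b} : Finset α).card = 2 := Finset.card_pair hab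
  calc 2 = ({a, b} : Finset α).card := h2.symm
    _ ≤ (l.filter p).toFinset.card := Finset.card_le_card hsub
    _ = (l.filter p).length := List.toFinset_card_of_nodup hf

lemma corona_adj_inl_inl {α : Type*} {H : SimpleGraph α} {t : ℕ} {a b : α}
    (h : H.Adj a b) : (corona H t).Adj (Sum.inl a) (Sum.inl b) := by
  refine (fromRel_adj _ _ _).mpr ⟨by simp [h.ne], Or.inl h⟩

lemma corona_adj_inl_inr {α : Type*} {H : SimpleGraph α} {t : ℕ} (a : α) (s : Fin t) :
    (corona H t).Adj (Sum.inl a) (Sum.inr (a, s)) :=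
  (fromRel_adj _ _ _).mpr ⟨by simp, Or.inl rfl⟩

lemma corona_adj_inr {α : Type*} {H : SimpleGraph α} {t : ℕ} {a : α} {s : Fin t}
    {w : α ⊕ α × Fin t} (h : (corona H t).Adj (Sum.inr (a, s)) w) : w = Sum.inl a := by
  rcases w with b | ⟨b, r⟩
  · rw [corona, fromRel_adj] at h
    rcases h with ⟨-, h | h⟩
    · exact h.elim
    · exact congrArg Sum.inl h
  · rw [corona, fromRel_adj] at h
    rcases h with ⟨-, h | h⟩ <;> exact h.elim

/-- The embedding of the base graph into its corona as a graph hom. -/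
def inlHom {α : Type*} (H : SimpleGraph α) (t : ℕ) : H →g corona H t where
  toFun := Sum.inl
  map_rel' := fun h => corona_adj_inl_inl h

lemma aux_down_walk {n : ℕ} (hn : 3 ≤ n) : ∀ (k : ℕ) (hk : k < n),
    ∃ p : (cycleGraph n).Walk ⟨k, hk⟩ ⟨0, by omega⟩,
      p.support.map Fin.val = (List.range (k+1)).reverse := by
  intro k
  induction k with
  | zero => exact fun hk => ⟨SimpleGraph.Walk.nil, by simp [List.range_succ]⟩
  | succ k ih =>
    intro hk
    obtain ⟨p, hp⟩ := ih (by omega)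
    have hle : (⟨k, by omega⟩ : Fin n) ≤ ⟨k+1, hk⟩ := by simp [Fin.le_def]
    have hadj : (cycleGraph n).Adj ⟨k+1, hk⟩ ⟨k, by omega⟩ := by
      rw [cycleGraph_adj']
      left
      rw [Fin.coe_sub_iff_le.mpr hle]
      simp
    refine ⟨SimpleGraph.Walk.cons hadj p, ?_⟩
    simp [hp, List.range_succ]

lemma aux_up_walk {n : ℕ} (hn : 3 ≤ n) : ∀ (d k : ℕ) (hk : k < n), n - k = d → 1 ≤ k →
    ∃ p : (cycleGraph n).Walk ⟨k, hk⟩ ⟨0, by omega⟩,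
      p.support.map Fin.val = (List.range' k (n - k)) ++ [0] := by
  intro d
  induction d with
  | zero => intro k hk hd _; omega
  | succ d ih =>
    intro k hk hd h1
    rcases Nat.eq_zero_or_pos d with rfl | hdpos
    · -- k = n - 1
      have hadj : (cycleGraph n).Adj ⟨k, hk⟩ ⟨0, by omega⟩ := by
        rw [cycleGraph_adj']
        right
        rw [Fin.sub_def]
        show (n - k + 0) % n = 1
        rw [Nat.mod_eq_of_lt (by omega)]
        omega
      refine ⟨SimpleGraph.Walk.cons hadj SimpleGraph.Walk.nil, ?_⟩
      have h2 : n - k = 1 := by omega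
      simp [h2]
    · have hk1 : k + 1 < n := by omega
      obtain ⟨p, hp⟩ := ih (k+1) hk1 (by omega) (by omega)
      have hle : (⟨k, hk⟩ : Fin n) ≤ ⟨k+1, hk1⟩ := by simp [Fin.le_def]
      have hadj : (cycleGraph n).Adj ⟨k, hk⟩ ⟨k+1, hk1⟩ := by
        rw [cycleGraph_adj']
        right
        rw [Fin.coe_sub_iff_le.mpr hle]
        simp
      refine ⟨SimpleGraph.Walk.cons hadj p, ?_⟩
      have h2 : n - k = (n - (k+1)) + 1 := by omega
      rw [h2, List.range'_succ]
      simp [hp]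

lemma aux_exists_arc {n : ℕ} (hn : 3 ≤ n) (i j : Fin n) (hij : i ≠ j) :
    ∃ p : (cycleGraph n).Walk i j, p.IsPath ∧ (⟨0, by omega⟩ : Fin n) ∈ p.support := by
  -- helper to transfer facts from the val-level support description
  have key : ∀ (u v : Fin n) (p : (cycleGraph n).Walk u v) (L : List ℕ),
      p.support.map Fin.val = L → L.Nodup → 0 ∈ L →
      p.IsPath ∧ (⟨0, by omega⟩ : Fin n) ∈ p.support := by
    intro u v p L hL hnd h0
    constructor
    · rw [SimpleGraph.Walk.isPath_def]
      exact List.Nodup.of_map Fin.val (hL ▸ hnd)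
    · rw [← hL] at h0
      obtain ⟨x, hx, hx0⟩ := List.mem_map.mp h0
      have : x = (⟨0, by omega⟩ : Fin n) := Fin.ext hx0
      exact this ▸ hx
  -- case split
  rcases Nat.eq_zero_or_pos i.val with hi0 | hi1
  · -- i = 0 : reverse of down-walk from j
    have hj1 : 1 ≤ j.val := by
      rcases Nat.eq_zero_or_pos j.val with h | h
      · exact absurd (Fin.ext (hi0.trans h.symm)) hij
      · exact h
    obtain ⟨p, hp⟩ := aux_down_walk hn j.val j.isLt
    have hi : i = (⟨0, by omega⟩ : Fin n) := Fin.ext hi0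
    have hj : j = (⟨j.val, j.isLt⟩ : Fin n) := Fin.ext rfl
    rw [hi, hj]
    refine ⟨p.reverse, key _ _ _ ((List.range (j.val+1)).reverse.reverse) ?_ (by simp [List.nodup_range]) (by simp <;> omega)⟩
    rw [SimpleGraph.Walk.support_reverse, List.map_reverse, hp]
  · rcases Nat.eq_zero_or_pos j.val with hj0 | hj1
    · -- j = 0 : down-walk from i
      obtain ⟨p, hp⟩ := aux_down_walk hn i.val i.isLt
      have hj : j = (⟨0, by omega⟩ : Fin n) := Fin.ext hj0
      have hi : i = (⟨i.val, i.isLt⟩ : Fin n) := Fin.ext rfl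
      rw [hi, hj]
      exact ⟨p, key _ _ _ _ hp (by simp [List.nodup_range]) (by simp <;> omega)⟩
    · -- both nonzero
      rcases Nat.lt_or_ge i.val j.val with hlt | hge
      · -- i < j : down from i, then reverse of up from j
        obtain ⟨p, hp⟩ := aux_down_walk hn i.val i.isLt
        obtain ⟨q, hq⟩ := aux_up_walk hn (n - j.val) j.val j.isLt rfl hj1
        have hi : i = (⟨i.val, i.isLt⟩ : Fin n) := Fin.ext rfl
        have hj : j = (⟨j.val, j.isLt⟩ : Fin n) := Fin.ext rfl
        rw [hi, hj]
        refine ⟨p.append q.reverse,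
          key _ _ _ ((List.range (i.val+1)).reverse ++ (List.range' j.val (n - j.val)).reverse) ?_ ?_ (by simp <;> omega)⟩
        · rw [SimpleGraph.Walk.support_append, List.map_append, hp, List.map_tail,
            SimpleGraph.Walk.support_reverse, List.map_reverse, hq]
          simp
        · rw [List.nodup_append]
          refine ⟨by simp [List.nodup_range], by simp [List.nodup_range'], ?_⟩
          intro a ha b hb
          simp only [List.mem_reverse, List.mem_range] at ha
          simp only [List.mem_reverse, List.mem_range'_1] at hb
          omega
      · -- j < i : reverse of the arc from j to i
        have hlt : j.val < i.val := by
          rcases Nat.lt_or_ge j.val i.val with h | h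
          · exact h
          · exact absurd (Fin.ext (Nat.le_antisymm h hge)) hij
        obtain ⟨p, hp⟩ := aux_down_walk hn j.val j.isLt
        obtain ⟨q, hq⟩ := aux_up_walk hn (n - i.val) i.val i.isLt rfl hi1
        have hi : i = (⟨i.val, i.isLt⟩ : Fin n) := Fin.ext rfl
        have hj : j = (⟨j.val, j.isLt⟩ : Fin n) := Fin.ext rfl
        rw [hi, hj]
        refine ⟨(p.append q.reverse).reverse,
          key _ _ _ (((List.range (j.val+1)).reverse ++ (List.range' i.val (n - i.val)).reverse).reverse) ?_ ?_ (by simp <;> omega)⟩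
        · rw [SimpleGraph.Walk.support_reverse, List.map_reverse,
            SimpleGraph.Walk.support_append, List.map_append, hp, List.map_tail,
            SimpleGraph.Walk.support_reverse, List.map_reverse, hq]
          simp
        · rw [List.nodup_reverse, List.nodup_append]
          refine ⟨by simp [List.nodup_range], by simp [List.nodup_range'], ?_⟩
          intro a ha b hb
          simp only [List.mem_reverse, List.mem_range] at ha
          simp only [List.mem_reverse, List.mem_range'_1] at hb
          omega

lemma aux_isPath_concat {V : Type*} {G : SimpleGraph V} {u v w : V} {p : G.Walk u v}
    (h : G.Adj v w) (hp : p.IsPath) (hw : w ∉ p.support) : (p.concat h).IsPath := by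
  rw [SimpleGraph.Walk.isPath_def, SimpleGraph.Walk.support_concat]
  refine List.Nodup.append ((SimpleGraph.Walk.isPath_def p).mp hp) (by simp) ?_
  intro a ha hb
  simp only [List.mem_singleton] at hb
  exact hw (hb ▸ ha)

lemma aux_exists_arc_corona {n : ℕ} (t : ℕ) (hn : 3 ≤ n) (i j : Fin n) (hij : i ≠ j) :
    ∃ p : (corona (cycleGraph n) t).Walk (Sum.inl i) (Sum.inl j),
      p.IsPath ∧ Sum.inl (⟨0, by omega⟩ : Fin n) ∈ p.support ∧
      ∀ x ∈ p.support, ∃ k : Fin n, x = Sum.inl k := by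
  obtain ⟨p, hp, h0⟩ := aux_exists_arc hn i j hij
  have hinj : Function.Injective (inlHom (cycleGraph n) t) := fun a b h => Sum.inl.inj h
  refine ⟨p.map (inlHom (cycleGraph n) t), SimpleGraph.Walk.map_isPath_of_injective hinj hp, ?_, ?_⟩
  · erw [SimpleGraph.Walk.support_map]
    exact List.mem_map_of_mem h0
  · intro x hx
    erw [SimpleGraph.Walk.support_map] at hx
    obtain ⟨k, _, rfl⟩ := List.mem_map.mp hx
    exact ⟨k, rfl⟩

/-- The coloring used for the upper bound. -/
def coronaCol (n t : ℕ) : (Fin n ⊕ Fin n × Fin t) → Fin 3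
  | Sum.inl i => if i.val = 0 then 2 else 0
  | Sum.inr _ => 1

lemma coronaCol_inl (n t : ℕ) (i : Fin n) :
    coronaCol n t (Sum.inl i) = if i.val = 0 then 2 else 0 := rfl

lemma coronaCol_inr (n t : ℕ) (x : Fin n × Fin t) : coronaCol n t (Sum.inr x) = 1 := rfl

lemma coronaCol_inl_ne_one (n t : ℕ) (i : Fin n) : coronaCol n t (Sum.inl i) ≠ 1 := by
  rw [coronaCol_inl]
  split <;> decide

lemma coronaCol_eq_two {n t : ℕ} (hn : 3 ≤ n) (x : Fin n ⊕ Fin n × Fin t)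
    (h : coronaCol n t x = 2) : x = Sum.inl (⟨0, by omega⟩ : Fin n) := by
  rcases x with k | y
  · rw [coronaCol_inl] at h
    by_cases h0 : k.val = 0
    · exact congrArg Sum.inl (Fin.ext h0)
    · rw [if_neg h0] at h
      exact absurd h (by decide)
  · rw [coronaCol_inr] at h
    exact absurd h (by decide)

lemma aux_cf_symm {V α : Type*} [DecidableEq α] {G : SimpleGraph V} {C : V → α} {u v : V}
    (h : ∃ p : G.Walk u v, p.IsPath ∧ Walk.ConflictFree C p) :
    ∃ p : G.Walk v u, p.IsPath ∧ Walk.ConflictFree C p := by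
  obtain ⟨p, hp, c, hc⟩ := h
  exact ⟨p.reverse, hp.reverse, c,
    by rwa [SimpleGraph.Walk.support_reverse, List.countP_reverse]⟩

/-- a path from `inl i` to `inl j` with all-inl support. -/
lemma aux_path_base {n t : ℕ} (hn : 3 ≤ n) (i j : Fin n) :
    ∃ q : (corona (cycleGraph n) t).Walk (Sum.inl i) (Sum.inl j),
      q.IsPath ∧ ∀ x ∈ q.support, ∃ k : Fin n, x = Sum.inl k := by
  by_cases hij : i = j
  · subst hij
    exact ⟨SimpleGraph.Walk.nil, SimpleGraph.Walk.IsPath.nil, by simp⟩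
  · obtain ⟨p, hp, _, hall⟩ := aux_exists_arc_corona t hn i j hij
    exact ⟨p, hp, hall⟩

lemma aux_path_inl_inr {n t : ℕ} (hn : 3 ≤ n) (i j : Fin n) (r : Fin t) :
    ∃ p : (corona (cycleGraph n) t).Walk (Sum.inl i) (Sum.inr (j, r)),
      p.IsPath ∧ Walk.ConflictFree (coronaCol n t) p := by
  obtain ⟨q, hq, hall⟩ := aux_path_base (t := t) hn i j
  have hleaf : Sum.inr (j, r) ∉ q.support := by
    intro hmem
    obtain ⟨k, hk⟩ := hall _ hmem
    exact Sum.inr_ne_inl hk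
  refine ⟨q.concat (corona_adj_inl_inr j r), aux_isPath_concat _ hq hleaf, 1, ?_⟩
  refine aux_countP_eq_one (x0 := Sum.inr (j, r))
    ((SimpleGraph.Walk.isPath_def _).mp (aux_isPath_concat _ hq hleaf)) ?_
    (by rw [decide_eq_true_iff]; rfl) ?_
  · rw [SimpleGraph.Walk.support_concat]
    simp
  · intro x hx hx1
    rw [SimpleGraph.Walk.support_concat, List.mem_append] at hx
    rcases hx with hx | hx
    · obtain ⟨k, rfl⟩ := hall _ hx
      rw [decide_eq_true_iff] at hx1
      exact absurd hx1 (coronaCol_inl_ne_one n t k)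
    · simpa using hx

lemma aux_upper {n t : ℕ} (hn : 3 ≤ n) (ht : 1 ≤ t) :
    CFVConnected (corona (cycleGraph n) t) (coronaCol n t) := by
  intro u v
  rcases u with i | ⟨i, s⟩ <;> rcases v with j | ⟨j, r⟩
  · -- inl i to inl j
    by_cases hij : i = j
    · subst hij
      refine ⟨SimpleGraph.Walk.nil, SimpleGraph.Walk.IsPath.nil, coronaCol n t (Sum.inl i), ?_⟩
      simp
    · obtain ⟨p, hp, h0, hall⟩ := aux_exists_arc_corona t hn i j hij
      refine ⟨p, hp, 2, aux_countP_eq_one ((SimpleGraph.Walk.isPath_def p).mp hp) h0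
        (by rw [decide_eq_true_iff]; rfl) ?_⟩
      intro x hx hx2
      rw [decide_eq_true_iff] at hx2
      exact coronaCol_eq_two hn x hx2
  · exact aux_path_inl_inr hn i j r
  · exact aux_cf_symm (aux_path_inl_inr hn j i s)
  · -- inr (i,s) to inr (j,r)
    by_cases hij : i = j
    · subst hij
      by_cases hsr : s = r
      · subst hsr
        refine ⟨SimpleGraph.Walk.nil, SimpleGraph.Walk.IsPath.nil, 1, ?_⟩
        simp [coronaCol_inr]
      · -- through the common neighbour inl i
        have h1 : (corona (cycleGraph n) t).Adj (Sum.inr (i, s)) (Sum.inl i) :=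
          (corona_adj_inl_inr i s).symm
        have h2 : (corona (cycleGraph n) t).Adj (Sum.inl i) (Sum.inr (i, r)) :=
          corona_adj_inl_inr i r
        refine ⟨SimpleGraph.Walk.cons h1 (SimpleGraph.Walk.cons h2 SimpleGraph.Walk.nil), ?_, ?_⟩
        · rw [SimpleGraph.Walk.isPath_def]
          simp [hsr]
        · refine ⟨coronaCol n t (Sum.inl i), aux_countP_eq_one (x0 := Sum.inl i) ?_ (by simp)
            (by rw [decide_eq_true_iff]) ?_⟩
          · simp [hsr]
          · intro x hx hx1
            rw [decide_eq_true_iff] at hx1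
            simp only [SimpleGraph.Walk.support_cons, SimpleGraph.Walk.support_nil,
              List.mem_cons, List.mem_singleton] at hx
            rcases hx with rfl | rfl | rfl | h
            · exact absurd hx1.symm (by rw [coronaCol_inr]; exact (coronaCol_inl_ne_one n t i).symm ∘ Eq.symm)
            · rfl
            · exact absurd hx1.symm (by rw [coronaCol_inr]; exact (coronaCol_inl_ne_one n t i).symm ∘ Eq.symm)
            · exact absurd h List.not_mem_nil
    · -- i ≠ j
      obtain ⟨q, hq, h0, hall⟩ := aux_exists_arc_corona t hn i j hij
      have hleafj : Sum.inr (j, r) ∉ q.support := by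
        intro hmem
        obtain ⟨k, hk⟩ := hall _ hmem
        exact Sum.inr_ne_inl hk
      set q2 := q.concat (corona_adj_inl_inr j r) with hq2
      have hq2path : q2.IsPath := aux_isPath_concat _ hq hleafj
      have hleafi : Sum.inr (i, s) ∉ q2.support := by
        rw [hq2, SimpleGraph.Walk.support_concat, List.mem_append]
        rintro (hx | hx)
        · obtain ⟨k, hk⟩ := hall _ hx
          exact Sum.inr_ne_inl hk
        · simp only [List.mem_singleton, Sum.inr.injEq, Prod.mk.injEq] at hx
          exact hij hx.1
      have h1 : (corona (cycleGraph n) t).Adj (Sum.inr (i, s)) (Sum.inl i) :=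
        (corona_adj_inl_inr i s).symm
      refine ⟨SimpleGraph.Walk.cons h1 q2, hq2path.cons hleafi, 2, ?_⟩
      refine aux_countP_eq_one (x0 := Sum.inl (⟨0, by omega⟩ : Fin n))
        ((SimpleGraph.Walk.isPath_def _).mp (hq2path.cons hleafi)) ?_
        (by rw [decide_eq_true_iff]; rfl) ?_
      · rw [SimpleGraph.Walk.support_cons, hq2, SimpleGraph.Walk.support_concat]
        simp only [List.mem_cons, List.mem_append]
        exact Or.inr (Or.inl h0)
      · intro x hx hx2
        rw [decide_eq_true_iff] at hx2
        exact coronaCol_eq_two hn x hx2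

end Aux

/-! ### Lower bound -/

lemma aux_leaf_path_eq {n t : ℕ} {i : Fin n} {s : Fin t}
    {p : (corona (cycleGraph n) t).Walk (Sum.inr (i, s)) (Sum.inl i)}
    (hp : p.IsPath) : p.support = [Sum.inr (i, s), Sum.inl i] := by
  cases p with
  | cons h q =>
    rename_i w
    have hw : w = Sum.inl i := corona_adj_inr h
    subst hw
    cases q with
    | nil => rfl
    | cons h' q' =>
      exfalso
      rw [SimpleGraph.Walk.isPath_def] at hp
      simp only [SimpleGraph.Walk.support_cons, List.nodup_cons] at hp
      exact hp.2.1 (SimpleGraph.Walk.end_mem_support _)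

lemma aux_leaf_ne_color {n t k : ℕ} {C : (Fin n ⊕ Fin n × Fin t) → Fin k}
    (hC : CFVConnected (corona (cycleGraph n) t) C) (i : Fin n) (s : Fin t) :
    C (Sum.inr (i, s)) ≠ C (Sum.inl i) := by
  obtain ⟨p, hp, c, hc⟩ := hC (Sum.inr (i, s)) (Sum.inl i)
  rw [aux_leaf_path_eq hp] at hc
  intro heq
  simp only [List.countP_cons, List.countP_nil, decide_eq_true_iff, heq] at hc
  by_cases h1 : C (Sum.inl i) = c <;> simp [h1] at hc

lemma aux_inl_mem_of_walk {n t : ℕ} {i : Fin n} {s : Fin t} {v : Fin n ⊕ Fin n × Fin t}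
    (p : (corona (cycleGraph n) t).Walk (Sum.inr (i, s)) v) (hv : v ≠ Sum.inr (i, s)) :
    Sum.inl i ∈ p.support := by
  cases p with
  | nil => exact absurd rfl hv
  | cons h q =>
    rename_i w
    have hw : w = Sum.inl i := corona_adj_inr h
    subst hw
    simp [SimpleGraph.Walk.start_mem_support]

lemma aux_lower {n t k : ℕ} (hn : 3 ≤ n) (ht : 1 ≤ t)
    (C : (Fin n ⊕ Fin n × Fin t) → Fin k)
    (hC : CFVConnected (corona (cycleGraph n) t) C) : 3 ≤ k := by
  by_contra hk
  push_neg at hk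
  have hk2 : k ≤ 2 := by omega
  -- k ≥ 1
  have hk1 : 1 ≤ k := by
    rcases Nat.eq_zero_or_pos k with rfl | h
    · exact (C (Sum.inl ⟨0, by omega⟩)).elim0
    · exact h
  -- pigeonhole on the cycle vertices
  have hcard : Fintype.card (Fin k) < Fintype.card (Fin n) := by simp; omega
  obtain ⟨a, b, hab, hcol⟩ := Fintype.exists_ne_map_eq_of_card_lt
    (fun i : Fin n => C (Sum.inl i)) hcard
  -- the two leaves
  set s0 : Fin t := ⟨0, ht⟩
  set La : Fin n ⊕ Fin n × Fin t := Sum.inr (a, s0)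
  set Lb : Fin n ⊕ Fin n × Fin t := Sum.inr (b, s0)
  obtain ⟨p, hp, c, hc⟩ := hC La Lb
  have hLab : Lb ≠ La := by simp [La, Lb, hab.symm]
  have hmema : Sum.inl a ∈ p.support := aux_inl_mem_of_walk p hLab
  have hmemb : Sum.inl b ∈ p.support := by
    have := aux_inl_mem_of_walk p.reverse (by simp [La, Lb, hab])
    rwa [SimpleGraph.Walk.support_reverse, List.mem_reverse] at this
  have hmemLa : La ∈ p.support := SimpleGraph.Walk.start_mem_support p
  have hmemLb : Lb ∈ p.support := SimpleGraph.Walk.end_mem_support p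
  -- colors
  have hca : C La ≠ C (Sum.inl a) := aux_leaf_ne_color hC a s0
  -- every color in Fin k equals C (inl a) or C La
  have hcases : c = C (Sum.inl a) ∨ c = C La := by
    have h1 : (C (Sum.inl a)).val < k := (C (Sum.inl a)).isLt
    have h2 : (C La).val < k := (C La).isLt
    have h3 : c.val < k := c.isLt
    have h4 : (C La).val ≠ (C (Sum.inl a)).val := fun h => hca (Fin.ext h)
    rcases Nat.lt_or_ge c.val (C (Sum.inl a)).val with h | h
    · right; apply Fin.ext; omega
    · rcases Nat.eq_or_lt_of_le h with h' | h'
      · left; exact Fin.ext h'.symm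
      · right; apply Fin.ext; omega
  have hnodup : p.support.Nodup := (SimpleGraph.Walk.isPath_def p).mp hp
  rcases hcases with rfl | rfl
  · -- c is the common color of inl a, inl b
    have : 2 ≤ p.support.countP (fun x => decide (C x = C (Sum.inl a))) :=
      aux_two_le_countP hnodup (by simp [hab]) hmema hmemb (by simp) (by simp [← hcol])
    omega
  · -- c is the common color of the leaves
    have hcb : C Lb = C La := by
      have hcb' : C Lb ≠ C (Sum.inl b) := aux_leaf_ne_color hC b s0
      have h1 : (C (Sum.inl a)).val < k := (C (Sum.inl a)).isLt
      have h2 : (C La).val < k := (C La).isLt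
      have h3 : (C Lb).val < k := (C Lb).isLt
      have h4 : (C La).val ≠ (C (Sum.inl a)).val := fun h => hca (Fin.ext h)
      have h5 : (C Lb).val ≠ (C (Sum.inl b)).val := fun h => hcb' (Fin.ext h)
      have h6 : (C (Sum.inl b)).val = (C (Sum.inl a)).val := by rw [← hcol]
      apply Fin.ext; omega
    have : 2 ≤ p.support.countP (fun x => decide (C x = C La)) :=
      aux_two_le_countP hnodup (show La ≠ Lb by simp [La, Lb, hab]) hmemLa hmemLb
        (by simp) (by simp [hcb])
    omega

theorem vcfc_corona_cycle (n t : ℕ) (hn : 3 ≤ n) (ht : 1 ≤ t) :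
    vcfc (corona (SimpleGraph.cycleGraph n) t) = 3 := by
  have h3 : 3 ∈ {k : ℕ | ∃ C : (Fin n ⊕ Fin n × Fin t) → Fin k,
      CFVConnected (corona (cycleGraph n) t) C} := ⟨coronaCol n t, aux_upper hn ht⟩
  refine le_antisymm (Nat.sInf_le h3) (le_csInf ⟨3, h3⟩ ?_)
  rintro k ⟨C, hC⟩
  exact aux_lower hn ht C hC
end

section
/- Let T be a tree of order n ≥ 3 with diameter d(T). Then max{χ(T), ⌈log₂(d(T)+1)⌉} ≤ vcfc(T) ≤ log_{3/2} n. -/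
open SimpleGraph

namespace VcfcAux

open SimpleGraph Walk

variable {V : Type*} {T : SimpleGraph V}

/-- Two vertices are connected within a vertex set `s` if some path between them
stays inside `s`. -/
def ConnIn (T : SimpleGraph V) (s : Finset V) (x y : V) : Prop :=
  ∃ p : T.Walk x y, p.IsPath ∧ ∀ z ∈ p.support, z ∈ s

lemma ConnIn.mem_left {s : Finset V} {x y : V} (h : ConnIn T s x y) : x ∈ s := by
  obtain ⟨p, _, hs⟩ := h; exact hs _ p.start_mem_support

lemma ConnIn.mem_right {s : Finset V} {x y : V} (h : ConnIn T s x y) : y ∈ s := by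
  obtain ⟨p, _, hs⟩ := h; exact hs _ p.end_mem_support

lemma ConnIn.refl {s : Finset V} {x : V} (hx : x ∈ s) : ConnIn T s x x :=
  ⟨Walk.nil, IsPath.nil, by simp [hx]⟩

lemma ConnIn.symm {s : Finset V} {x y : V} (h : ConnIn T s x y) : ConnIn T s y x := by
  obtain ⟨p, hp, hs⟩ := h
  exact ⟨p.reverse, hp.reverse, by simpa [Walk.support_reverse] using hs⟩

lemma ConnIn.trans [DecidableEq V] {s : Finset V} {x y z : V} (h : ConnIn T s x y) (h' : ConnIn T s y z) :
    ConnIn T s x z := by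
  obtain ⟨p, hp, hps⟩ := h; obtain ⟨q, hq, hqs⟩ := h'
  refine ⟨(p.append q).bypass, (p.append q).bypass_isPath, fun w hw => ?_⟩
  have hmem := (p.append q).support_bypass_subset hw
  rw [Walk.mem_support_append_iff] at hmem
  exact hmem.elim (hps w) (hqs w)

lemma ConnIn.mono {s t : Finset V} (hst : s ⊆ t) {x y : V} (h : ConnIn T s x y) :
    ConnIn T t x y := by
  obtain ⟨p, hp, hs⟩ := h; exact ⟨p, hp, fun z hz => hst (hs z hz)⟩

lemma connIn_of_mem_support [DecidableEq V] {s : Finset V} {x y z : V} (p : T.Walk x y)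
    (hp : p.IsPath) (hs : ∀ w ∈ p.support, w ∈ s) (hz : z ∈ p.support) : ConnIn T s x z :=
  ⟨p.takeUntil z hz, hp.takeUntil hz, fun w hw => hs w (p.support_takeUntil_subset hz hw)⟩

/-- The connectivity class of `x` within `s`. -/
noncomputable def classIn (T : SimpleGraph V) (s : Finset V) (x : V) : Finset V :=
  @Finset.filter _ (fun y => ConnIn T s x y) (fun _ => Classical.propDecidable _) s

lemma mem_classIn {s : Finset V} {x y : V} : y ∈ classIn T s x ↔ y ∈ s ∧ ConnIn T s x y := by
  exact @Finset.mem_filter V (fun y => ConnIn T s x y) (fun _ => Classical.propDecidable _) s y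

lemma mem_classIn' {s : Finset V} {x y : V} (h : ConnIn T s x y) : y ∈ classIn T s x :=
  mem_classIn.2 ⟨h.mem_right, h⟩

lemma mem_classIn_self {s : Finset V} {x : V} (hx : x ∈ s) : x ∈ classIn T s x :=
  mem_classIn.2 ⟨hx, ConnIn.refl hx⟩

lemma classIn_subset {s : Finset V} {x : V} : classIn T s x ⊆ s := fun _ hy => (mem_classIn.1 hy).1

lemma classIn_congr [DecidableEq V] {s : Finset V} {x y : V} (h : ConnIn T s x y) :
    classIn T s x = classIn T s y := by
  ext z
  simp only [mem_classIn]
  exact ⟨fun hz => ⟨hz.1, h.symm.trans hz.2⟩, fun hz => ⟨hz.1, h.trans hz.2⟩⟩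

lemma connIn_classIn [DecidableEq V] {s : Finset V} {x y z : V} (hy : y ∈ classIn T s x)
    (hz : z ∈ classIn T s x) : ConnIn T (classIn T s x) y z := by
  obtain ⟨p, hp, hps⟩ := (mem_classIn.1 hy).2.symm.trans (mem_classIn.1 hz).2
  refine ⟨p, hp, fun w hw => mem_classIn' ?_⟩
  exact (mem_classIn.1 hy).2.trans (connIn_of_mem_support p hp hps hw)


lemma exists_centroid [DecidableEq V] (hT : T.IsAcyclic) (A : Finset V) (hne : A.Nonempty)
    (hA : ∀ x ∈ A, ∀ y ∈ A, ConnIn T A x y) :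
    ∃ c ∈ A, ∀ x ∈ A.erase c, 2 * (classIn T (A.erase c) x).card ≤ A.card := by
  obtain ⟨c, hc, hmin⟩ := A.exists_min_image
    (fun c => (A.erase c).sup fun x => (classIn T (A.erase c) x).card) hne
  refine ⟨c, hc, fun a ha => ?_⟩
  by_contra hbig
  push_neg at hbig
  set Z : Finset V := classIn T (A.erase c) a with hZ
  have hac : a ≠ c := Finset.ne_of_mem_erase ha
  have haA : a ∈ A := Finset.mem_of_mem_erase ha
  have hZa : a ∈ Z := mem_classIn_self ha
  have hZsub : Z ⊆ A.erase c := classIn_subset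
  have hZA : Z ⊆ A := hZsub.trans (Finset.erase_subset _ _)
  obtain ⟨p, hp, hpA⟩ := hA c hc a haA
  cases p with
  | nil => exact hac rfl
  | cons h q =>
    rename_i u
    rw [Walk.cons_isPath_iff] at hp
    obtain ⟨hq, hcq⟩ := hp
    have hqA : ∀ z ∈ q.support, z ∈ A := fun z hz => hpA z (by simp [Walk.support_cons, hz])
    have huA : u ∈ A := hqA u q.start_mem_support
    have huc : u ≠ c := fun e => hcq (e ▸ q.start_mem_support)
    have huAc : u ∈ A.erase c := Finset.mem_erase.2 ⟨huc, huA⟩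
    have hconn_ua : ConnIn T (A.erase c) u a :=
      ⟨q, hq, fun z hz => Finset.mem_erase.2 ⟨fun e => hcq (e ▸ hz), hqA z hz⟩⟩
    have hZu : u ∈ Z := mem_classIn.2 ⟨huAc, hconn_ua.symm⟩
    have K1 : ∀ y, ConnIn T (A.erase u) c y → y ∉ Z := by
      intro y hcy hyZ
      have hyc : y ≠ c := by
        intro e
        exact Finset.notMem_erase c A (hZsub (e ▸ hyZ))
      obtain ⟨r, hr, hrs⟩ := hcy
      cases r with
      | nil => exact hyc rfl
      | cons h' r' =>
        rename_i u'
        rw [Walk.cons_isPath_iff] at hr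
        obtain ⟨hr', hcr'⟩ := hr
        have hrsA : ∀ z ∈ r'.support, z ∈ A.erase u := fun z hz =>
          hrs z (by simp [Walk.support_cons, hz])
        have hu'Au : u' ∈ A.erase u := hrsA u' r'.start_mem_support
        have hu'u : u' ≠ u := (Finset.mem_erase.1 hu'Au).1
        have hconn' : ConnIn T (A.erase c) u' y :=
          ⟨r', hr', fun z hz => Finset.mem_erase.2
            ⟨fun e => hcr' (e ▸ hz), Finset.mem_of_mem_erase (hrsA z hz)⟩⟩
        have hu'Z : u' ∈ Z := mem_classIn.2
          ⟨Finset.mem_erase.2 ⟨fun e => hcr' (e ▸ r'.start_mem_support),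
              Finset.mem_of_mem_erase hu'Au⟩,
            ((mem_classIn.1 hyZ).2.trans hconn'.symm)⟩
        obtain ⟨w, hw, hwA⟩ : ConnIn T (A.erase c) u u' :=
          (mem_classIn.1 hZu).2.symm.trans (mem_classIn.1 hu'Z).2
        have hcw : c ∉ w.support := fun hcw => (Finset.mem_erase.1 (hwA c hcw)).1 rfl
        have hP2 : (Walk.cons h w).IsPath := (Walk.cons_isPath_iff _ _).2 ⟨hw, hcw⟩
        have hP1 : (Walk.cons h' Walk.nil).IsPath := by
          rw [Walk.cons_isPath_iff]
          exact ⟨Walk.IsPath.nil, by simp [h'.ne]⟩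
        have hpq := hT.path_unique ⟨Walk.cons h' Walk.nil, hP1⟩ ⟨Walk.cons h w, hP2⟩
        have hval : Walk.cons h' (Walk.nil) = Walk.cons h w := congrArg Subtype.val hpq
        have humem : u ∈ (Walk.cons h' (Walk.nil : T.Walk u' u')).support := by
          rw [hval]; simp [Walk.support_cons]
        simp only [Walk.support_cons, Walk.support_nil, List.mem_cons,
          List.mem_singleton, List.not_mem_nil, or_false] at humem
        rcases humem with e | e
        · exact huc e
        · exact hu'u e.symm
    have hZcard : 0 < Z.card := Finset.card_pos.2 ⟨a, hZa⟩
    have key : ∀ x ∈ A.erase u, (classIn T (A.erase u) x).card < Z.card := by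
      intro x hx
      by_cases hcx : ConnIn T (A.erase u) x c
      · have hWsub : classIn T (A.erase u) x ⊆ A \ Z := by
          intro y hy
          obtain ⟨hyAu, hxy⟩ := mem_classIn.1 hy
          exact Finset.mem_sdiff.2 ⟨Finset.mem_of_mem_erase hyAu, K1 y (hcx.symm.trans hxy)⟩
        have h1 : (classIn T (A.erase u) x).card ≤ A.card - Z.card := by
          have h2 := Finset.card_le_card hWsub
          rwa [Finset.card_sdiff_of_subset hZA] at h2
        have h3 := Finset.card_le_card hZA
        omega
      · have hWsub : classIn T (A.erase u) x ⊆ Z.erase u := by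
          intro y hy
          obtain ⟨hyAu, hxy⟩ := mem_classIn.1 hy
          have hyu : y ≠ u := (Finset.mem_erase.1 hyAu).1
          have hyA : y ∈ A := Finset.mem_of_mem_erase hyAu
          obtain ⟨r, hr, hrA⟩ := hA c hc y hyA
          by_cases hur : u ∈ r.support
          · have hr2 : (r.dropUntil u hur).IsPath := hr.dropUntil hur
            have hcnot : c ∉ (r.dropUntil u hur).support := by
              have hnd : r.support.Nodup := hr.support_nodup
              have hspec : (r.takeUntil u hur).support ++ (r.dropUntil u hur).support.tail
                  = r.support := by rw [← Walk.support_append, Walk.take_spec]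
              rw [← hspec] at hnd
              have hdisj := List.disjoint_of_nodup_append hnd
              intro hcmem
              rw [Walk.support_eq_cons] at hcmem
              rcases List.mem_cons.1 hcmem with e | e
              · exact huc e.symm
              · exact hdisj (r.takeUntil u hur).start_mem_support e
            have hconn2 : ConnIn T (A.erase c) u y :=
              ⟨r.dropUntil u hur, hr2, fun z hz => Finset.mem_erase.2
                ⟨fun e => hcnot (e ▸ hz), hrA z (r.support_dropUntil_subset hur hz)⟩⟩
            exact Finset.mem_erase.2 ⟨hyu,
              mem_classIn.2 ⟨hconn2.mem_right, (mem_classIn.1 hZu).2.trans hconn2⟩⟩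
          · have hcy : ConnIn T (A.erase u) c y :=
              ⟨r, hr, fun z hz => Finset.mem_erase.2 ⟨fun e => hur (e ▸ hz), hrA z hz⟩⟩
            exact absurd (hxy.trans hcy.symm) hcx
        calc (classIn T (A.erase u) x).card ≤ (Z.erase u).card := Finset.card_le_card hWsub
          _ < Z.card := by rw [Finset.card_erase_of_mem hZu]; omega
    have hsupu : ((A.erase u).sup fun x => (classIn T (A.erase u) x).card) < Z.card := by
      rw [Finset.sup_lt_iff (by simpa using hZcard)]
      exact key
    have hsupc : Z.card ≤ (A.erase c).sup fun x => (classIn T (A.erase c) x).card :=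
      Finset.le_sup (f := fun x => (classIn T (A.erase c) x).card) ha
    have hmu := hmin u huA
    omega


/-- Optional centroid of a set. -/
noncomputable def centOpt (T : SimpleGraph V) [DecidableEq V] (A : Finset V) : Option V :=
  if h : ∃ c, c ∈ A ∧ ∀ x ∈ A.erase c, 2 * (classIn T (A.erase c) x).card ≤ A.card
  then some h.choose else none

lemma centOpt_spec [DecidableEq V] {A : Finset V} {c : V} (h : centOpt T A = some c) :
    c ∈ A ∧ ∀ x ∈ A.erase c, 2 * (classIn T (A.erase c) x).card ≤ A.card := by
  unfold centOpt at h
  split at h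
  · rename_i hex
    cases h
    exact hex.choose_spec
  · cases h

lemma centOpt_isSome [DecidableEq V] (hT : T.IsAcyclic) {s : Finset V} {x : V} (hx : x ∈ s) :
    ∃ c, centOpt T (classIn T s x) = some c := by
  obtain ⟨c, hc, hprop⟩ := exists_centroid hT (classIn T s x) ⟨x, mem_classIn_self hx⟩
    (fun a ha b hb => connIn_classIn ha hb)
  have hex : ∃ c, c ∈ classIn T s x ∧ ∀ y ∈ (classIn T s x).erase c,
      2 * (classIn T ((classIn T s x).erase c) y).card ≤ (classIn T s x).card :=
    ⟨c, hc, hprop⟩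
  exact ⟨hex.choose, dif_pos hex⟩

lemma exists_ranking [DecidableEq V] (hT : T.IsAcyclic) :
    ∀ (k : ℕ) (s : Finset V), (∀ x ∈ s, (classIn T s x).card < 2 ^ k) →
    ∃ C : V → ℕ, (∀ v ∈ s, C v < k) ∧
      ∀ u v, u ≠ v → C u = C v → ∀ p : T.Walk u v, p.IsPath →
        (∀ x ∈ p.support, x ∈ s) → ∃ z ∈ p.support, C u < C z := by
  intro k
  induction k with
  | zero =>
    intro s hs
    have hemp : ∀ x, x ∉ s := by
      intro x hx
      have h1 : 0 < (classIn T s x).card := Finset.card_pos.2 ⟨x, mem_classIn_self hx⟩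
      have h2 := hs x hx
      rw [pow_zero] at h2
      omega
    exact ⟨fun _ => 0, fun v hv => absurd hv (hemp v),
      fun u v _ _ p _ hps => absurd (hps u p.start_mem_support) (hemp u)⟩
  | succ k ih =>
    intro s hs
    set D : Finset V := s.filter (fun x => centOpt T (classIn T s x) = some x) with hD
    have hDmem : ∀ {x}, x ∈ D ↔ x ∈ s ∧ centOpt T (classIn T s x) = some x := by
      intro x; rw [hD, Finset.mem_filter]
    -- the centroid of the class of any x ∈ s belongs to D and to the class
    have hcent : ∀ x ∈ s, ∃ c, c ∈ D ∧ c ∈ classIn T s x ∧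
        classIn T s c = classIn T s x ∧ centOpt T (classIn T s x) = some c := by
      intro x hx
      obtain ⟨c, hcs⟩ := centOpt_isSome hT hx
      have hcmem : c ∈ classIn T s x := (centOpt_spec hcs).1
      have hcls : classIn T s c = classIn T s x :=
        (classIn_congr (mem_classIn.1 hcmem).2).symm
      refine ⟨c, hDmem.2 ⟨classIn_subset hcmem, ?_⟩, hcmem, hcls, hcs⟩
      rw [hcls]; exact hcs
    have hDuniq : ∀ {x y}, x ∈ D → y ∈ D → ConnIn T s x y → x = y := by
      intro x y hx hy hxy
      have h1 := (hDmem.1 hx).2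
      have h2 := (hDmem.1 hy).2
      rw [classIn_congr hxy] at h1
      rw [h1] at h2
      exact Option.some_injective _ h2
    set t : Finset V := s \ D with ht
    have htmem : ∀ {x}, x ∈ t ↔ x ∈ s ∧ x ∉ D := by intro x; rw [ht, Finset.mem_sdiff]
    have htsub : t ⊆ s := by intro x hx; exact (htmem.1 hx).1
    -- class bound for t
    have htb : ∀ x ∈ t, (classIn T t x).card < 2 ^ k := by
      intro x hx
      obtain ⟨hxs, hxD⟩ := htmem.1 hx
      obtain ⟨c, hcD, hcmem, hccls, hcopt⟩ := hcent x hxs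
      have hxc : x ≠ c := fun e => hxD (e ▸ hcD)
      have hxe : x ∈ (classIn T s x).erase c :=
        Finset.mem_erase.2 ⟨hxc, mem_classIn_self hxs⟩
      have hprop := (centOpt_spec hcopt).2 x hxe
      have hcard := hs x hxs
      -- classIn t x ⊆ classIn ((classIn s x).erase c) x
      have hsub : classIn T t x ⊆ classIn T ((classIn T s x).erase c) x := by
        intro y hy
        obtain ⟨hyt, hxy⟩ := mem_classIn.1 hy
        obtain ⟨p, hp, hps⟩ := hxy
        have hps' : ∀ z ∈ p.support, z ∈ (classIn T s x).erase c := by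
          intro z hz
          have hzt : z ∈ t := hps z hz
          obtain ⟨hzs, hzD⟩ := htmem.1 hzt
          have hzx : ConnIn T s x z :=
            (connIn_of_mem_support p hp (fun w hw => htsub (hps w hw)) hz)
          refine Finset.mem_erase.2 ⟨fun e => hzD (e ▸ hcD), mem_classIn' hzx⟩
        exact mem_classIn.2 ⟨hps' y p.end_mem_support, ⟨p, hp, hps'⟩⟩
      have := Finset.card_le_card hsub
      have hpow : (2:ℕ) ^ (k+1) = 2 * 2 ^ k := by ring
      omega
    obtain ⟨C0, hC0bd, hC0rank⟩ := ih t htb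
    refine ⟨fun v => if v ∈ D then k else C0 v, ?_, ?_⟩
    · intro v hv
      by_cases hvD : v ∈ D
      · simp [hvD]
      · simp only [hvD, if_false]
        exact Nat.lt_succ_of_lt (hC0bd v (htmem.2 ⟨hv, hvD⟩))
    · intro u v huv hCuv p hp hps
      by_cases huD : u ∈ D
      · have hvD : v ∈ D := by
          by_contra hvD
          have hvs : v ∈ s := hps v p.end_mem_support
          have : C0 v < k := hC0bd v (htmem.2 ⟨hvs, hvD⟩)
          simp only [huD, if_true, hvD, if_false] at hCuv
          omega
        exact absurd (hDuniq huD hvD ⟨p, hp, hps⟩) huv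
      · have hvD : v ∉ D := by
          intro hvD
          have hus : u ∈ s := hps u p.start_mem_support
          have : C0 u < k := hC0bd u (htmem.2 ⟨hus, huD⟩)
          simp only [huD, if_false, hvD, if_true] at hCuv
          omega
        by_cases hhit : ∃ z ∈ p.support, z ∈ D
        · obtain ⟨z, hz, hzD⟩ := hhit
          refine ⟨z, hz, ?_⟩
          have hus : u ∈ s := hps u p.start_mem_support
          simp only [huD, if_false, hzD, if_true]
          exact hC0bd u (htmem.2 ⟨hus, huD⟩)
        · push_neg at hhit
          have hps' : ∀ x ∈ p.support, x ∈ t := fun x hx =>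
            htmem.2 ⟨hps x hx, hhit x hx⟩
          simp only [huD, if_false, hvD, if_false] at hCuv
          obtain ⟨z, hz, hlt⟩ := hC0rank u v huv hCuv p hp hps'
          refine ⟨z, hz, ?_⟩
          have hzD : z ∉ D := hhit z hz
          simp only [huD, if_false, hzD]
          exact hlt


lemma tail_bound {x v : V} {B : ℕ} (hB : 0 < B) (w : T.Walk x v) (hw : w.IsPath)
    (H : ∀ (u' v' : V) (r : T.Walk u' v'), r.IsPath →
      (∀ z ∈ r.support, z ∈ w.support.tail) → r.support.length < B) :
    w.support.tail.length < B := by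
  cases w with
  | nil => simpa using hB
  | cons h r =>
    rw [Walk.support_cons, List.tail_cons]
    exact H _ _ r ((Walk.cons_isPath_iff _ _).1 hw).1 (fun z hz => by
      rw [Walk.support_cons, List.tail_cons]; exact hz)

lemma support_length_lt [DecidableEq V] (h : T.IsTree) {m : ℕ} {C : V → Fin m}
    (hC : CFVConnected T C) :
    ∀ (N : ℕ) (S : Finset (Fin m)), S.card ≤ N → ∀ (u v : V) (q : T.Walk u v), q.IsPath →
      (∀ x ∈ q.support, C x ∈ S) → q.support.length < 2 ^ S.card := by
  intro N
  induction N with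
  | zero =>
    intro S hS u v q hq hcol
    have hSe : S = ∅ := Finset.card_eq_zero.1 (Nat.le_zero.1 hS)
    exact absurd (hcol u q.start_mem_support) (by simp [hSe])
  | succ N ih =>
    intro S hS u v q hq hcol
    obtain ⟨p', hp', hcf⟩ := hC u v
    have hqp : q = p' := congrArg Subtype.val (h.IsAcyclic.path_unique ⟨q, hq⟩ ⟨p', hp'⟩)
    unfold Walk.ConflictFree at hcf
    obtain ⟨c₀, hc₀⟩ := hcf
    rw [← hqp] at hc₀
    have hone : (q.support.filter (fun x => decide (C x = c₀))).length = 1 := by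
      rw [← List.countP_eq_length_filter]; exact hc₀
    obtain ⟨x, hxf⟩ := List.length_eq_one_iff.1 hone
    have hxmem : x ∈ q.support ∧ C x = c₀ := by
      have hx : x ∈ q.support.filter (fun x => decide (C x = c₀)) := by
        rw [hxf]; exact List.mem_singleton_self x
      have := List.mem_filter.1 hx
      simpa using this
    have huniq : ∀ y ∈ q.support, C y = c₀ → y = x := by
      intro y hy hyc
      have hmem : y ∈ q.support.filter (fun x => decide (C x = c₀)) :=
        List.mem_filter.2 ⟨hy, by simp [hyc]⟩
      rw [hxf] at hmem
      simpa using hmem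
    have hc₀S : c₀ ∈ S := hxmem.2 ▸ hcol x hxmem.1
    have hSpos : 1 ≤ S.card := Finset.card_pos.2 ⟨c₀, hc₀S⟩
    have hcard' : (S.erase c₀).card = S.card - 1 := Finset.card_erase_of_mem hc₀S
    have hcard'' : (S.erase c₀).card ≤ N := by omega
    have hx1 := hxmem.1
    have hspec : (q.takeUntil x hx1).support ++ (q.dropUntil x hx1).support.tail
        = q.support := by
      rw [← Walk.support_append, Walk.take_spec]
    have h2 : (q.dropUntil x hx1).support.tail.length < 2 ^ (S.erase c₀).card := by
      apply tail_bound (Nat.two_pow_pos _) (q.dropUntil x hx1) (hq.dropUntil hx1)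
      intro u' v' r hr hrsub
      apply ih (S.erase c₀) hcard'' u' v' r hr
      intro z hz
      have hz1 : z ∈ (q.dropUntil x hx1).support.tail := hrsub z hz
      have hz2 : z ∈ q.support := q.support_dropUntil_subset hx1 (List.mem_of_mem_tail hz1)
      refine Finset.mem_erase.2 ⟨fun e => ?_, hcol z hz2⟩
      have hzx : z = x := huniq z hz2 e
      have hnd : (q.dropUntil x hx1).support.Nodup := (hq.dropUntil hx1).support_nodup
      rw [Walk.support_eq_cons] at hnd
      exact (List.nodup_cons.1 hnd).1 (hzx ▸ hz1)
    have h1 : (q.takeUntil x hx1).reverse.support.tail.length < 2 ^ (S.erase c₀).card := by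
      apply tail_bound (Nat.two_pow_pos _) _ ((hq.takeUntil hx1).reverse)
      intro u' v' r hr hrsub
      apply ih (S.erase c₀) hcard'' u' v' r hr
      intro z hz
      have hz1 := hrsub z hz
      have hz2 : z ∈ (q.takeUntil x hx1).support := by
        have hz3 := List.mem_of_mem_tail hz1
        rwa [Walk.support_reverse, List.mem_reverse] at hz3
      have hz3 : z ∈ q.support := q.support_takeUntil_subset hx1 hz2
      refine Finset.mem_erase.2 ⟨fun e => ?_, hcol z hz3⟩
      have hzx : z = x := huniq z hz3 e
      have hnd : (q.takeUntil x hx1).reverse.support.Nodup :=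
        ((hq.takeUntil hx1).reverse).support_nodup
      rw [Walk.support_eq_cons] at hnd
      exact (List.nodup_cons.1 hnd).1 (hzx ▸ hz1)
    have e1 : (q.takeUntil x hx1).reverse.support.length
        = (q.takeUntil x hx1).support.length := by
      rw [Walk.support_reverse, List.length_reverse]
    have e2 : (q.takeUntil x hx1).reverse.support.length
        = (q.takeUntil x hx1).reverse.support.tail.length + 1 := by
      conv_lhs => rw [Walk.support_eq_cons]
      simp
    have e3 : q.support.length
        = (q.takeUntil x hx1).support.length + (q.dropUntil x hx1).support.tail.length := by
      rw [← hspec, List.length_append]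
    have hpow : (2:ℕ) ^ S.card = 2 ^ ((S.erase c₀).card) * 2 := by
      rw [← pow_succ]
      congr 1
      omega
    omega


lemma exists_cf_coloring [Fintype V] [Nonempty V] [DecidableEq V] (h : T.IsTree) :
    ∃ C : V → Fin (Nat.log 2 (Fintype.card V) + 1), CFVConnected T C := by
  set k := Nat.log 2 (Fintype.card V) + 1 with hk
  have hcl : ∀ x ∈ (Finset.univ : Finset V), (classIn T Finset.univ x).card < 2 ^ k := by
    intro x _
    calc (classIn T Finset.univ x).card ≤ Fintype.card V := by
          rw [← Finset.card_univ]; exact Finset.card_le_card classIn_subset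
      _ < 2 ^ k := Nat.lt_pow_succ_log_self one_lt_two _
  obtain ⟨C0, hbd, hrank⟩ := exists_ranking h.IsAcyclic k Finset.univ hcl
  set C : V → Fin k := fun v => ⟨C0 v, hbd v (Finset.mem_univ v)⟩ with hCdef
  refine ⟨C, ?_⟩
  intro u v
  obtain ⟨w⟩ := h.isConnected u v
  refine ⟨w.bypass, w.bypass_isPath, ?_⟩
  set p := w.bypass with hp
  have hpp : p.IsPath := w.bypass_isPath
  obtain ⟨x, hxm, hmax⟩ := Finset.exists_max_image p.support.toFinset (fun z => C0 z)
    ⟨u, List.mem_toFinset.2 p.start_mem_support⟩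
  have hxs : x ∈ p.support := List.mem_toFinset.1 hxm
  have hmax' : ∀ z ∈ p.support, C0 z ≤ C0 x := fun z hz => hmax z (List.mem_toFinset.2 hz)
  have claim : ∀ a ∈ p.support, ∀ b ∈ p.support, C0 a = C0 x → C0 b = C0 x → a = b := by
    intro a ha b hb hca hcb
    by_contra hab
    by_cases hmem : b ∈ (p.dropUntil a ha).support
    · have hrp : ((p.dropUntil a ha).takeUntil b hmem).IsPath :=
        (hpp.dropUntil ha).takeUntil hmem
      obtain ⟨z, hz, hlt⟩ := hrank a b hab (hca.trans hcb.symm)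
        ((p.dropUntil a ha).takeUntil b hmem) hrp (fun _ _ => Finset.mem_univ _)
      have hzp : z ∈ p.support :=
        p.support_dropUntil_subset ha ((p.dropUntil a ha).support_takeUntil_subset hmem hz)
      have := hmax' z hzp
      omega
    · have hmem' : b ∈ (p.takeUntil a ha).support := by
        have hb' := hb
        rw [← Walk.take_spec p ha, Walk.mem_support_append_iff] at hb'
        tauto
      have hrp : ((p.takeUntil a ha).dropUntil b hmem').IsPath :=
        (hpp.takeUntil ha).dropUntil hmem'
      obtain ⟨z, hz, hlt⟩ := hrank b a (Ne.symm hab) (hcb.trans hca.symm)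
        ((p.takeUntil a ha).dropUntil b hmem') hrp (fun _ _ => Finset.mem_univ _)
      have hzp : z ∈ p.support :=
        p.support_takeUntil_subset ha ((p.takeUntil a ha).support_dropUntil_subset hmem' hz)
      have := hmax' z hzp
      omega
  unfold Walk.ConflictFree
  refine ⟨C x, ?_⟩
  rw [List.countP_eq_length_filter]
  set l := p.support.filter (fun z => decide (C z = C x)) with hl
  have hCeq : ∀ z, (C z = C x) ↔ (C0 z = C0 x) := by
    intro z
    rw [hCdef]
    simp [Fin.mk.injEq]
  have hall : ∀ a ∈ l, a = x := by
    intro a ha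
    have := List.mem_filter.1 ha
    refine claim a this.1 x hxs ?_ rfl
    have hdec := this.2
    simp only [decide_eq_true_eq] at hdec
    exact (hCeq a).1 hdec
  have hxl : x ∈ l := List.mem_filter.2 ⟨hxs, by simp⟩
  have hnd : l.Nodup := hpp.support_nodup.filter _
  have h0 : 0 < l.length := List.length_pos_iff.2 (fun e => by rw [e] at hxl; exact absurd hxl List.not_mem_nil)
  rcases Nat.lt_or_ge l.length 2 with h2 | h2
  · omega
  · exfalso
    have e0 : l[0]'(by omega) = x := hall _ (List.getElem_mem _)
    have e1 : l[1]'(by omega) = x := hall _ (List.getElem_mem _)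
    have := (hnd.getElem_inj_iff (hi := by omega) (hj := by omega)).1 (e0.trans e1.symm)
    omega


lemma aux3pow : ∀ L : ℕ, 2 ≤ L → 3 ^ (L + 1) ≤ 2 ^ (2 * L + 1) := by
  intro L hL
  induction L, hL using Nat.le_induction with
  | base => norm_num
  | succ n hn ih =>
    have e1 : (3:ℕ) ^ (n + 1 + 1) = 3 ^ (n + 1) * 3 := by rw [pow_succ]
    have e2 : (2:ℕ) ^ (2 * (n + 1) + 1) = 2 ^ (2 * n + 1) * 4 := by
      rw [show 2 * (n + 1) + 1 = (2 * n + 1) + 2 by ring, pow_add]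
      norm_num
    rw [e1, e2]
    calc 3 ^ (n + 1) * 3 ≤ 2 ^ (2 * n + 1) * 3 := Nat.mul_le_mul_right _ ih
      _ ≤ 2 ^ (2 * n + 1) * 4 := Nat.mul_le_mul_left _ (by omega)

lemma nat_main {n : ℕ} (hn : 3 ≤ n) :
    3 ^ (Nat.log 2 n + 1) ≤ n * 2 ^ (Nat.log 2 n + 1) := by
  set L := Nat.log 2 n with hLdef
  have hL1 : 1 ≤ L := by
    rw [hLdef, Nat.le_log_iff_pow_le one_lt_two (by omega)]
    omega
  rcases eq_or_lt_of_le hL1 with hL | hL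
  · have hup : n < 2 ^ (L + 1) := Nat.lt_pow_succ_log_self one_lt_two n
    rw [← hL] at hup ⊢
    norm_num at hup ⊢
    omega
  · have h2L : 2 ≤ L := hL
    calc 3 ^ (L + 1) ≤ 2 ^ (2 * L + 1) := aux3pow L h2L
      _ = 2 ^ L * 2 ^ (L + 1) := by rw [← pow_add]; congr 1; ring
      _ ≤ n * 2 ^ (L + 1) := Nat.mul_le_mul_right _ (Nat.pow_log_le_self 2 (by omega))

lemma chrom_le_two [Nonempty V] (h : T.IsTree) : T.chromaticNumber ≤ 2 := by
  classical
  obtain ⟨r⟩ := ‹Nonempty V›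
  have E : ∀ v : V, ∃! p : T.Walk r v, p.IsPath := h.existsUnique_path r
  have key : ∀ u v : V, T.Adj u v →
      (E u).choose.length + 1 = (E v).choose.length ∨
      (E v).choose.length + 1 = (E u).choose.length := by
    intro u v hadj
    by_cases hu : u ∈ (E v).choose.support
    · left
      have htp : (((E v).choose).takeUntil u hu).IsPath := (E v).choose_spec.1.takeUntil hu
      have hdp : (((E v).choose).dropUntil u hu).IsPath := (E v).choose_spec.1.dropUntil hu
      have h1 : ((E v).choose).takeUntil u hu = (E u).choose := (E u).choose_spec.2 _ htp
      have hep : (Walk.cons hadj Walk.nil : T.Walk u v).IsPath := by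
        rw [Walk.cons_isPath_iff]
        exact ⟨Walk.IsPath.nil, by simp [hadj.ne]⟩
      have h2 : ((E v).choose).dropUntil u hu = Walk.cons hadj Walk.nil :=
        ((h.existsUnique_path u v).unique hdp hep)
      have h3 := congrArg Walk.length (((E v).choose).take_spec hu)
      rw [Walk.length_append, h1, h2] at h3
      simpa using h3
    · right
      have hqp : (((E v).choose).concat hadj.symm).IsPath := by
        rw [← Walk.isPath_reverse_iff, Walk.reverse_concat]
        rw [Walk.cons_isPath_iff]
        refine ⟨(E v).choose_spec.1.reverse, ?_⟩
        rw [Walk.support_reverse, List.mem_reverse]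
        exact hu
      have h1 : ((E v).choose).concat hadj.symm = (E u).choose := (E u).choose_spec.2 _ hqp
      have h2 := congrArg Walk.length h1
      rw [Walk.length_concat] at h2
      omega
  have hcol : T.Colorable 2 := by
    refine ⟨SimpleGraph.Coloring.mk (fun v => ⟨(E v).choose.length % 2, Nat.mod_lt _ (by omega)⟩) ?_⟩
    intro u v hadj he
    rw [Fin.mk.injEq] at he
    rcases key u v hadj with e | e <;> omega
  simpa using hcol.chromaticNumber_le

end VcfcAux

open VcfcAux in
theorem vcfc_tree_bounds {V : Type*} [Fintype V] (T : SimpleGraph V) (h : T.IsTree)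
    (n : ℕ) (hn : Fintype.card V = n) (h3 : 3 ≤ n) :
    T.chromaticNumber ≤ (vcfc T : ℕ∞) ∧
    Nat.clog 2 (T.diam + 1) ≤ vcfc T ∧
    (vcfc T : ℝ) ≤ Real.logb (3 / 2) n := by
  classical
  subst hn
  haveI hNE : Nonempty V := Fintype.card_pos_iff.1 (by omega)
  obtain ⟨Ck, hCk⟩ := exists_cf_coloring h
  have hSet : Nat.log 2 (Fintype.card V) + 1 ∈ {k : ℕ | ∃ C : V → Fin k, CFVConnected T C} :=
    ⟨Ck, hCk⟩
  have hne : {k : ℕ | ∃ C : V → Fin k, CFVConnected T C}.Nonempty := ⟨_, hSet⟩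
  have hle : vcfc T ≤ Nat.log 2 (Fintype.card V) + 1 := Nat.sInf_le hSet
  obtain ⟨Cm, hCm⟩ : ∃ C : V → Fin (vcfc T), CFVConnected T C := Nat.sInf_mem hne
  have hdiam : Nat.clog 2 (T.diam + 1) ≤ vcfc T := by
    obtain ⟨u, v, hd⟩ := exists_dist_eq_diam (G := T)
    obtain ⟨w⟩ := h.isConnected u v
    have hp : w.bypass.IsPath := w.bypass_isPath
    have hlen : T.dist u v ≤ w.bypass.length := dist_le w.bypass
    have hbd := support_length_lt h hCm (Finset.univ (α := Fin (vcfc T))).card Finset.univ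
      le_rfl u v w.bypass hp (fun x _ => Finset.mem_univ _)
    rw [Finset.card_univ, Fintype.card_fin] at hbd
    rw [Walk.length_support] at hbd
    rw [Nat.clog_le_iff_le_pow one_lt_two]
    omega
  refine ⟨?_, hdiam, ?_⟩
  · have h2 : 2 ≤ vcfc T := by
      by_contra hlt
      push_neg at hlt
      rcases (by omega : vcfc T = 0 ∨ vcfc T = 1) with h0 | h1
      · have x := Cm (Classical.arbitrary V)
        rw [h0] at x
        exact x.elim0
      · obtain ⟨u, v, huv⟩ := Fintype.exists_pair_of_one_lt_card (α := V) (by omega)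
        obtain ⟨p, hp, hcf⟩ := hCm u v
        unfold Walk.ConflictFree at hcf
        obtain ⟨c, hc⟩ := hcf
        have hall : ∀ z : V, Cm z = c := by
          intro z
          have hz := (Cm z).isLt
          have hcv := c.isLt
          exact Fin.ext (by omega)
        rw [List.countP_eq_length.2 (fun z _ => by simp [hall z])] at hc
        have hlen2 : p.support.length = 1 := hc
        have hsupcons := p.support_eq_cons
        have htl : p.support.tail.length = 0 := by
          rw [hsupcons] at hlen2
          simpa using hlen2
        have hv := p.end_mem_support
        rw [hsupcons, List.length_eq_zero_iff.1 htl] at hv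
        simp at hv
        exact huv hv.symm
    calc T.chromaticNumber ≤ 2 := chrom_le_two h
      _ ≤ (vcfc T : ℕ∞) := by exact_mod_cast h2
  · have hreal : ((3:ℝ)/2) ^ (Nat.log 2 (Fintype.card V) + 1) ≤ (Fintype.card V : ℝ) := by
      rw [div_pow, div_le_iff₀ (by positivity)]
      exact_mod_cast nat_main (by omega)
    have hb : (1:ℝ) < 3/2 := by norm_num
    have hlogb : ((Nat.log 2 (Fintype.card V) + 1 : ℕ) : ℝ)
        ≤ Real.logb (3/2) (Fintype.card V) := by
      calc ((Nat.log 2 (Fintype.card V) + 1 : ℕ) : ℝ)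
          = Real.logb (3/2) (((3:ℝ)/2) ^ (Nat.log 2 (Fintype.card V) + 1)) := by
            rw [Real.logb_pow, Real.logb_self_eq_one hb]
            push_cast
            ring
        _ ≤ Real.logb (3/2) (Fintype.card V) :=
            Real.logb_le_logb_of_le hb (by positivity) hreal
    calc (vcfc T : ℝ) ≤ ((Nat.log 2 (Fintype.card V) + 1 : ℕ) : ℝ) := by exact_mod_cast hle
      _ ≤ _ := hlogb
end

section
/- Let T be a tree with radius rad(T). Then vcfc(T) ≤ rad(T) + 1. -/
set_option linter.unusedSectionVars false


open SimpleGraph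

/-- The eccentricity of a vertex: the maximum distance to another vertex. -/
noncomputable def eccent {V : Type*} (G : SimpleGraph V) (v : V) : ℕ :=
  sSup (Set.range (G.dist v))

/-- The radius of a graph: the minimum eccentricity over all vertices. -/
noncomputable def graphRadius {V : Type*} (G : SimpleGraph V) : ℕ :=
  sInf (Set.range (eccent G))

section Aux

variable {V : Type*} [DecidableEq V] {T : SimpleGraph V}

/-- In a tree, every path realizes the distance between its endpoints. -/
lemma tree_path_length (h : T.IsTree) {a b : V} {p : T.Walk a b} (hp : p.IsPath) :
    p.length = T.dist a b := by
  obtain ⟨q, hq, hql⟩ := h.isConnected.exists_path_of_dist a b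
  rw [(h.existsUnique_path a b).unique hp hq, hql]

/-- An interior vertex of a path from `c` to `x` is strictly closer to `c`. -/
lemma tree_mid_lt (h : T.IsTree) {c x y : V} (p : T.Walk c x) (hp : p.IsPath)
    (hy : y ∈ p.support) (hyx : y ≠ x) : T.dist c y + 1 ≤ p.length := by
  have h1 : (p.takeUntil y hy).length = T.dist c y := tree_path_length h (hp.takeUntil hy)
  have h2 : (p.dropUntil y hy).length = T.dist y x := tree_path_length h (hp.dropUntil hy)
  have h3 : (p.takeUntil y hy).length + (p.dropUntil y hy).length = p.length := by
    have := congrArg Walk.length (p.take_spec hy)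
    rwa [Walk.length_append] at this
  have h4 : T.dist y x ≠ 0 :=
    SimpleGraph.dist_ne_zero_iff_ne_and_reachable.mpr ⟨hyx, h.isConnected.preconnected y x⟩
  omega

/-- Extending a path from `c` to `x` by an edge towards a farther vertex stays a path. -/
lemma tree_concat_path (h : T.IsTree) {c x y : V} (e : T.Adj x y)
    (hle : T.dist c x ≤ T.dist c y) {p : T.Walk c x} (hp : p.IsPath) :
    (p.concat e).IsPath := by
  have hpl : p.length = T.dist c x := tree_path_length h hp
  have hy : y ∉ p.support := by
    intro hy
    have := tree_mid_lt h p hp hy (Ne.symm e.ne)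
    omega
  rw [← SimpleGraph.Walk.isPath_reverse_iff, Walk.reverse_concat]
  exact hp.reverse.cons (by simpa using hy)

/-- Step lemma: distances to a fixed vertex differ by exactly one along an edge. -/
lemma tree_step (h : T.IsTree) (c : V) {x y : V} (e : T.Adj x y)
    (hle : T.dist c x ≤ T.dist c y) : T.dist c y = T.dist c x + 1 := by
  obtain ⟨p, hp, hpl⟩ := h.isConnected.exists_path_of_dist c x
  have hc := tree_concat_path h e hle hp
  have hlen := tree_path_length h hc
  rw [Walk.length_concat] at hlen
  omega

lemma tree_step' (h : T.IsTree) (c : V) {x y : V} (e : T.Adj x y) :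
    T.dist c y = T.dist c x + 1 ∨ T.dist c x = T.dist c y + 1 := by
  rcases le_total (T.dist c x) (T.dist c y) with hle | hle
  · exact Or.inl (tree_step h c e hle)
  · exact Or.inr (tree_step h c e.symm hle)

/-- No vertex has two distinct neighbors strictly closer to `c`. -/
lemma tree_no_local_max (h : T.IsTree) (c : V) {x y z : V} (e1 : T.Adj x y) (e2 : T.Adj z y)
    (hxz : x ≠ z) (h1 : T.dist c x < T.dist c y) (h2 : T.dist c z < T.dist c y) : False := by
  obtain ⟨p1, hp1, hpl1⟩ := h.isConnected.exists_path_of_dist c x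
  obtain ⟨p2, hp2, hpl2⟩ := h.isConnected.exists_path_of_dist c z
  have hq1 := tree_concat_path h e1 h1.le hp1
  have hq2 := tree_concat_path h e2 h2.le hp2
  have huniq : p1.concat e1 = p2.concat e2 := (h.existsUnique_path c y).unique hq1 hq2
  have hs : p1.support = p2.support := by
    have := congrArg Walk.support huniq
    simp only [Walk.support_concat, List.concat_eq_append] at this
    exact (List.append_left_inj _).mp this
  apply hxz
  have g1 : p1.support.getLast? = some x := by
    rw [List.getLast?_eq_getLast p1.support_ne_nil, p1.getLast_support]
  have g2 : p2.support.getLast? = some z := by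
    rw [List.getLast?_eq_getLast p2.support_ne_nil, p2.getLast_support]
  rw [hs, g2] at g1
  exact (Option.some.inj g1).symm

/-- Along a nodup adjacency chain which starts by going away from `c`,
all later vertices are strictly farther than the start. -/
lemma tree_asc (h : T.IsTree) (c : V) :
    ∀ (L : List V) (x y : V), T.Adj x y → T.dist c y = T.dist c x + 1 →
      List.Chain' T.Adj (x :: y :: L) → (x :: y :: L).Nodup →
      ∀ z ∈ y :: L, T.dist c x < T.dist c z := by
  intro L
  induction L with
  | nil =>
    intro x y e hstep _ _ z hz
    simp only [List.mem_singleton] at hz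
    subst hz; omega
  | cons w L ih =>
    intro x y e hstep hchain hnodup z hz
    have eyw : T.Adj y w := (List.isChain_cons_cons.mp (List.isChain_cons_cons.mp hchain).2).1
    rcases tree_step' h c eyw with hup | hdown
    · have hall := ih y w eyw hup (List.isChain_cons_cons.mp hchain).2 hnodup.of_cons
      rcases List.mem_cons.mp hz with rfl | hz'
      · omega
      · have := hall z hz'
        omega
    · -- local max at y: contradiction
      have hxw : x ≠ w := by
        have hx : x ∉ y :: w :: L := (List.nodup_cons.mp hnodup).1
        intro hxw; exact hx (by rw [hxw]; simp)
      exact (tree_no_local_max h c e eyw.symm hxw (by omega) (by omega)).elim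

/-- Valley lemma: along a path in a tree, the minimum distance to `c` is attained
exactly once. -/
lemma tree_valley (h : T.IsTree) (c : V) :
    ∀ (L : List V) (u : V), List.Chain' T.Adj (u :: L) → (u :: L).Nodup →
      ∃ m, ((u :: L).map (T.dist c)).countP (fun a => decide (a = m)) = 1 ∧
        ∀ z ∈ u :: L, m ≤ T.dist c z := by
  intro L
  induction L with
  | nil =>
    intro u _ _
    exact ⟨T.dist c u, by simp, by simp⟩
  | cons y L ih =>
    intro u hchain hnodup
    have e : T.Adj u y := (List.isChain_cons_cons.mp hchain).1
    rcases tree_step' h c e with hup | hdown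
    · have hall := tree_asc h c L u y e hup hchain hnodup
      refine ⟨T.dist c u, ?_, ?_⟩
      · rw [List.map_cons, List.countP_cons]
        have h0 : ((y :: L).map (T.dist c)).countP (fun a => decide (a = T.dist c u)) = 0 := by
          rw [List.countP_eq_zero]
          intro a ha
          obtain ⟨z, hz, rfl⟩ := List.mem_map.mp ha
          have := hall z hz
          simp; omega
        rw [h0]; simp
      · intro z hz
        rcases List.mem_cons.mp hz with rfl | hz'
        · exact le_refl _
        · exact (hall z hz').le
    · obtain ⟨m, hcount, hmin⟩ := ih y (List.isChain_cons_cons.mp hchain).2 hnodup.of_cons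
      have hy : m ≤ T.dist c y := hmin y (by simp)
      refine ⟨m, ?_, ?_⟩
      · rw [List.map_cons, List.countP_cons, hcount]
        have : ¬ (T.dist c u = m) := by omega
        simp [this]
      · intro z hz
        rcases List.mem_cons.mp hz with rfl | hz'
        · omega
        · exact hmin z hz'

end Aux

theorem vcfc_tree_le_radius {V : Type*} [Fintype V] (T : SimpleGraph V)
    (h : T.IsTree) : vcfc T ≤ graphRadius T + 1 := by
  classical
  letI : DecidableEq V := Classical.decEq V
  have hconn := h.isConnected
  have hne : Nonempty V := hconn.nonempty
  obtain ⟨c, hc⟩ : graphRadius T ∈ Set.range (_root_.eccent T) :=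
    Nat.sInf_mem (Set.range_nonempty _)
  have hbound : ∀ x, T.dist c x ≤ graphRadius T := by
    intro x
    have : T.dist c x ≤ _root_.eccent T c :=
      le_csSup (Set.finite_range _).bddAbove ⟨x, rfl⟩
    omega
  set C : V → Fin (graphRadius T + 1) :=
    fun x => ⟨T.dist c x, Nat.lt_succ_of_le (hbound x)⟩ with hC
  apply Nat.sInf_le
  refine ⟨C, ?_⟩
  intro u v
  obtain ⟨p, hp⟩ := (h.existsUnique_path u v).exists
  refine ⟨p, hp, ?_⟩
  have hchain : List.Chain' T.Adj (u :: p.support.tail) := by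
    rw [← p.support_eq_cons]; exact p.isChain_adj_support
  have hnodup : (u :: p.support.tail).Nodup := by
    rw [← p.support_eq_cons]; exact hp.support_nodup
  obtain ⟨m, hcount, hmin⟩ := tree_valley h c p.support.tail u hchain hnodup
  have hmlt : m < graphRadius T + 1 :=
    Nat.lt_succ_of_le (le_trans (hmin u (by simp)) (hbound u))
  refine ⟨⟨m, hmlt⟩, ?_⟩
  have hfun : (fun x => decide (C x = ⟨m, hmlt⟩)) =
      (fun a => decide (a = m)) ∘ (T.dist c) := by
    funext x
    simp [hC, Fin.ext_iff]
  rw [p.support_eq_cons, hfun, ← List.countP_map]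
  exact hcount
end

section
/- For any connected graph G, vcfc(G) ≤ rad(G) + 1. -/
open SimpleGraph

section Aux
variable {V : Type*} [DecidableEq V] {G : SimpleGraph V}

/-- On a shortest walk, distances to the endpoints split additively. -/
lemma shortest_split (hc : G.Connected) {a b x : V} (q : G.Walk a b) (hq : q.length = G.dist a b)
    (hx : x ∈ q.support) :
    G.dist a x = (q.takeUntil x hx).length ∧ G.dist x b = (q.dropUntil x hx).length ∧
      G.dist a x + G.dist x b = G.dist a b := by
  have h1 := SimpleGraph.dist_le (q.takeUntil x hx)
  have h2 := SimpleGraph.dist_le (q.dropUntil x hx)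
  have h3 : (q.takeUntil x hx).length + (q.dropUntil x hx).length = q.length := by
    rw [← SimpleGraph.Walk.length_append, q.take_spec hx]
  have h4 : G.dist a b ≤ G.dist a x + G.dist x b := hc.dist_triangle
  omega

lemma dist_lt_of_mem_dropUntil (hc : G.Connected) {a b w x : V} (q : G.Walk a b)
    (hq : q.length = G.dist a b) (hw : w ∈ q.support)
    (hx : x ∈ (q.dropUntil w hw).support) (hne : x ≠ w) :
    G.dist a w < G.dist a x := by
  obtain ⟨-, hdw, hsw⟩ := shortest_split hc q hq hw
  obtain ⟨-, -, hsx⟩ := shortest_split hc q hq (q.support_dropUntil_subset hw hx)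
  obtain ⟨-, -, hsx'⟩ := shortest_split hc (q.dropUntil w hw) hdw.symm hx
  have hpos : 0 < G.dist w x := hc.pos_dist_of_ne (Ne.symm hne)
  omega

lemma dist_lt_of_mem_takeUntil (hc : G.Connected) {a b w x : V} (q : G.Walk a b)
    (hq : q.length = G.dist a b) (hw : w ∈ q.support)
    (hx : x ∈ (q.takeUntil w hw).support) (hne : x ≠ w) :
    G.dist a x < G.dist a w ∧ G.dist w b < G.dist x b := by
  obtain ⟨htw, -, hsw⟩ := shortest_split hc q hq hw
  obtain ⟨-, -, hsx⟩ := shortest_split hc q hq (q.support_takeUntil_subset hw hx)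
  obtain ⟨-, -, hsx'⟩ := shortest_split hc (q.takeUntil w hw) htw.symm hx
  have hpos : 0 < G.dist x w := hc.pos_dist_of_ne hne
  omega

end Aux

theorem vcfc_le_radius {V : Type*} [Fintype V] [Nonempty V] (G : SimpleGraph V)
    (hc : G.Connected) : vcfc G ≤ graphRadius G + 1 := by
  classical
  -- pick a center
  obtain ⟨v0, hv0⟩ : ∃ v0, _root_.eccent G v0 = graphRadius G := by
    have : graphRadius G ∈ Set.range (_root_.eccent G) :=
      Nat.sInf_mem (Set.range_nonempty _)
    obtain ⟨v0, h⟩ := this; exact ⟨v0, h⟩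
  set R := graphRadius G with hR
  have hbound : ∀ x, G.dist v0 x ≤ R := by
    intro x
    have : G.dist v0 x ≤ _root_.eccent G v0 :=
      le_csSup (Set.Finite.bddAbove (Set.finite_range _)) (Set.mem_range_self x)
    omega
  set C : V → Fin (R + 1) := fun x => ⟨G.dist v0 x, Nat.lt_succ_of_le (hbound x)⟩ with hC
  have hCFV : CFVConnected G C := by
    intro u v
    obtain ⟨r, hrlen⟩ := hc.exists_walk_length_eq_dist u v0
    obtain ⟨q, hqlen⟩ := hc.exists_walk_length_eq_dist v0 v
    have hrp : r.IsPath := r.isPath_of_length_eq_dist hrlen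
    have hqp : q.IsPath := q.isPath_of_length_eq_dist hqlen
    -- pick the vertex on both walks closest to u
    have hS : ∃ w, (w ∈ r.support ∧ w ∈ q.support) ∧
        ∀ x, (x ∈ r.support ∧ x ∈ q.support) → G.dist u w ≤ G.dist u x := by
      obtain ⟨w, hwmem, hwmin⟩ := Finset.exists_min_image
        (r.support.toFinset ∩ q.support.toFinset) (G.dist u)
        ⟨v0, by simp [Walk.end_mem_support, Walk.start_mem_support]⟩
      refine ⟨w, ?_, ?_⟩
      · simpa [Finset.mem_inter, List.mem_toFinset] using hwmem
      · intro x hx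
        exact hwmin x (by simpa [Finset.mem_inter, List.mem_toFinset] using hx)
    obtain ⟨w, ⟨hwr, hwq⟩, hwmin⟩ := hS
    set p₁ := r.takeUntil w hwr with hp₁
    set p₂ := q.dropUntil w hwq with hp₂
    -- key distance facts
    have hkey₁ : ∀ x ∈ p₁.support, x ≠ w → G.dist v0 w < G.dist v0 x := by
      intro x hx hne
      have := (dist_lt_of_mem_takeUntil hc r hrlen hwr hx hne).2
      rw [show G.dist v0 w = G.dist w v0 from SimpleGraph.dist_comm,
        show G.dist v0 x = G.dist x v0 from SimpleGraph.dist_comm]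
      exact this
    have hkey₁' : ∀ x ∈ p₁.support, x ≠ w → G.dist u x < G.dist u w :=
      fun x hx hne => (dist_lt_of_mem_takeUntil hc r hrlen hwr hx hne).1
    have hkey₂ : ∀ x ∈ p₂.support, x ≠ w → G.dist v0 w < G.dist v0 x :=
      fun x hx hne => dist_lt_of_mem_dropUntil hc q hqlen hwq hx hne
    -- disjointness of the two pieces
    have hdisj : ∀ x ∈ p₁.support, x ∈ p₂.support.tail → False := by
      intro x hx hxt
      have hx₂ : x ∈ p₂.support := List.mem_of_mem_tail hxt
      by_cases hxw : x = w
      · have hnodup : p₂.support.Nodup := (hqp.dropUntil hwq).support_nodup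
        have hcons : p₂.support = w :: p₂.support.tail := p₂.support_eq_cons
        rw [hcons] at hnodup
        exact (List.nodup_cons.mp hnodup).1 (by rwa [hxw] at hxt)
      · have h1 := hkey₁' x hx hxw
        have h2 := hwmin x ⟨r.support_takeUntil_subset hwr hx,
          q.support_dropUntil_subset hwq hx₂⟩
        omega
    -- the path
    refine ⟨p₁.append p₂, ?_, ?_⟩
    · rw [Walk.isPath_def, Walk.support_append, List.nodup_append]
      exact ⟨(hrp.takeUntil hwr).support_nodup,
        ((hqp.dropUntil hwq).support_nodup).tail,
        fun x hx y hy hxy => by subst hxy; exact hdisj x hx hy⟩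
    · refine ⟨C w, ?_⟩
      have hmemw : w ∈ (p₁.append p₂).support := by
        rw [Walk.mem_support_append_iff]; left; exact Walk.end_mem_support _
      have hnodup : (p₁.append p₂).support.Nodup := by
        rw [Walk.support_append, List.nodup_append]
        exact ⟨(hrp.takeUntil hwr).support_nodup,
          ((hqp.dropUntil hwq).support_nodup).tail,
          fun x hx y hy hxy => by subst hxy; exact hdisj x hx hy⟩
      have hiff : ∀ x ∈ (p₁.append p₂).support, (C x = C w) ↔ x = w := by
        intro x hx
        constructor
        · intro hcx
          by_contra hne
          have hdx : G.dist v0 w < G.dist v0 x := by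
            rw [Walk.support_append, List.mem_append] at hx
            rcases hx with hx | hx
            · exact hkey₁ x hx hne
            · exact hkey₂ x (List.mem_of_mem_tail hx) hne
          have : G.dist v0 x = G.dist v0 w := by
            have := congrArg Fin.val hcx
            simpa [hC] using this
          omega
        · intro h; subst h; rfl
      calc (p₁.append p₂).support.countP (fun x => decide (C x = C w))
          = (p₁.append p₂).support.countP (fun x => x == w) :=
            List.countP_congr (fun x hx => by
              simp only [decide_eq_true_eq, beq_iff_eq]
              exact hiff x hx)
        _ = (p₁.append p₂).support.count w := (List.count_eq_countP).symm
        _ = 1 := List.count_eq_one_of_mem hnodup hmemw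
  exact Nat.sInf_le ⟨C, hCFV⟩
end

section
/- Let T be a tree of order n ≥ 5. Then vcfc(T) ≤ ⌈n/2⌉. -/
open SimpleGraph

namespace CFCAux

variable {V : Type*} [DecidableEq V] {T : SimpleGraph V}

lemma path_unique (hT : T.IsTree) {u v : V} {p q : T.Walk u v}
    (hp : p.IsPath) (hq : q.IsPath) : p = q :=
  (hT.existsUnique_path u v).unique hp hq

lemma exists_path (hT : T.IsTree) (u v : V) : ∃ p : T.Walk u v, p.IsPath :=
  (hT.isConnected.preconnected u v).elim fun w => ⟨w.bypass, w.bypass_isPath⟩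

lemma length_eq_dist (hT : T.IsTree) {u v : V} (p : T.Walk u v) (hp : p.IsPath) :
    p.length = T.dist u v := by
  obtain ⟨q, hq⟩ := (hT.isConnected.preconnected u v).exists_walk_length_eq_dist
  have hq' : q.bypass.length = T.dist u v :=
    le_antisymm ((Walk.length_bypass_le q).trans hq.le) (SimpleGraph.dist_le _)
  rw [path_unique hT hp q.bypass_isPath, hq']

lemma dist_add_dist_of_mem (hT : T.IsTree) {u v z : V} (p : T.Walk u v) (hp : p.IsPath)
    (hz : z ∈ p.support) : T.dist u z + T.dist z v = T.dist u v := by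
  have h1 := length_eq_dist hT _ (hp.takeUntil hz)
  have h2 := length_eq_dist hT _ (hp.dropUntil hz)
  have h3 : (p.takeUntil z hz).length + (p.dropUntil z hz).length = p.length := by
    rw [← Walk.length_append, Walk.take_spec]
  rw [length_eq_dist hT p hp] at h3
  omega

lemma concat_path {u x y : V} {p : T.Walk u x} (hp : p.IsPath) (h : T.Adj x y)
    (hy : y ∉ p.support) : (p.concat h).IsPath := by
  have h1 : (Walk.cons h.symm p.reverse).IsPath :=
    (Walk.cons_isPath_iff _ _).mpr ⟨hp.reverse, by
      rwa [Walk.support_reverse, List.mem_reverse]⟩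
  have h2 : (p.concat h).reverse.IsPath := by rwa [Walk.reverse_concat]
  have h3 := h2.reverse
  rwa [Walk.reverse_reverse] at h3

lemma dist_eq_zero (hT : T.IsTree) {x y : V} (h : T.dist x y = 0) : x = y :=
  (hT.isConnected.preconnected x y).dist_eq_zero_iff.mp h

lemma adj_dist_ne (hT : T.IsTree) {x y : V} (hxy : T.Adj x y) (v : V) :
    T.dist v x ≠ T.dist v y := by
  intro he
  obtain ⟨g, hg⟩ := exists_path hT v x
  have hy : y ∉ g.support := by
    intro hy
    have h1 := dist_add_dist_of_mem hT g hg hy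
    have h2 : T.dist y x ≠ 0 := fun h0 => hxy.ne' (dist_eq_zero hT h0)
    omega
  have hlen := length_eq_dist hT _ (concat_path hg hxy hy)
  rw [Walk.length_concat, length_eq_dist hT g hg] at hlen
  omega

lemma adj_dist_le_one {x y : V} (h : T.Adj x y) : T.dist x y ≤ 1 := by
  simpa using SimpleGraph.dist_le (Walk.cons h Walk.nil)

lemma adj_dist_cases (hT : T.IsTree) {x y : V} (h : T.Adj x y) (v : V) :
    T.dist v y = T.dist v x + 1 ∨ T.dist v x = T.dist v y + 1 := by
  have h1 : T.dist x y ≤ 1 := adj_dist_le_one h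
  have h2 : T.dist y x ≤ 1 := adj_dist_le_one h.symm
  have t1 := hT.isConnected.dist_triangle (u := v) (v := x) (w := y)
  have t2 := hT.isConnected.dist_triangle (u := v) (v := y) (w := x)
  have hne := adj_dist_ne hT h v
  omega

lemma adj_of_dist_one (hT : T.IsTree) {x y : V} (h : T.dist x y = 1) : T.Adj x y := by
  obtain ⟨p, hp⟩ := (hT.isConnected.preconnected x y).exists_walk_length_eq_dist
  rw [h] at hp
  cases p with
  | nil => simp at hp
  | cons hadj p' =>
    simp only [Walk.length_cons, Nat.add_eq_right, Nat.add_eq_zero] at hp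
    have := Walk.eq_of_length_eq_zero (by omega : p'.length = 0)
    exact this ▸ hadj

lemma parent_unique (hT : T.IsTree) {r x z1 z2 : V} (h1 : T.Adj z1 x) (h2 : T.Adj z2 x)
    (hd1 : T.dist r z1 + 1 = T.dist r x) (hd2 : T.dist r z2 + 1 = T.dist r x) : z1 = z2 := by
  by_contra hne
  obtain ⟨g1, hg1⟩ := exists_path hT r z1
  obtain ⟨g2, hg2⟩ := exists_path hT r z2
  have hx1 : x ∉ g1.support := by
    intro hx
    have := dist_add_dist_of_mem hT g1 hg1 hx
    have h0 : T.dist x z1 ≠ 0 := fun h0 => h1.ne (dist_eq_zero hT h0).symm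
    omega
  have hx2 : x ∉ g2.support := by
    intro hx
    have := dist_add_dist_of_mem hT g2 hg2 hx
    have h0 : T.dist x z2 ≠ 0 := fun h0 => h2.ne (dist_eq_zero hT h0).symm
    omega
  have hp1 := concat_path hg1 h1 hx1
  have hp2 := concat_path hg2 h2 hx2
  have heq := path_unique hT hp1 hp2
  have hz1 : z1 ∈ (g2.concat h2).support := by
    rw [← heq, Walk.support_concat]
    simp [Walk.end_mem_support]
  rw [Walk.support_concat] at hz1
  rcases List.mem_append.mp hz1 with hmem | hmem
  rotate_left
  case _ => exact h1.ne (List.mem_singleton.mp hmem)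
  have := dist_add_dist_of_mem hT g2 hg2 hmem
  have h0 : T.dist z1 z2 = 0 := by omega
  exact hne (dist_eq_zero hT h0)

lemma exists_two_neighbors {x y z : V} (p : T.Walk x y) (hp : p.IsPath)
    (hz : z ∈ p.support) (hzx : z ≠ x) (hzy : z ≠ y) :
    ∃ y1 y2, y1 ≠ y2 ∧ T.Adj z y1 ∧ T.Adj z y2 ∧ y1 ∈ p.support ∧ y2 ∈ p.support := by
  induction p with
  | nil => simp at hz; exact absurd hz hzx
  | @cons a b c h q ih =>
    rw [Walk.support_cons] at hz
    rcases List.mem_cons.mp hz with h1 | h1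
    · exact absurd h1 hzx
    · by_cases hzb : z = b
      · subst hzb
        obtain ⟨w2, h2, q2, rfl⟩ := Walk.exists_eq_cons_of_ne hzy q
        have hxq : a ∉ q2.support ∧ a ≠ z := by
          have := (Walk.cons_isPath_iff _ _).mp hp
          rw [Walk.support_cons] at this
          exact ⟨fun hmem => this.2 (List.mem_cons_of_mem _ hmem), fun he => this.2 (by simp [he])⟩
        refine ⟨a, w2, ?_, h.symm, h2, by simp [Walk.support_cons], by simp [Walk.support_cons]⟩
        intro he
        exact hxq.1 (he ▸ q2.start_mem_support)
      · obtain ⟨y1, y2, hne, ha1, ha2, hm1, hm2⟩ :=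
          ih ((Walk.cons_isPath_iff _ _).mp hp).1 h1 hzb hzy
        exact ⟨y1, y2, hne, ha1, ha2, by simp [Walk.support_cons, hm1],
          by simp [Walk.support_cons, hm2]⟩

lemma no_flat_path (hT : T.IsTree) (r : V) {a b : V} (q : T.Walk a b) (hq : q.IsPath)
    (hab : a ≠ b) (hda : ∀ z ∈ q.support, T.dist r a ≤ T.dist r z)
    (hdb : T.dist r b = T.dist r a) : False := by
  classical
  obtain ⟨w, hw', hw_max'⟩ := Finset.exists_max_image q.support.toFinset
    (fun z => T.dist r z) ⟨a, List.mem_toFinset.mpr q.start_mem_support⟩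
  have hw_mem : w ∈ q.support := List.mem_toFinset.mp hw'
  have hw_max : ∀ z ∈ q.support, T.dist r z ≤ T.dist r w :=
    fun z hz => hw_max' z (List.mem_toFinset.mpr hz)
  have hwa : T.dist r a < T.dist r w := by
    rcases Nat.lt_or_ge (T.dist r a) (T.dist r w) with h | h
    · exact h
    · exfalso
      obtain ⟨c, hac, q', rfl⟩ := Walk.exists_eq_cons_of_ne hab q
      have hc : c ∈ (Walk.cons hac q').support := by simp [Walk.support_cons, q'.start_mem_support]
      have h1 := hda c hc
      have h2 := hw_max c hc
      have h3 := hda w hw_mem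
      exact adj_dist_ne hT hac r (by omega)
  have hwa' : w ≠ a := fun h => by rw [h] at hwa; omega
  have hwb' : w ≠ b := fun h => by rw [h] at hwa; omega
  obtain ⟨y1, y2, hne, ha1, ha2, hm1, hm2⟩ := exists_two_neighbors q hq hw_mem hwa' hwb'
  have k1 : T.dist r y1 + 1 = T.dist r w := by
    rcases adj_dist_cases hT ha1 r with h | h
    · have := hw_max y1 hm1; omega
    · omega
  have k2 : T.dist r y2 + 1 = T.dist r w := by
    rcases adj_dist_cases hT ha2 r with h | h
    · have := hw_max y2 hm2; omega
    · omega
  exact hne (parent_unique hT ha1.symm ha2.symm k1 k2)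

lemma min_unique (hT : T.IsTree) (r : V) {x y : V} (p : T.Walk x y) (hp : p.IsPath)
    {m : V} (hm : m ∈ p.support) (hmin : ∀ z ∈ p.support, T.dist r m ≤ T.dist r z) :
    ∀ z ∈ p.support, T.dist r z = T.dist r m → z = m := by
  intro z hz hzd
  by_contra hne
  by_cases hzt : z ∈ (p.takeUntil m hm).support
  · refine no_flat_path hT r ((p.takeUntil m hm).dropUntil z hzt)
      ((hp.takeUntil hm).dropUntil hzt) hne ?_ (by omega)
    intro w hw
    have : w ∈ p.support :=
      p.support_takeUntil_subset hm (((p.takeUntil m hm).support_dropUntil_subset hzt) hw)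
    rw [hzd]
    exact hmin w this
  · have hzd' : z ∈ (p.dropUntil m hm).support := by
      have := hz
      rw [← Walk.take_spec p hm, Walk.mem_support_append_iff] at this
      tauto
    refine no_flat_path hT r ((p.dropUntil m hm).takeUntil z hzd')
      ((hp.dropUntil hm).takeUntil hzd') (Ne.symm hne) ?_ (by omega)
    intro w hw
    have : w ∈ p.support :=
      p.support_dropUntil_subset hm (((p.dropUntil m hm).support_takeUntil_subset hzd') hw)
    exact hmin w this

lemma countP_eq_one {l : List V} (hl : l.Nodup) {pred : V → Bool} {m : V} (hm : m ∈ l)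
    (hpm : pred m = true) (huniq : ∀ z ∈ l, pred z = true → z = m) : l.countP pred = 1 := by
  rw [l.countP_eq_length_filter]
  have h1 : m ∈ l.filter pred := List.mem_filter.mpr ⟨hm, hpm⟩
  have h2 : ∀ z ∈ l.filter pred, z = m := fun z hz =>
    huniq z (List.mem_filter.mp hz).1 (List.mem_filter.mp hz).2
  have h3 : (l.filter pred).Nodup := hl.filter _
  have h4 := List.eq_replicate_of_mem h2
  rw [h4] at h3
  rw [List.nodup_replicate] at h3
  have h5 : (l.filter pred).length ≠ 0 := by
    intro h0
    rw [List.length_eq_zero_iff] at h0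
    rw [h0] at h1
    simp at h1
  omega


lemma depth_coloring (hT : T.IsTree) (r : V) (k : ℕ) (hk : ∀ v, T.dist r v < k) :
    ∃ C : V → Fin k, CFVConnected T C := by
  refine ⟨fun v => ⟨T.dist r v, hk v⟩, fun x y => ?_⟩
  obtain ⟨p, hp⟩ := exists_path hT x y
  refine ⟨p, hp, ?_⟩
  obtain ⟨m, hm', hmin'⟩ := Finset.exists_min_image p.support.toFinset (fun z => T.dist r z)
    ⟨x, List.mem_toFinset.mpr p.start_mem_support⟩
  have hm : m ∈ p.support := List.mem_toFinset.mp hm'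
  have hmin : ∀ z ∈ p.support, T.dist r m ≤ T.dist r z := fun z hz =>
    hmin' z (List.mem_toFinset.mpr hz)
  refine ⟨⟨T.dist r m, hk m⟩, countP_eq_one hp.support_nodup hm (by simp) ?_⟩
  intro z hz hzp
  simp only [decide_eq_true_eq, Fin.mk.injEq] at hzp
  exact min_unique hT r p hp hm hmin z hz hzp

end CFCAux


set_option maxHeartbeats 1000000 in
theorem vcfc_tree_le_half_order {V : Type*} [Fintype V] (T : SimpleGraph V)
    (h : T.IsTree) (n : ℕ) (hn : Fintype.card V = n) (h5 : 5 ≤ n) :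
    vcfc T ≤ (n + 1) / 2 := by
  classical
  have hconn := h.isConnected
  set k := (n + 1) / 2 with hkdef
  have hk3 : 3 ≤ k := by omega
  have hpos : 0 < Fintype.card V := by omega
  haveI hne : Nonempty V := Fintype.card_pos_iff.mp hpos
  obtain ⟨r, -, hrmin⟩ := Finset.exists_min_image Finset.univ
    (fun v => Finset.univ.sup (fun w => T.dist v w)) Finset.univ_nonempty
  set R := Finset.univ.sup (fun w => T.dist r w) with hRdef
  have heccR : ∀ v, T.dist r v ≤ R := fun v => Finset.le_sup (Finset.mem_univ v)
  obtain ⟨u, -, hu⟩ := Finset.exists_mem_eq_sup Finset.univ Finset.univ_nonempty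
    (fun w => T.dist r w)
  have hru : T.dist r u = R := hu.symm
  suffices hS : ∃ C : V → Fin k, CFVConnected T C by exact Nat.sInf_le hS
  by_cases hcase : R < k
  · exact CFCAux.depth_coloring h r k (fun v => lt_of_le_of_lt (heccR v) hcase)
  push_neg at hcase
  have hR3 : 3 ≤ R := le_trans hk3 hcase
  have hrune : r ≠ u := by
    intro hreq; rw [← hreq, SimpleGraph.dist_self] at hru; omega
  obtain ⟨g0, hg0⟩ := CFCAux.exists_path h r u
  obtain ⟨a, hra, g', rfl⟩ := Walk.exists_eq_cons_of_ne hrune g0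
  have hg : (Walk.cons hra g').IsPath := hg0
  have hglen : (Walk.cons hra g').length = R := by
    rw [CFCAux.length_eq_dist h _ hg, hru]
  have hg'path : g'.IsPath := ((Walk.cons_isPath_iff _ _).mp hg).1
  have hrg' : r ∉ g'.support := ((Walk.cons_isPath_iff _ _).mp hg).2
  have hg'len : g'.length + 1 = R := by
    rw [← hglen]; simp [Walk.length_cons]
  have hau : T.dist a u + 1 = R := by
    rw [← CFCAux.length_eq_dist h g' hg'path]; exact hg'len
  have hbehind : ∀ z ∈ g'.support, T.dist a z + 1 = T.dist r z := by
    intro z hz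
    have e1 := CFCAux.dist_add_dist_of_mem h g' hg'path hz
    have e2 := CFCAux.dist_add_dist_of_mem h (Walk.cons hra g') hg
      (by rw [Walk.support_cons]; exact List.mem_cons_of_mem _ hz)
    rw [hru] at e2
    omega
  have hra1 : T.dist r a = 1 := by
    have h1 := CFCAux.adj_dist_le_one hra
    have h0 : T.dist r a ≠ 0 := fun h0 => hra.ne (CFCAux.dist_eq_zero h h0)
    omega
  obtain ⟨w, hw1, hw2⟩ : ∃ w, T.dist a w = T.dist r w + 1 ∧ R - 1 ≤ T.dist r w := by
    by_contra hcon
    push_neg at hcon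
    have hecca : Finset.univ.sup (fun v => T.dist a v) ≤ R - 1 := by
      apply Finset.sup_le
      intro v _
      rcases CFCAux.adj_dist_cases h hra v with hc | hc
      · have hc' : T.dist a v = T.dist r v + 1 := by
          rwa [SimpleGraph.dist_comm (u := v) (v := a), SimpleGraph.dist_comm (u := v) (v := r)] at hc
        have := hcon v hc'
        omega
      · have hc' : T.dist r v = T.dist a v + 1 := by
          rwa [SimpleGraph.dist_comm (u := v) (v := r), SimpleGraph.dist_comm (u := v) (v := a)] at hc
        have := heccR v
        omega
    have h9 : R ≤ Finset.univ.sup (fun v => T.dist a v) := hrmin a (Finset.mem_univ a)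
    omega
  set W := T.dist r w with hWdef
  have hWR : W ≤ R := heccR w
  obtain ⟨pw, hhw⟩ := CFCAux.exists_path h r w
  have hpwlen : pw.length = W := CFCAux.length_eq_dist h pw hhw
  have hfront : ∀ z ∈ pw.support, T.dist a z = T.dist r z + 1 := by
    intro z hz
    have e1 := CFCAux.dist_add_dist_of_mem h pw hhw hz
    have tri1 : T.dist a z ≤ T.dist a r + T.dist r z := hconn.dist_triangle
    have tri2 : T.dist a w ≤ T.dist a z + T.dist z w := hconn.dist_triangle
    have har : T.dist a r = 1 := by rw [SimpleGraph.dist_comm]; exact hra1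
    omega
  set A := (Walk.cons hra g').support.toFinset with hAdef
  set B := pw.support.toFinset.erase r with hBdef
  have hcardA : A.card = R + 1 := by
    rw [hAdef, List.toFinset_card_of_nodup hg.support_nodup, Walk.length_support, hglen]
  have hcardB : B.card = W := by
    rw [hBdef, Finset.card_erase_of_mem (List.mem_toFinset.mpr pw.start_mem_support),
      List.toFinset_card_of_nodup hhw.support_nodup, Walk.length_support]
    omega
  have hdisj : Disjoint A B := by
    rw [Finset.disjoint_left]
    intro z hzA hzB
    have hzg : z ∈ (Walk.cons hra g').support := List.mem_toFinset.mp hzA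
    have hzr : z ≠ r := (Finset.mem_erase.mp hzB).1
    have hzw : z ∈ pw.support := List.mem_toFinset.mp (Finset.mem_erase.mp hzB).2
    have hz1 : z ∈ g'.support := by
      rw [Walk.support_cons] at hzg
      rcases List.mem_cons.mp hzg with h1 | h1
      · exact absurd h1 hzr
      · exact h1
    have hb := hbehind z hz1
    have hf := hfront z hzw
    omega
  have hcardun : (A ∪ B).card = R + 1 + W := by
    rw [Finset.card_union_of_disjoint hdisj, hcardA, hcardB]
  have hlecard : (A ∪ B).card ≤ n := by
    rw [← hn, ← Finset.card_univ]
    exact Finset.card_le_card (Finset.subset_univ _)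
  have hkey : R = k ∧ W = R - 1 ∧ n = R + 1 + W := by omega
  have hRk : R = k := hkey.1
  have huniv : A ∪ B = Finset.univ := by
    apply Finset.eq_univ_of_card
    rw [hcardun, hn]; omega
  have hmemAB : ∀ v : V, v ∈ A ∪ B := fun v => huniv ▸ Finset.mem_univ v
  have hdeep : ∀ v, T.dist r v = R → v = u := by
    intro v hv
    rcases Finset.mem_union.mp (hmemAB v) with hvA | hvB
    · have hd := CFCAux.dist_add_dist_of_mem h (Walk.cons hra g') hg (List.mem_toFinset.mp hvA)
      rw [hru] at hd
      exact CFCAux.dist_eq_zero h (by omega : T.dist v u = 0)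
    · have hd := CFCAux.dist_add_dist_of_mem h pw hhw
        (List.mem_toFinset.mp (Finset.mem_erase.mp hvB).2)
      exfalso; omega
  have hcol : ∀ v, v ≠ u → T.dist r v < R := fun v hv =>
    lt_of_le_of_ne (heccR v) (fun he => hv (hdeep v he))
  refine ⟨fun v => if hv : v = u then ⟨R - 2, by omega⟩
    else ⟨T.dist r v, by have := hcol v hv; omega⟩, ?_⟩
  set C : V → Fin k := fun v => if hv : v = u then ⟨R - 2, by omega⟩
    else ⟨T.dist r v, by have := hcol v hv; omega⟩ with hCdef
  have hCuval : (C u : ℕ) = R - 2 := by simp [hCdef]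
  have hCneval : ∀ v, v ≠ u → (C v : ℕ) = T.dist r v := by
    intro v hv; simp [hCdef, hv]
  have key : ∀ x (p : T.Walk x u), p.IsPath → Walk.ConflictFree C p := by
    intro x p hp
    by_cases hxu : x = u
    · subst hxu
      have hnil : p = Walk.nil := Walk.isPath_iff_eq_nil.mp hp
      subst hnil
      exact ⟨C x, by simp⟩
    · rcases Finset.mem_union.mp (hmemAB x) with hxA | hxB
      · obtain ⟨z0, huz0, q0, hq0⟩ := Walk.exists_eq_cons_of_ne (Ne.symm hxu) p.reverse
        have hz0mem : z0 ∈ p.support := by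
          have h1 : z0 ∈ p.reverse.support := by
            rw [hq0, Walk.support_cons]; exact List.mem_cons_of_mem _ q0.start_mem_support
          rwa [Walk.support_reverse, List.mem_reverse] at h1
        have hz0u : z0 ≠ u := huz0.ne'
        have hz0d : T.dist r z0 + 1 = R := by
          rcases CFCAux.adj_dist_cases h huz0 r with hc | hc
          · exfalso; have := heccR z0; rw [hru] at hc; omega
          · rw [hru] at hc; omega
        refine ⟨⟨R - 1, by omega⟩, CFCAux.countP_eq_one hp.support_nodup hz0mem ?_ ?_⟩
        · simp only [decide_eq_true_eq, Fin.ext_iff]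
          rw [hCneval z0 hz0u]; omega
        · intro z hz hzp
          simp only [decide_eq_true_eq, Fin.ext_iff] at hzp
          have hzu : z ≠ u := by
            intro hzeq; subst hzeq
            rw [hCuval] at hzp; omega
          rw [hCneval z hzu] at hzp
          have e1 := CFCAux.dist_add_dist_of_mem h p hp hz
          have e2 := CFCAux.dist_add_dist_of_mem h (Walk.cons hra g') hg
            (List.mem_toFinset.mp hxA)
          rw [hru] at e2
          have tri : T.dist r z ≤ T.dist r x + T.dist x z := hconn.dist_triangle
          have hz_u0 : T.dist z u ≠ 0 := fun h0 => hzu (CFCAux.dist_eq_zero h h0)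
          have hzu1 : T.dist z u = 1 := by omega
          have hadj : T.Adj z u := CFCAux.adj_of_dist_one h hzu1
          exact CFCAux.parent_unique (r := r) h hadj huz0.symm (by rw [hru]; omega) (by rw [hru]; omega)
      · have hxr : x ≠ r := (Finset.mem_erase.mp hxB).1
        have hxw : x ∈ pw.support := List.mem_toFinset.mp (Finset.mem_erase.mp hxB).2
        have hp1 : (pw.takeUntil x hxw).reverse.IsPath := (hhw.takeUntil hxw).reverse
        have hp1sub : ∀ z ∈ (pw.takeUntil x hxw).reverse.support, z ∈ pw.support := by
          intro z hz
          rw [Walk.support_reverse, List.mem_reverse] at hz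
          exact pw.support_takeUntil_subset hxw hz
        have hq : ((pw.takeUntil x hxw).reverse.append (Walk.cons hra g')).IsPath := by
          rw [Walk.isPath_def, Walk.support_append, Walk.support_cons, List.tail_cons]
          refine List.Nodup.append hp1.support_nodup hg'path.support_nodup ?_
          intro z hz1 hz2
          have hzr : z ≠ r := fun he => hrg' (he ▸ hz2)
          have hb := hbehind z hz2
          have hf := hfront z (hp1sub z hz1)
          omega
        have hpq : p = (pw.takeUntil x hxw).reverse.append (Walk.cons hra g') :=
          CFCAux.path_unique h hp hq
        have hrp : r ∈ p.support := by
          rw [hpq, Walk.mem_support_append_iff]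
          left; exact Walk.end_mem_support _
        refine ⟨⟨0, by omega⟩, CFCAux.countP_eq_one hp.support_nodup hrp ?_ ?_⟩
        · simp only [decide_eq_true_eq, Fin.ext_iff]
          rw [hCneval r hrune]; simp [SimpleGraph.dist_self]
        · intro z hz hzp
          simp only [decide_eq_true_eq, Fin.ext_iff] at hzp
          have hzu : z ≠ u := by
            intro hzeq; subst hzeq
            rw [hCuval] at hzp; omega
          rw [hCneval z hzu] at hzp
          exact (CFCAux.dist_eq_zero h hzp).symm
  intro x y
  obtain ⟨p, hp⟩ := CFCAux.exists_path h x y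
  refine ⟨p, hp, ?_⟩
  by_cases hup : u ∈ p.support
  · have hend : u = x ∨ u = y := by
      by_contra hcon
      push_neg at hcon
      obtain ⟨y1, y2, hne12, ha1, ha2, hm1, hm2⟩ :=
        CFCAux.exists_two_neighbors p hp hup hcon.1 hcon.2
      have d1 : T.dist r y1 + 1 = R := by
        rcases CFCAux.adj_dist_cases h ha1 r with hc | hc
        · exfalso; have := heccR y1; rw [hru] at hc; omega
        · rw [hru] at hc; omega
      have d2 : T.dist r y2 + 1 = R := by
        rcases CFCAux.adj_dist_cases h ha2 r with hc | hc
        · exfalso; have := heccR y2; rw [hru] at hc; omega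
        · rw [hru] at hc; omega
      exact hne12 (CFCAux.parent_unique (r := r) h ha1.symm ha2.symm (by rw [hru]; omega)
        (by rw [hru]; omega))
    rcases hend with rfl | rfl
    · obtain ⟨c, hc⟩ := key y p.reverse hp.reverse
      refine ⟨c, ?_⟩
      rw [Walk.support_reverse, List.countP_eq_length_filter, List.filter_reverse,
        List.length_reverse, ← List.countP_eq_length_filter] at hc
      exact hc
    · exact key x p hp
  · obtain ⟨m, hm', hmin'⟩ := Finset.exists_min_image p.support.toFinset
      (fun z => T.dist r z) ⟨x, List.mem_toFinset.mpr p.start_mem_support⟩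
    have hm : m ∈ p.support := List.mem_toFinset.mp hm'
    have hmu : m ≠ u := fun he => hup (he ▸ hm)
    have hmin : ∀ z ∈ p.support, T.dist r m ≤ T.dist r z := fun z hz =>
      hmin' z (List.mem_toFinset.mpr hz)
    refine ⟨⟨T.dist r m, by have := hcol m hmu; omega⟩,
      CFCAux.countP_eq_one hp.support_nodup hm ?_ ?_⟩
    · simp only [decide_eq_true_eq, Fin.ext_iff]
      rw [hCneval m hmu]
    · intro z hz hzp
      simp only [decide_eq_true_eq, Fin.ext_iff] at hzp
      have hzu : z ≠ u := fun he => hup (he ▸ hz)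
      rw [hCneval z hzu] at hzp
      exact CFCAux.min_unique h r p hp hm hmin z hz hzp
end

section
/- Coloring the vertices of a tree T by their distance from a fixed central vertex (vertex at distance i gets color i+1) makes T conflict-free vertex-connected using rad(T)+1 colors. -/
open SimpleGraph

theorem distance_coloring_cfvc {V : Type*} [Fintype V] (T : SimpleGraph V)
    (h : T.IsTree) (v : V) (hv : _root_.eccent T v = graphRadius T) :
    CFVConnected T (fun x => T.dist v x + 1) ∧
    ∀ x : V, T.dist v x + 1 ≤ graphRadius T + 1 := by
  classical
  have hconn : T.Connected := h.isConnected
  constructor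
  · intro u w
    obtain ⟨r, hrp, -⟩ := hconn.exists_path_of_dist u w
    -- the minimal distance to v along r
    have hSne : (r.support.map (T.dist v)).toFinset.Nonempty := by
      refine ⟨T.dist v u, ?_⟩
      simp only [List.mem_toFinset, List.mem_map]
      exact ⟨u, r.start_mem_support, rfl⟩
    set d : ℕ := (r.support.map (T.dist v)).toFinset.min' hSne with hd
    have hmem : ∀ x ∈ r.support, d ≤ T.dist v x := by
      intro x hx
      apply Finset.min'_le
      simp only [List.mem_toFinset, List.mem_map]
      exact ⟨x, hx, rfl⟩
    have hex : ∃ x ∈ r.support, T.dist v x = d := by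
      have := Finset.min'_mem _ hSne
      rw [← hd] at this
      simpa only [List.mem_toFinset, List.mem_map] using this
    -- uniqueness of the minimizer
    have huniq : ∀ x ∈ r.support, ∀ y ∈ r.support,
        T.dist v x = d → T.dist v y = d → x = y := by
      intro x hxs y hys hdx hdy
      by_contra hxy
      -- get a path s : x → y inside r
      obtain ⟨q, r₂, rfl⟩ := SimpleGraph.Walk.mem_support_iff_exists_append.mp hxs
      have hq : q.IsPath := hrp.of_append_left
      have hr₂ : r₂.IsPath := hrp.of_append_right
      have hsub : ∀ (s : T.Walk x y), s.IsPath → s.support ⊆ (q.append r₂).support →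
          False := by
        intro s hsp hssub
        -- geodesic from v to x
        obtain ⟨g, hgp, hgl⟩ := hconn.exists_path_of_dist v x
        rw [hdx] at hgl
        have hglt : ∀ a ∈ g.support, a ≠ x → T.dist v a < d := by
          intro a ha hax
          have hspec := congrArg Walk.length (g.take_spec ha)
          rw [Walk.length_append, hgl] at hspec
          have h1 : T.dist v a ≤ (g.takeUntil a ha).length := SimpleGraph.dist_le _
          have h2 : (g.dropUntil a ha).length ≠ 0 := fun h0 =>
            hax (Walk.eq_of_length_eq_zero h0)
          omega
        -- s has positive length
        have hslen : s.length ≠ 0 := fun h0 => hxy (Walk.eq_of_length_eq_zero h0)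
        -- t = g ++ s is a path from v to y
        have hxnt : x ∉ s.support.tail := by
          have := hsp.support_nodup
          rw [s.support_eq_cons] at this
          exact (List.nodup_cons.mp this).1
        have htp : (g.append s).IsPath := by
          rw [Walk.isPath_def, Walk.support_append]
          refine List.Nodup.append hgp.support_nodup
            (hsp.support_nodup.sublist (List.tail_sublist _)) ?_
          intro a hag hat
          have has : a ∈ s.support := List.mem_of_mem_tail hat
          have har : a ∈ (q.append r₂).support := hssub has
          have hda : d ≤ T.dist v a := hmem a har
          rcases eq_or_ne a x with rfl | hax
          · exact hxnt hat
          · exact absurd hda (not_le.mpr (hglt a hag hax))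
        -- geodesic from v to y
        obtain ⟨g₂, hg₂p, hg₂l⟩ := hconn.exists_path_of_dist v y
        rw [hdy] at hg₂l
        have heq : g.append s = g₂ := (h.existsUnique_path v y).unique htp hg₂p
        have hlen := congrArg Walk.length heq
        rw [Walk.length_append, hgl, hg₂l] at hlen
        omega
      rcases (SimpleGraph.Walk.mem_support_append_iff q r₂).mp hys with hyq | hyr
      · refine hsub ((q.dropUntil y hyq).reverse) ((hq.dropUntil hyq).reverse) ?_
        intro a ha
        rw [Walk.support_reverse, List.mem_reverse] at ha
        exact (SimpleGraph.Walk.mem_support_append_iff q r₂).mpr (Or.inl (q.support_dropUntil_subset hyq ha))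
      · refine hsub (r₂.takeUntil y hyr) (hr₂.takeUntil hyr) ?_
        intro a ha
        exact (SimpleGraph.Walk.mem_support_append_iff q r₂).mpr (Or.inr (r₂.support_takeUntil_subset hyr ha))
    refine ⟨r, hrp, d + 1, ?_⟩
    have hiff : ∀ x : V, (fun x => decide (T.dist v x + 1 = d + 1)) x = true ↔
        T.dist v x = d := by intro x; simp
    rw [List.countP_eq_length_filter]
    obtain ⟨x₀, hx₀s, hx₀d⟩ := hex
    have hx₀f : x₀ ∈ r.support.filter (fun x => decide (T.dist v x + 1 = d + 1)) := by
      rw [List.mem_filter]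
      exact ⟨hx₀s, by simpa using hx₀d⟩
    have hle : (r.support.filter (fun x => decide (T.dist v x + 1 = d + 1))).length ≤ 1 := by
      rcases hfl : r.support.filter (fun x => decide (T.dist v x + 1 = d + 1)) with
        _ | ⟨a, _ | ⟨b, t⟩⟩
      · simp
      · simp
      · exfalso
        have hnd := hrp.support_nodup.filter (fun x => decide (T.dist v x + 1 = d + 1))
        rw [hfl] at hnd
        have hab : a ≠ b := by
          rcases List.nodup_cons.mp hnd with ⟨hna, -⟩
          exact fun hh => hna (hh ▸ List.mem_cons_self)
        have ha := List.mem_filter.mp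
          (by rw [hfl]; exact List.mem_cons_self :
            a ∈ r.support.filter (fun x => decide (T.dist v x + 1 = d + 1)))
        have hb := List.mem_filter.mp
          (by rw [hfl]; exact List.mem_cons_of_mem _ (List.mem_cons_self) :
            b ∈ r.support.filter (fun x => decide (T.dist v x + 1 = d + 1)))
        exact hab (huniq a ha.1 b hb.1 (by simpa using ha.2) (by simpa using hb.2))
    have hpos : 0 < (r.support.filter (fun x => decide (T.dist v x + 1 = d + 1))).length :=
      List.length_pos_of_mem hx₀f
    show (List.filter (fun x => decide (T.dist v x + 1 = d + 1)) r.support).length = 1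
    omega
  · intro x
    have hdle : T.dist v x ≤ _root_.eccent T v := by
      apply le_csSup ((Set.finite_range _).bddAbove)
      exact ⟨x, rfl⟩
    rw [hv] at hdle
    omega
end
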